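/- arXiv:1212.4329 — 9 statements merged into one kernel-verified Lean document; each statement's English description precedes it below -/
import Mathlib

section
/- Every function f : ℂ → ℂ is the algebraic sum of two perfectly everywhere surjective functions: there exist g₁, g₂ ∈ PES(ℂ) with f = g₁ + g₂ (pointwise). -/
open Cardinal Set Function

noncomputable section
namespace Stmt4Aux

instance : PerfectSpace ℂ :=
  perfectSpace_iff_forall_not_isolated.mpr fun _ => inferInstance

abbrev PerfSet := {P : Set ℂ // Perfect P ∧ P.Nonempty}
abbrev Pair := PerfSet × ℂ × Bool
abbrev I : Type := (Cardinal.continuum).ord.ToType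

instance : Nonempty Pair :=
  ⟨⟨⟨Set.univ, PerfectSpace.univ_perfect ℂ, ⟨0, trivial⟩⟩, 0, false⟩⟩

lemma mk_initial_lt (i : I) : #{j : I // j < i} < 𝔠 := by
  exact Cardinal.card_typein_toType_lt 𝔠 i

lemma continuum_le_mk {P : Set ℂ} (hP : Perfect P) (hne : P.Nonempty) : 𝔠 ≤ #P := by
  obtain ⟨g, hgP, -, hg⟩ := hP.exists_nat_bool_injection hne
  have h1 : #(ℕ → Bool) ≤ #P :=
    Cardinal.mk_le_of_injective (f := fun x => (⟨g x, hgP ⟨x, rfl⟩⟩ : P))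
      (fun a b hab => hg (congrArg Subtype.val hab))
  have h2 : #(ℕ → Bool) = 𝔠 := by
    simp [Cardinal.mk_arrow, Cardinal.two_power_aleph0]
  rwa [h2] at h1

lemma mk_perfSet_le : #PerfSet ≤ 𝔠 := by
  obtain ⟨b, hbc, -, hb⟩ := TopologicalSpace.exists_countable_basis ℂ
  have hinj : Function.Injective
      (fun P : PerfSet => ({V : b | (V : Set ℂ) ⊆ (P : Set ℂ)ᶜ} : Set b)) := by
    intro P Q h
    have key : ∀ R : PerfSet, (R : Set ℂ)ᶜ = ⋃₀ {s ∈ b | s ⊆ (R : Set ℂ)ᶜ} :=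
      fun R => hb.open_eq_sUnion' (isOpen_compl_iff.mpr R.2.1.closed)
    have hsets : {s ∈ b | s ⊆ (P : Set ℂ)ᶜ} = {s ∈ b | s ⊆ (Q : Set ℂ)ᶜ} := by
      ext s
      constructor
      · rintro ⟨hsb, hsub⟩
        exact ⟨hsb, Set.ext_iff.mp h ⟨s, hsb⟩ |>.mp hsub⟩
      · rintro ⟨hsb, hsub⟩
        exact ⟨hsb, Set.ext_iff.mp h ⟨s, hsb⟩ |>.mpr hsub⟩
    have : (P : Set ℂ)ᶜ = (Q : Set ℂ)ᶜ := by rw [key P, key Q, hsets]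
    exact Subtype.ext (compl_injective this)
  calc #PerfSet ≤ #(Set b) := Cardinal.mk_le_of_injective hinj
    _ = 2 ^ #b := Cardinal.mk_set
    _ ≤ 2 ^ ℵ₀ := by
        have : Countable b := hbc.to_subtype
        exact Cardinal.power_le_power_left two_ne_zero Cardinal.mk_le_aleph0
    _ = 𝔠 := Cardinal.two_power_aleph0

lemma mk_pair_le : #Pair ≤ 𝔠 := by
  have h1 : #Pair = #PerfSet * (𝔠 * 2) := by
    simp [Cardinal.mk_prod, mk_complex, Cardinal.mk_bool]
  rw [h1]
  calc #PerfSet * (𝔠 * 2) ≤ 𝔠 * (𝔠 * 𝔠) := by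
        apply mul_le_mul' mk_perfSet_le
        apply mul_le_mul' le_rfl
        exact (Cardinal.nat_lt_continuum 2).le
    _ = 𝔠 := by
        rw [Cardinal.mul_eq_self Cardinal.aleph0_le_continuum,
          Cardinal.mul_eq_self Cardinal.aleph0_le_continuum]

lemma exists_surj : ∃ e : I → Pair, Function.Surjective e := by
  have h : #Pair ≤ #I := by
    rw [Cardinal.mk_ord_toType]; exact mk_pair_le
  obtain ⟨emb⟩ := (Cardinal.le_def _ _).mp h
  exact ⟨Function.invFun emb, Function.invFun_surjective emb.injective⟩

def S (p : Pair) : Set ℂ := p.1.1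

lemma nonempty_aux (e : I → Pair) (i : I) (prev : ∀ j : I, j < i → ℂ) :
    (S (e i) \ (Set.range fun jh : {j : I // j < i} => prev jh.1 jh.2)).Nonempty := by
  rw [Set.nonempty_iff_ne_empty]
  intro h
  have hsub : S (e i) ⊆ Set.range fun jh : {j : I // j < i} => prev jh.1 jh.2 :=
    Set.diff_eq_empty.mp h
  have h1 : #(S (e i)) ≤ #{j : I // j < i} :=
    (Cardinal.mk_le_mk_of_subset hsub).trans Cardinal.mk_range_le
  have h2 : 𝔠 ≤ #(S (e i)) := continuum_le_mk (e i).1.2.1 (e i).1.2.2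
  exact absurd ((h2.trans h1)) (not_le.mpr (mk_initial_lt i))

def pick (e : I → Pair) : I → ℂ :=
  WellFounded.fix wellFounded_lt
    (fun i rec => (nonempty_aux e i (fun j h => rec j h)).some)

lemma pick_eq (e : I → Pair) (i : I) :
    pick e i = (nonempty_aux e i (fun j _ => pick e j)).some :=
  WellFounded.fix_eq _ _ _

lemma pick_mem (e : I → Pair) (i : I) : pick e i ∈ S (e i) := by
  rw [pick_eq]
  exact ((nonempty_aux e i fun j _ => pick e j).some_mem).1

lemma pick_ne (e : I → Pair) (i j : I) (h : j < i) : pick e i ≠ pick e j := by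
  rw [pick_eq e i]
  intro heq
  exact ((nonempty_aux e i fun j _ => pick e j).some_mem).2 ⟨⟨j, h⟩, heq.symm⟩

lemma pick_inj (e : I → Pair) : Function.Injective (pick e) := by
  intro i j h
  rcases lt_trichotomy i j with hlt | heq | hgt
  · exact absurd h.symm (pick_ne e j i hlt)
  · exact heq
  · exact absurd h (pick_ne e i j hgt)

open scoped Classical in
def g1 (e : I → Pair) (f : ℂ → ℂ) : ℂ → ℂ := fun c =>
  if h : ∃ i, pick e i = c then
    (if (e h.choose).2.2 then f c - (e h.choose).2.1 else (e h.choose).2.1)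
  else 0

lemma g1_spec (e : I → Pair) (f : ℂ → ℂ) (i : I) :
    g1 e f (pick e i) =
      if (e i).2.2 then f (pick e i) - (e i).2.1 else (e i).2.1 := by
  have h : ∃ j, pick e j = pick e i := ⟨i, rfl⟩
  have hch : h.choose = i := pick_inj e h.choose_spec
  simp only [g1, dif_pos h, hch]

lemma hit (e : I → Pair) (he : Function.Surjective e) (f : ℂ → ℂ) (P : Set ℂ) (hP : Perfect P)
    (hne : P.Nonempty) (z : ℂ) (b : Bool) :
    ∃ x ∈ P, g1 e f x = if b then f x - z else z := by
  obtain ⟨i, hi⟩ := he (⟨⟨P, hP, hne⟩, z, b⟩ : Pair)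
  refine ⟨pick e i, ?_, ?_⟩
  · have := pick_mem e i
    rw [hi] at this
    exact this
  · rw [g1_spec, hi]

end Stmt4Aux
end

/-- `f ∈ PES(ℂ)`: `f` maps every nonempty perfect subset of `ℂ` onto `ℂ`. -/
def PES : Set (ℂ → ℂ) :=
  {f | ∀ P : Set ℂ, Perfect P → P.Nonempty → f '' P = Set.univ}

/-- Every function `f : ℂ → ℂ` is the (pointwise) sum of two perfectly
everywhere surjective functions. -/
theorem stmt4 (f : ℂ → ℂ) : ∃ g₁ g₂ : ℂ → ℂ, g₁ ∈ PES ∧ g₂ ∈ PES ∧ f = g₁ + g₂ := by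
  classical
  obtain ⟨e, he⟩ := Stmt4Aux.exists_surj
  refine ⟨Stmt4Aux.g1 e f, fun c => f c - Stmt4Aux.g1 e f c, ?_, ?_, ?_⟩
  · intro P hP hne
    apply Set.eq_univ_of_forall
    intro z
    obtain ⟨x, hxP, hx⟩ := Stmt4Aux.hit e he f P hP hne z false
    exact ⟨x, hxP, by simpa using hx⟩
  · intro P hP hne
    apply Set.eq_univ_of_forall
    intro z
    obtain ⟨x, hxP, hx⟩ := Stmt4Aux.hit e he f P hP hne z true
    simp only [if_true] at hx
    refine ⟨x, hxP, ?_⟩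
    show f x - Stmt4Aux.g1 e f x = z
    rw [hx]; ring
  · funext c
    show f c = Stmt4Aux.g1 e f c + (f c - Stmt4Aux.g1 e f c)
    ring
end

section
/- The set PES(ℂ) of all perfectly everywhere surjective functions from ℂ to ℂ is strongly 2^𝔠-algebrable in the algebra ℂ^ℂ, where 𝔠 is the cardinality of the continuum. -/
open Cardinal

/-- A subset `E` of a commutative `K`-algebra `A` is strongly `lam`-algebrable: `E ∪ {0}`
contains a free commutative `K`-algebra with `lam` free generators; concretely, there is an
injective family of `lam` elements of `E` such that every nonzero polynomial over `K` without
constant term, evaluated at distinct members of the family, is nonzero and belongs to `E`. -/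
def StronglyAlgebrable (K : Type) {A : Type} [CommRing K] [CommRing A] [Algebra K A]
    (E : Set A) (lam : Cardinal) : Prop :=
  ∃ (ι : Type) (x : ι → A), #ι = lam ∧ Function.Injective x ∧
    (∀ i, x i ∈ E) ∧
    ∀ n : ℕ, 0 < n → ∀ P : MvPolynomial (Fin n) K, P ≠ 0 →
      MvPolynomial.constantCoeff P = 0 →
      ∀ ξ : Fin n → ι, Function.Injective ξ →
        MvPolynomial.aeval (fun i => x (ξ i)) P ≠ 0 ∧
        MvPolynomial.aeval (fun i => x (ξ i)) P ∈ E

open MvPolynomial in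
private lemma aux_eval_surj : ∀ (n : ℕ) (P : MvPolynomial (Fin n) ℂ),
    (∀ a : ℂ, P ≠ C a) → ∀ w : ℂ, ∃ v : Fin n → ℂ, eval v P = w := by
  intro n
  induction n with
  | zero =>
    intro P hP w
    obtain ⟨a, ha⟩ := C_surjective (Fin 0) P
    exact absurd ha.symm (hP a)
  | succ n ih =>
    intro P hP w
    set Q := finSuccEquiv ℂ n P with hQdef
    by_cases hdeg : Q.natDegree = 0
    · have hQC : Q = Polynomial.C (Q.coeff 0) := Polynomial.eq_C_of_natDegree_eq_zero hdeg
      have heval : ∀ (y : ℂ) (v : Fin n → ℂ), eval (Fin.cons y v) P = eval v (Q.coeff 0) := by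
        intro y v
        rw [eval_eq_eval_mv_eval', ← hQdef, hQC]
        simp
      have hq' : ∀ a : ℂ, Q.coeff 0 ≠ C a := by
        intro a ha
        apply hP a
        apply MvPolynomial.funext
        intro v
        have h2 := heval (v 0) (Fin.tail v)
        rw [Fin.cons_self_tail] at h2
        rw [h2, ha]
        simp
      obtain ⟨v, hv⟩ := ih (Q.coeff 0) hq' w
      exact ⟨Fin.cons 0 v, by rw [heval]; exact hv⟩
    · have hk : 0 < Q.natDegree := Nat.pos_of_ne_zero hdeg
      have hc : Q.coeff Q.natDegree ≠ 0 := by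
        intro h0
        have hz : Q = 0 := Polynomial.leadingCoeff_eq_zero.mp h0
        exact hdeg (by rw [hz]; simp)
      obtain ⟨v, hv⟩ : ∃ v : Fin n → ℂ, eval v (Q.coeff Q.natDegree) ≠ 0 := by
        by_contra hcon
        push_neg at hcon
        exact hc (MvPolynomial.funext fun v => (hcon v).trans (map_zero _).symm)
      set p : Polynomial ℂ := (Q.map (eval v)) - Polynomial.C w with hp
      have hpk : p.coeff Q.natDegree = eval v (Q.coeff Q.natDegree) := by
        simp [hp, Polynomial.coeff_map, Polynomial.coeff_C, hk.ne']
      have hdeg' : p.degree ≠ 0 := by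
        intro hd
        have hcz : p.coeff Q.natDegree = 0 :=
          Polynomial.coeff_eq_zero_of_degree_lt (by rw [hd]; exact_mod_cast hk)
        rw [hpk] at hcz; exact hv hcz
      obtain ⟨y, hy⟩ := IsAlgClosed.exists_root (k := ℂ) p hdeg'
      refine ⟨Fin.cons y v, ?_⟩
      rw [eval_eq_eval_mv_eval', ← hQdef]
      have hy' : Polynomial.eval y (Q.map (eval v)) - w = 0 := by
        simpa [hp] using hy
      exact sub_eq_zero.mp hy'


private lemma exists_rep {α ι' : Type} [Nonempty α] (T : ι' → Set α)
    (hι : #ι' ≤ #α) (hT : ∀ i, #α ≤ #(T i)) :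
    ∃ h : ι' → α, Function.Injective h ∧ ∀ i, h i ∈ T i := by
  classical
  obtain ⟨emb⟩ : Nonempty (ι' ↪ (#α).ord.ToType) := by
    rw [← Cardinal.le_def, Cardinal.mk_ord_toType]; exact hι
  have key : ∀ (i : ι') (u : Set α), #u < #α → (T i \ u).Nonempty := by
    intro i u hu
    rw [Set.diff_nonempty]
    intro hsub
    exact absurd ((hT i).trans (Cardinal.mk_le_mk_of_subset hsub)) hu.not_ge
  have wf : WellFounded ((· < ·) : (#α).ord.ToType → (#α).ord.ToType → Prop) :=
    IsWellFounded.wf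
  let F : ∀ b : (#α).ord.ToType, (∀ c, c < b → α) → α := fun b prev =>
    if hb : ∃ i, emb i = b then
      (key hb.choose (Set.range fun c : Set.Iio b => prev c c.2)
        (Cardinal.mk_range_le.trans_lt (Cardinal.mk_Iio_ord_toType b))).choose
    else Classical.arbitrary α
  let g : (#α).ord.ToType → α := wf.fix F
  have hg : ∀ b, g b = F b fun c _ => g c := fun b => WellFounded.fix_eq wf F b
  have main : ∀ i : ι', g (emb i) ∈ T i \ Set.range (fun c : Set.Iio (emb i) => g c.1) := by
    intro i
    have hb : ∃ j, emb j = emb i := ⟨i, rfl⟩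
    have hspec := (key hb.choose (Set.range fun c : Set.Iio (emb i) => g c.1)
        (Cardinal.mk_range_le.trans_lt (Cardinal.mk_Iio_ord_toType _))).choose_spec
    have hchoose : hb.choose = i := emb.injective hb.choose_spec
    rw [hg (emb i)]
    show (if hb' : ∃ j, emb j = emb i then _ else Classical.arbitrary α) ∈ _
    rw [dif_pos hb]
    exact ⟨Set.mem_of_mem_of_subset hspec.1 (le_of_eq (congrArg T hchoose)), hspec.2⟩
  refine ⟨fun i => g (emb i), ?_, fun i => (main i).1⟩
  intro i j hij
  replace hij : g (emb i) = g (emb j) := hij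
  by_contra hne
  have hne' : emb i ≠ emb j := fun h => hne (emb.injective h)
  rcases hne'.lt_or_gt with h | h
  · exact (main j).2 ⟨⟨emb i, h⟩, show g (emb i) = g (emb j) from hij⟩
  · exact (main i).2 ⟨⟨emb j, h⟩, show g (emb j) = g (emb i) from hij.symm⟩


private def Idx : Type := Σ A : Finset ℝ, Set (↥A) → ℂ

private def fB (B : Set ℝ) (s : Idx) : ℂ := s.2 {a | (a : ℝ) ∈ B}

private lemma mk_Idx_le : #Idx ≤ 𝔠 := by
  have h1 : #Idx = Cardinal.sum fun A : Finset ℝ => #(Set (↥A) → ℂ) := Cardinal.mk_sigma _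
  have hbound : ∀ A : Finset ℝ, #(Set (↥A) → ℂ) ≤ 𝔠 := by
    intro A
    rw [← Cardinal.power_def]
    calc #ℂ ^ #(Set (↥A)) ≤ #ℂ ^ ℵ₀ := by
          apply Cardinal.power_le_power_left
          · rw [mk_complex]; exact Cardinal.continuum_ne_zero
          · exact (Cardinal.lt_aleph0_of_finite _).le
      _ = 𝔠 := by rw [mk_complex, Cardinal.continuum_power_aleph0]
  calc #Idx = Cardinal.sum fun A : Finset ℝ => #(Set (↥A) → ℂ) := h1
    _ ≤ Cardinal.sum fun _ : Finset ℝ => 𝔠 := Cardinal.sum_le_sum _ _ hbound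
    _ = #(Finset ℝ) * 𝔠 := Cardinal.sum_const' _ _
    _ = 𝔠 * 𝔠 := by rw [Cardinal.mk_finset_of_infinite, Cardinal.mk_real]
    _ = 𝔠 := Cardinal.mul_eq_self Cardinal.aleph0_le_continuum

private lemma indep {n : ℕ} (ξ : Fin n → Set ℝ) (hξ : Function.Injective ξ) (w : Fin n → ℂ) :
    ∃ s : Idx, ∀ j, fB (ξ j) s = w j := by
  classical
  have hd : ∀ p : Fin n × Fin n, p.1 ≠ p.2 → ∃ r : ℝ, ¬((r ∈ ξ p.1) ↔ (r ∈ ξ p.2)) := by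
    intro p hp
    by_contra hcon
    push_neg at hcon
    exact hp (hξ (Set.ext fun r => hcon r))
  let d : Fin n × Fin n → ℝ := fun p => if hp : p.1 ≠ p.2 then (hd p hp).choose else 0
  let A : Finset ℝ := Finset.image d Finset.univ
  let t : Fin n → Set (↥A) := fun j => {a | (a : ℝ) ∈ ξ j}
  have htinj : Function.Injective t := by
    intro j k hjk
    by_contra hne
    have hdm : d (j, k) ∈ A := Finset.mem_image_of_mem d (Finset.mem_univ (j, k))
    have hdval : d (j, k) = (hd (j, k) hne).choose := dif_pos hne
    have hiff := Set.ext_iff.mp hjk ⟨d (j, k), hdm⟩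
    apply (hd (j, k) hne).choose_spec
    rw [← hdval]
    exact hiff
  refine ⟨⟨A, fun u => if h : ∃ j, t j = u then w h.choose else 0⟩, fun j => ?_⟩
  have hj : ∃ j', t j' = {a : ↥A | (a : ℝ) ∈ ξ j} := ⟨j, rfl⟩
  show (if h : ∃ j', t j' = {a : ↥A | (a : ℝ) ∈ ξ j} then w h.choose else 0) = w j
  rw [dif_pos hj]
  congr 1
  exact htinj hj.choose_spec

private lemma perf_card {Q : Set ℂ} (hQ : Perfect Q) (hne : Q.Nonempty) : 𝔠 ≤ #Q := by
  obtain ⟨f, hrange, _, hinj⟩ := hQ.exists_nat_bool_injection hne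
  have hle : #(ℕ → Bool) ≤ #Q :=
    Cardinal.mk_le_of_injective (f := fun a => (⟨f a, hrange (Set.mem_range_self a)⟩ : Q))
      fun a b hab => hinj (congrArg Subtype.val hab)
  calc 𝔠 = 2 ^ ℵ₀ := Cardinal.two_power_aleph0.symm
    _ = #(ℕ → Bool) := by rw [← Cardinal.mk_bool, ← Cardinal.mk_nat, Cardinal.power_def]
    _ ≤ #Q := hle

private lemma mk_perf_le : #{Q : Set ℂ // Perfect Q ∧ Q.Nonempty} ≤ 𝔠 := by
  obtain ⟨D, hDc, hDd⟩ := TopologicalSpace.exists_countable_dense ℂ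
  haveI := hDc.to_subtype
  have hinj : Function.Injective (fun Q : {Q : Set ℂ // Perfect Q ∧ Q.Nonempty} =>
      (fun d : D => Metric.infDist (d : ℂ) Q.1)) := by
    intro Q Q' hQQ'
    have hfun : (fun z => Metric.infDist z Q.1) = fun z => Metric.infDist z Q'.1 := by
      apply Continuous.ext_on hDd (Metric.continuous_infDist_pt _) (Metric.continuous_infDist_pt _)
      intro z hz
      exact congrFun hQQ' ⟨z, hz⟩
    apply Subtype.ext
    ext z
    rw [Q.2.1.closed.mem_iff_infDist_zero Q.2.2, Q'.2.1.closed.mem_iff_infDist_zero Q'.2.2,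
      congrFun hfun z]
  calc #{Q : Set ℂ // Perfect Q ∧ Q.Nonempty} ≤ #(↥D → ℝ) := Cardinal.mk_le_of_injective hinj
    _ = #ℝ ^ #(↥D) := (Cardinal.power_def _ _).symm
    _ ≤ 𝔠 ^ ℵ₀ := by
        rw [Cardinal.mk_real]
        exact Cardinal.power_le_power_left Cardinal.continuum_ne_zero Cardinal.mk_le_aleph0
    _ = 𝔠 := Cardinal.continuum_power_aleph0

private lemma perfect_univ : Perfect (Set.univ : Set ℂ) := by
  refine ⟨isClosed_univ, fun x _ => ?_⟩
  show (nhdsWithin x {x}ᶜ ⊓ Filter.principal Set.univ).NeBot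
  rw [Filter.principal_univ, inf_top_eq]
  exact inferInstance


private lemma aeval_eq_eval_c {n : ℕ} (v : Fin n → ℂ) (P : MvPolynomial (Fin n) ℂ) :
    MvPolynomial.aeval v P = MvPolynomial.eval v P := by
  rw [MvPolynomial.aeval_def, Algebra.algebraMap_self]
  rfl

private lemma aeval_pi_apply {n : ℕ} (x : Fin n → ℂ → ℂ) (P : MvPolynomial (Fin n) ℂ) (z : ℂ) :
    (MvPolynomial.aeval x P : ℂ → ℂ) z = MvPolynomial.eval (fun i => x i z) P := by
  have h := MvPolynomial.comp_aeval_apply (f := x) (Pi.evalAlgHom ℂ (fun _ : ℂ => ℂ) z) P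
  simpa [aeval_eq_eval_c] using h


/-- `PES(ℂ)` is strongly `2 ^ 𝔠`-algebrable in `ℂ^ℂ`. -/
theorem stmt5 : StronglyAlgebrable ℂ PES ((2 : Cardinal) ^ Cardinal.continuum) := by
  classical
  have hι' : #({Q : Set ℂ // Perfect Q ∧ Q.Nonempty} × Idx) ≤ #ℂ := by
    rw [mk_complex]
    calc #({Q : Set ℂ // Perfect Q ∧ Q.Nonempty} × Idx)
        = #{Q : Set ℂ // Perfect Q ∧ Q.Nonempty} * #Idx := by
          rw [Cardinal.mk_prod, Cardinal.lift_id, Cardinal.lift_id]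
      _ ≤ 𝔠 * 𝔠 := mul_le_mul' mk_perf_le mk_Idx_le
      _ = 𝔠 := Cardinal.mul_eq_self Cardinal.aleph0_le_continuum
  obtain ⟨h, hinj, hmem⟩ := exists_rep
      (fun p : {Q : Set ℂ // Perfect Q ∧ Q.Nonempty} × Idx => (p.1.1 : Set ℂ)) hι'
      (fun p => by rw [mk_complex]; exact perf_card p.1.2.1 p.1.2.2)
  let x : Set ℝ → ℂ → ℂ := fun B z =>
    if hz : ∃ p : {Q : Set ℂ // Perfect Q ∧ Q.Nonempty} × Idx, h p = z
    then fB B hz.choose.2 else 0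
  have hx : ∀ B (p : {Q : Set ℂ // Perfect Q ∧ Q.Nonempty} × Idx), x B (h p) = fB B p.2 := by
    intro B p
    have hz : ∃ p', h p' = h p := ⟨p, rfl⟩
    show (if hz' : ∃ p', h p' = h p then fB B hz'.choose.2 else 0) = fB B p.2
    rw [dif_pos hz]
    exact congrArg (fun q => fB B q.2) (hinj hz.choose_spec)
  have core : ∀ (n : ℕ) (P : MvPolynomial (Fin n) ℂ), P ≠ 0 →
      MvPolynomial.constantCoeff P = 0 → ∀ ξ : Fin n → Set ℝ, Function.Injective ξ →
      (MvPolynomial.aeval (fun i => x (ξ i)) P : ℂ → ℂ) ∈ PES := by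
    intro n P hP h0 ξ hξ
    intro Q hQ hQne
    ext w
    simp only [Set.mem_univ, iff_true, Set.mem_image]
    have hPC : ∀ a : ℂ, P ≠ MvPolynomial.C a := by
      intro a ha
      apply hP
      have ha0 : a = 0 := by rw [← h0, ha]; simp
      rw [ha, ha0, map_zero]
    obtain ⟨v, hv⟩ := aux_eval_surj n P hPC w
    obtain ⟨s, hs⟩ := indep ξ hξ v
    refine ⟨h ⟨⟨Q, hQ, hQne⟩, s⟩, hmem ⟨⟨Q, hQ, hQne⟩, s⟩, ?_⟩
    rw [aeval_pi_apply]
    have hxv : (fun i => x (ξ i) (h ⟨⟨Q, hQ, hQne⟩, s⟩)) = v := by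
      funext i
      rw [hx, hs]
    rw [hxv, hv]
  have hPESne : ∀ f ∈ PES, f ≠ 0 := by
    intro f hf hf0
    have himg := hf Set.univ perfect_univ Set.univ_nonempty
    have h1 : (1 : ℂ) ∈ f '' Set.univ := by rw [himg]; trivial
    obtain ⟨z, -, hz⟩ := h1
    rw [hf0] at hz
    simp at hz
  refine ⟨Set ℝ, fun B => x B, by rw [Cardinal.mk_set, Cardinal.mk_real], ?_, ?_, ?_⟩
  · intro B B' hBB'
    by_contra hne
    have hξ : Function.Injective ![B, B'] := by
      intro a b hab
      fin_cases a <;> fin_cases b <;> simp_all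
    obtain ⟨s, hs⟩ := indep ![B, B'] hξ ![0, 1]
    have h0 := hs 0
    have h1 := hs 1
    simp only [Matrix.cons_val_zero, Matrix.cons_val_one, Matrix.head_cons] at h0 h1
    have heq : fB B s = fB B' s := by
      have h2 : x B (h ⟨⟨Set.univ, perfect_univ, Set.univ_nonempty⟩, s⟩)
          = x B' (h ⟨⟨Set.univ, perfect_univ, Set.univ_nonempty⟩, s⟩) := congrFun hBB' _
      rw [hx, hx] at h2
      exact h2
    rw [h0, h1] at heq
    exact zero_ne_one heq
  · intro B
    have hB := core 1 (MvPolynomial.X 0) (MvPolynomial.X_ne_zero 0) (by simp)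
      (fun _ => B) (fun a b _ => Subsingleton.elim a b)
    simpa using hB
  · intro n hn P hP h0 ξ hξ
    exact ⟨hPESne _ (core n P hP h0 ξ hξ), core n P hP h0 ξ hξ⟩
end

section
/- The set SES(ℂ) \ PES(ℂ) of all strongly everywhere surjective functions from ℂ to ℂ that are not perfectly everywhere surjective is strongly 2^𝔠-algebrable in the algebra ℂ^ℂ, where 𝔠 is the cardinality of the continuum. -/
open Cardinal

/-- `f ∈ SES(ℂ)`: on every nonempty open subset of `ℂ`, `f` takes every complex value
`𝔠` many times. -/
def SES : Set (ℂ → ℂ) :=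
  {f | ∀ U : Set ℂ, IsOpen U → U.Nonempty → ∀ z : ℂ,
    #{x : ℂ | x ∈ U ∧ f x = z} = Cardinal.continuum}

open MvPolynomial Set


noncomputable section

def Code : Type := Σ m : ℕ, (Fin m → ℂ) × ((Fin m → Bool) → ℂ)

instance : Nonempty Code := ⟨⟨0, Fin.elim0, fun _ => 0⟩⟩

lemma pow_fin_le (α : Type) [Finite α] : #(α → ℂ) ≤ 𝔠 := by
  rw [Cardinal.mk_arrow]
  simp only [Cardinal.lift_id, mk_complex]
  calc 𝔠 ^ #α ≤ 𝔠 ^ ℵ₀ :=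
        Cardinal.power_le_power_left Cardinal.continuum_ne_zero (Cardinal.lt_aleph0_of_finite _).le
    _ = 𝔠 := by
        rw [← Cardinal.two_power_aleph0, ← Cardinal.power_mul, Cardinal.aleph0_mul_aleph0]

lemma mk_code_le : #Code ≤ 𝔠 := by
  rw [show #Code = Cardinal.sum (fun m : ℕ => #((Fin m → ℂ) × ((Fin m → Bool) → ℂ))) from
    Cardinal.mk_sigma _]
  have h1 : ∀ m : ℕ, #((Fin m → ℂ) × ((Fin m → Bool) → ℂ)) ≤ 𝔠 := by
    intro m
    rw [Cardinal.mk_prod]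
    simp only [Cardinal.lift_id]
    calc #(Fin m → ℂ) * #((Fin m → Bool) → ℂ) ≤ 𝔠 * 𝔠 :=
        mul_le_mul' (pow_fin_le _) (pow_fin_le _)
      _ = 𝔠 := Cardinal.mul_eq_self Cardinal.aleph0_le_continuum
  calc Cardinal.sum (fun m : ℕ => #((Fin m → ℂ) × ((Fin m → Bool) → ℂ)))
      ≤ Cardinal.sum (fun _ : ℕ => 𝔠) := Cardinal.sum_le_sum _ _ h1
    _ = ℵ₀ * 𝔠 := by rw [Cardinal.sum_const, Cardinal.mk_nat]; simp
    _ = 𝔠 := Cardinal.aleph0_mul_continuum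

def rSetoid : Setoid ℝ where
  r x y := ∃ q : ℚ, x - y = (q : ℝ)
  iseqv := by
    constructor
    · intro x; exact ⟨0, by simp⟩
    · rintro x y ⟨q, hq⟩; exact ⟨-q, by push_cast; linarith⟩
    · rintro x y z ⟨q, hq⟩ ⟨r, hr⟩; exact ⟨q + r, by push_cast; linarith⟩

def RQ : Type := Quotient rSetoid

lemma continuum_le_RQ : 𝔠 ≤ #RQ := by
  have hx : ∀ x : ℝ, ∃ q : ℚ, x - (Quotient.mk rSetoid x).out = (q : ℝ) := fun x =>
    Quotient.exact ((Quotient.out_eq (Quotient.mk rSetoid x)).symm)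
  have hF : Function.Injective (fun x : ℝ => ((Quotient.mk rSetoid x), (hx x).choose)) := by
    intro x y h
    have h1 : Quotient.mk rSetoid x = Quotient.mk rSetoid y := congrArg Prod.fst h
    have h2 : (hx x).choose = (hx y).choose := congrArg Prod.snd h
    have ex : x = ((hx x).choose : ℝ) + (Quotient.mk rSetoid x).out :=
      eq_add_of_sub_eq (hx x).choose_spec
    have ey : y = ((hx y).choose : ℝ) + (Quotient.mk rSetoid y).out :=
      eq_add_of_sub_eq (hx y).choose_spec
    rw [h2] at ex
    rw [h1] at ex
    exact ex.trans ey.symm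
  have hle : #ℝ ≤ #(RQ × ℚ) := Cardinal.mk_le_of_injective hF
  rw [Cardinal.mk_prod, Cardinal.mk_real, Cardinal.mkRat] at hle
  simp only [Cardinal.lift_id] at hle
  have : 𝔠 ≤ max (max #RQ ℵ₀) ℵ₀ := hle.trans (Cardinal.mul_le_max _ _)
  rw [max_assoc, max_self] at this
  rcases le_max_iff.mp this with h | h
  · exact h
  · exact absurd h (Cardinal.aleph0_lt_continuum : ℵ₀ < 𝔠).not_ge

def dec : RQ → Code := Function.invFun ((Cardinal.le_def _ _).mp (mk_code_le.trans continuum_le_RQ)).some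

lemma dec_surj : Function.Surjective dec := by
  intro γ
  exact ⟨_, Function.leftInverse_invFun (((Cardinal.le_def _ _).mp
    (mk_code_le.trans continuum_le_RQ)).some).injective γ⟩

/-- the coding function on ℝ, with every fiber dense -/
def rcode : ℝ → Code := fun x => dec (Quotient.mk rSetoid x)

lemma rcode_dense (γ : Code) (s : ℝ) (ε : ℝ) (hε : 0 < ε) :
    ∃ x : ℝ, |x - s| < ε ∧ rcode x = γ := by
  obtain ⟨r, hr⟩ := dec_surj γ
  set x₀ := r.out with hx₀
  obtain ⟨q, hq1, hq2⟩ := exists_rat_btwn (show s - x₀ - ε < s - x₀ + ε by linarith)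
  refine ⟨x₀ + q, by rw [abs_lt]; constructor <;> linarith, ?_⟩
  have hmk : Quotient.mk rSetoid (x₀ + q) = r := by
    have h1 : Quotient.mk rSetoid (x₀ + (q:ℝ)) = Quotient.mk rSetoid x₀ :=
      Quotient.sound ⟨q, by ring⟩
    rw [h1, hx₀]; exact Quotient.out_eq r
  rw [rcode, hmk, hr]

open Classical in
/-- Boolean membership pattern -/
def bpat (S : Set ℂ) (t : ℂ) : Bool := if t ∈ S then true else false

lemma bpat_inj {S T : Set ℂ} {t : ℂ} (h : ¬(t ∈ S ↔ t ∈ T)) : bpat S t ≠ bpat T t := by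
  classical
  unfold bpat
  by_cases hS : t ∈ S <;> by_cases hT : t ∈ T <;> simp [hS, hT] at h ⊢ <;> tauto

def fS (S : Set ℂ) : ℂ → ℂ := fun x =>
  if x.im = 0 then 0 else
    (rcode x.re).2.2 (fun i => bpat S ((rcode x.re).2.1 i))

lemma fS_on_real (S : Set ℂ) (x : ℂ) (h : x.im = 0) : fS S x = 0 := if_pos h

lemma key (n : ℕ) (S : Fin n → Set ℂ) (hS : Function.Injective S)
    (w : Fin n → ℂ) (U : Set ℂ) (hU : IsOpen U) (hne : U.Nonempty) :
    𝔠 ≤ #{x : ℂ | x ∈ U ∧ ∀ i, fS (S i) x = w i} := by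
  classical
  -- separating points
  have hsep : ∀ p : Fin n × Fin n, p.1 ≠ p.2 → ∃ a : ℂ, ¬(a ∈ S p.1 ↔ a ∈ S p.2) := by
    intro p hp
    have : S p.1 ≠ S p.2 := fun h => hp (hS h)
    by_contra hc
    push_neg at hc
    exact this (Set.ext fun a => hc a)
  set t : Fin n × Fin n → ℂ := fun p =>
    if h : p.1 ≠ p.2 then (hsep p h).choose else 0 with ht
  set pat : Fin n → (Fin n × Fin n) → Bool := fun i p => bpat (S i) (t p) with hpat
  have pat_inj : Function.Injective pat := by
    intro i j hij
    by_contra hne'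
    have h1 : t (i, j) = (hsep (i,j) hne').choose := by rw [ht]; simp [hne']
    have h2 := (hsep (i,j) hne').choose_spec
    have := congrFun hij (i, j)
    rw [hpat] at this
    simp only at this
    rw [h1] at this
    exact bpat_inj h2 this
  set e := (finProdFinEquiv : Fin n × Fin n ≃ Fin (n * n)) with he
  set t' : Fin (n * n) → ℂ := fun j => t (e.symm j) with ht'
  set pat' : Fin n → (Fin (n * n) → Bool) := fun i j => pat i (e.symm j) with hpat'
  have pat'_inj : Function.Injective pat' := by
    intro i j hij
    apply pat_inj
    funext p
    have := congrFun hij (e p)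
    simpa [hpat'] using this
  set v : (Fin (n * n) → Bool) → ℂ := fun b =>
    if h : ∃ i, pat' i = b then w h.choose else 0 with hv
  have hv_pat : ∀ i, v (pat' i) = w i := by
    intro i
    have hex : ∃ j, pat' j = pat' i := ⟨i, rfl⟩
    have hvv : v (pat' i) = if h : ∃ j, pat' j = pat' i then w h.choose else 0 := rfl
    rw [hvv, dif_pos hex]
    congr 1
    exact pat'_inj hex.choose_spec
  set γ : Code := ⟨n * n, t', v⟩ with hγ
  -- geometry
  obtain ⟨z₀, hz₀⟩ := hne
  obtain ⟨ε, hε, hball⟩ := Metric.isOpen_iff.mp hU z₀ hz₀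
  obtain ⟨z₁, ε₁, hε₁, hball₁, him⟩ :
      ∃ (z₁ : ℂ) (ε₁ : ℝ), 0 < ε₁ ∧ Metric.ball z₁ ε₁ ⊆ U ∧ ε₁ ≤ |z₁.im| := by
    by_cases h0 : z₀.im = 0
    · have hd : dist (z₀ + ((ε/2 : ℝ) : ℂ) * Complex.I) z₀ = ε/2 := by
        have heq : z₀ + ((ε/2 : ℝ) : ℂ) * Complex.I - z₀ = ((ε/2 : ℝ) : ℂ) * Complex.I := by ring
        rw [Complex.dist_eq, heq, norm_mul, Complex.norm_I, Complex.norm_real, Real.norm_eq_abs, mul_one,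
          abs_of_pos (by linarith : (0:ℝ) < ε/2)]
      refine ⟨z₀ + ((ε/2 : ℝ) : ℂ) * Complex.I, ε/4, by linarith, ?_, ?_⟩
      · intro x hx
        apply hball
        simp only [Metric.mem_ball] at hx ⊢
        calc dist x z₀ ≤ dist x (z₀ + ((ε/2 : ℝ) : ℂ) * Complex.I)
              + dist (z₀ + ((ε/2 : ℝ) : ℂ) * Complex.I) z₀ := dist_triangle _ _ _
          _ < ε/4 + ε/2 := by linarith [hx]
          _ < ε := by linarith
      · have : (z₀ + ((ε/2 : ℝ) : ℂ) * Complex.I).im = ε/2 := by simp [h0]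
        rw [this, abs_of_pos (by linarith : (0:ℝ) < ε/2)]
        linarith
    · exact ⟨z₀, min (ε/2) |z₀.im|, lt_min (by linarith) (abs_pos.mpr h0),
        fun x hx => hball (Metric.mem_ball.mpr ((Metric.mem_ball.mp hx).trans_le
          ((min_le_left _ _).trans (by linarith)))), min_le_right _ _⟩
  -- dense coding point
  obtain ⟨s, hs, hsc⟩ := rcode_dense γ z₁.re (ε₁/2) (by linarith)
  -- the injection
  have hsub : ∀ y ∈ Ioo (z₁.im - ε₁/2) (z₁.im + ε₁/2),
      ((s : ℂ) + (y : ℝ) * Complex.I) ∈ U ∧ ∀ i, fS (S i) ((s:ℂ) + (y:ℝ) * Complex.I) = w i := by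
    intro y hy
    have hyim : ((s : ℂ) + (y:ℝ) * Complex.I).im = y := by simp
    have hyre : ((s : ℂ) + (y:ℝ) * Complex.I).re = s := by simp
    have hy1 : |y - z₁.im| < ε₁/2 := by
      rw [abs_lt]; exact ⟨by linarith [hy.1], by linarith [hy.2]⟩
    have hyne : y ≠ 0 := by
      intro h0
      rw [h0] at hy1
      simp only [zero_sub, abs_neg] at hy1
      linarith
    constructor
    · apply hball₁
      rw [Metric.mem_ball, Complex.dist_eq]
      calc ‖(s:ℂ) + y * Complex.I - z₁‖ ≤
          |((s:ℂ) + y * Complex.I - z₁).re| + |((s:ℂ) + y * Complex.I - z₁).im| :=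
            Complex.norm_le_abs_re_add_abs_im _
        _ < ε₁ := by
            simp only [Complex.sub_re, Complex.sub_im, hyim, hyre]
            linarith
    · intro i
      have hx0 : ((s:ℂ) + (y:ℝ) * Complex.I).im ≠ 0 := by rw [hyim]; exact hyne
      have hfs : fS (S i) ((s:ℂ) + (y:ℝ) * Complex.I) =
          (rcode ((s:ℂ) + (y:ℝ) * Complex.I).re).2.2
            (fun j => bpat (S i) ((rcode ((s:ℂ) + (y:ℝ) * Complex.I).re).2.1 j)) :=
        if_neg hx0
      rw [hfs, hyre, hsc]
      show v (fun j => bpat (S i) (t' j)) = w i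
      have hpp : (fun j => bpat (S i) (t' j)) = pat' i := rfl
      rw [hpp]
      exact hv_pat i
  have hinj : Function.Injective (fun y : Ioo (z₁.im - ε₁/2) (z₁.im + ε₁/2) =>
      (⟨(s : ℂ) + (y : ℝ) * Complex.I, (hsub y y.2).1, fun i => (hsub y y.2).2 i⟩ :
        {x : ℂ | x ∈ U ∧ ∀ i, fS (S i) x = w i})) := by
    intro y₁ y₂ h
    have h' : ((s:ℂ) + ((y₁ : ℝ):ℂ) * Complex.I) = ((s:ℂ) + ((y₂ : ℝ):ℂ) * Complex.I) :=
      congrArg Subtype.val h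
    have h2 := congrArg Complex.im h'
    simp only [Complex.add_im, Complex.ofReal_im, Complex.mul_im, Complex.ofReal_re,
      Complex.I_im, Complex.I_re, mul_one, mul_zero, zero_add, add_zero] at h2
    exact Subtype.ext h2
  calc 𝔠 = #(Ioo (z₁.im - ε₁/2) (z₁.im + ε₁/2)) :=
        (Cardinal.mk_Ioo_real (by linarith)).symm
    _ ≤ _ := Cardinal.mk_le_of_injective hinj

lemma mv_root : ∀ (n : ℕ) (Q : MvPolynomial (Fin n) ℂ), (∀ c : ℂ, Q ≠ C c) →
    ∃ w : Fin n → ℂ, eval w Q = 0 := by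
  intro n
  induction n with
  | zero => intro Q hQ; obtain ⟨c, rfl⟩ := C_surjective (Fin 0) Q; exact absurd rfl (hQ c)
  | succ n ih =>
    intro Q hQ
    set Q' := finSuccEquiv ℂ n Q with hQ'
    rcases Nat.eq_zero_or_pos Q'.natDegree with hd | hd
    · obtain ⟨a, ha⟩ := Polynomial.natDegree_eq_zero.mp hd
      have haC : ∀ c : ℂ, a ≠ C c := by
        rintro c rfl
        apply hQ c
        apply (finSuccEquiv ℂ n).injective
        rw [← hQ', ← ha]
        simp [finSuccEquiv_apply]
      obtain ⟨w, hw⟩ := ih a haC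
      refine ⟨Fin.cons 0 w, ?_⟩
      rw [eval_eq_eval_mv_eval', ← hQ', ← ha]
      simp [hw]
    · have hQne : Q' ≠ 0 := by
        intro h
        apply hQ 0
        apply (finSuccEquiv ℂ n).injective
        rw [← hQ', h, map_zero, map_zero]
      have hL : Q'.leadingCoeff ≠ 0 := Polynomial.leadingCoeff_ne_zero.mpr hQne
      have : ∃ w : Fin n → ℂ, eval w Q'.leadingCoeff ≠ 0 := by
        by_contra h
        push_neg at h
        exact hL (MvPolynomial.funext (fun x => by simp [h x]))
      obtain ⟨w, hw⟩ := this
      set p := Polynomial.map (eval w) Q' with hp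
      have hcoeff : p.coeff Q'.natDegree ≠ 0 := by
        rw [hp, Polynomial.coeff_map]; exact hw
      have h1 : (Q'.natDegree : WithBot ℕ) ≤ p.degree := Polynomial.le_degree_of_ne_zero hcoeff
      have hdeg' : 0 < p.degree := lt_of_lt_of_le (by exact_mod_cast hd) h1
      obtain ⟨y, hy⟩ := Complex.exists_root hdeg'
      refine ⟨Fin.cons y w, ?_⟩
      rw [eval_eq_eval_mv_eval', ← hQ', ← hp]
      exact hy

lemma mv_surj (n : ℕ) (P : MvPolynomial (Fin n) ℂ) (hP : P ≠ 0)
    (h0 : constantCoeff P = 0) (z : ℂ) : ∃ w : Fin n → ℂ, eval w P = z := by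
  have root : ∀ c : ℂ, P - C z ≠ C c := by
    intro c h
    have hP' : P = C (c + z) := by rw [map_add]; rw [sub_eq_iff_eq_add] at h; exact h
    have : constantCoeff P = c + z := by rw [hP']; simp
    rw [h0] at this
    exact hP (by rw [hP', ← this]; simp)
  obtain ⟨w, hw⟩ := mv_root n (P - C z) root
  refine ⟨w, ?_⟩
  rw [map_sub, eval_C] at hw
  exact sub_eq_zero.mp hw

lemma aeval_apply {ι : Type} (f : ι → (ℂ → ℂ)) (P : MvPolynomial ι ℂ) (x : ℂ) :
    (MvPolynomial.aeval f P) x = MvPolynomial.eval (fun i => f i x) P := by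
  induction P using MvPolynomial.induction_on with
  | C a => simp [Pi.algebraMap_apply]
  | add p q hp hq => simp [hp, hq]
  | mul_X p i hp => simp [hp]

lemma perfect_realline : Perfect {z : ℂ | z.im = 0} := by
  constructor
  · exact isClosed_eq Complex.continuous_im continuous_const
  · intro z hz
    rw [accPt_iff_nhds]
    intro V hV
    obtain ⟨ε, hε, hball⟩ := Metric.mem_nhds_iff.mp hV
    refine ⟨z + ((ε/2 : ℝ) : ℂ), ⟨hball ?_, ?_⟩, ?_⟩
    · rw [Metric.mem_ball, Complex.dist_eq]
      have heq : z + ((ε/2 : ℝ) : ℂ) - z = ((ε/2 : ℝ) : ℂ) := by ring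
      rw [heq, Complex.norm_real, Real.norm_eq_abs, abs_of_pos (by linarith)]
      linarith
    · show (z + ((ε/2 : ℝ) : ℂ)).im = 0
      simp [hz]
      exact hz
    · intro h
      have := congrArg Complex.re h
      simp at this
      linarith

lemma comp_mem (n : ℕ) (S : Fin n → Set ℂ) (hS : Function.Injective S)
    (P : MvPolynomial (Fin n) ℂ) (hP : P ≠ 0) (h0 : constantCoeff P = 0) :
    (MvPolynomial.aeval (fun i => fS (S i)) P : ℂ → ℂ) ∈ SES \ PES := by
  have hFx : ∀ x, (MvPolynomial.aeval (fun i => fS (S i)) P : ℂ → ℂ) x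
      = MvPolynomial.eval (fun i => fS (S i) x) P := fun x => aeval_apply _ _ _
  constructor
  · intro U hU hne z
    apply le_antisymm
    · rw [← mk_complex]
      exact Cardinal.mk_set_le _
    · obtain ⟨w, hw⟩ := mv_surj n P hP h0 z
      refine le_trans (key n S hS w U hU hne) (Cardinal.mk_le_mk_of_subset ?_)
      rintro x ⟨hxU, hx⟩
      refine ⟨hxU, ?_⟩
      rw [hFx]
      have : (fun i => fS (S i) x) = w := funext hx
      rw [this, hw]
  · intro hPES
    have him := hPES {z : ℂ | z.im = 0} perfect_realline ⟨0, by simp⟩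
    have h1 : (1 : ℂ) ∈ (MvPolynomial.aeval (fun i => fS (S i)) P : ℂ → ℂ) '' {z : ℂ | z.im = 0} := by
      rw [him]; trivial
    obtain ⟨x, hx, hx1⟩ := h1
    rw [hFx] at hx1
    have hz : (fun i => fS (S i) x) = fun _ => 0 := funext fun i => fS_on_real _ _ hx
    rw [hz] at hx1
    rw [show (MvPolynomial.eval (fun _ => (0:ℂ)) P) = constantCoeff P from
      DFunLike.congr_fun eval_zero' P] at hx1
    rw [h0] at hx1
    exact zero_ne_one hx1

/-- `SES(ℂ) \ PES(ℂ)` is strongly `2 ^ 𝔠`-algebrable in `ℂ^ℂ`. -/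
theorem stmt6 : StronglyAlgebrable ℂ (SES \ PES) ((2 : Cardinal) ^ Cardinal.continuum) := by
  refine ⟨Set ℂ, fun S => fS S, ?_, ?_, ?_, ?_⟩
  · rw [Cardinal.mk_set, mk_complex]
  · intro S T h
    by_contra hne
    have hinj : Function.Injective ![S, T] := by
      intro i j hij
      fin_cases i <;> fin_cases j <;> simp_all <;> exact absurd hij (by simpa using hne) <;> rfl
    have hk := key 2 ![S, T] hinj ![0, 1] Set.univ isOpen_univ ⟨0, trivial⟩
    have hne0 : #{x : ℂ | x ∈ Set.univ ∧ ∀ i, fS (![S, T] i) x = ![0, 1] i} ≠ 0 := by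
      intro h0'
      rw [h0'] at hk
      exact Cardinal.continuum_ne_zero (le_antisymm (by simpa using hk) zero_le)
    obtain ⟨⟨x, -, hx⟩⟩ := Cardinal.mk_ne_zero_iff.mp hne0
    have h0 := hx 0
    have h1 := hx 1
    simp only [Matrix.cons_val_zero, Matrix.cons_val_one, Matrix.head_cons] at h0 h1
    have h' : fS S = fS T := h
    rw [h'] at h0
    rw [h0] at h1
    exact (zero_ne_one (α := ℂ)) h1
  · intro S
    have hinj : Function.Injective (fun _ : Fin 1 => S) := fun i j _ => Subsingleton.elim i j
    have := comp_mem 1 (fun _ => S) hinj (X (0 : Fin 1)) (show (X (0 : Fin 1) : MvPolynomial (Fin 1) ℂ) ≠ 0 from X_ne_zero _) (by simp : constantCoeff (X (0 : Fin 1) : MvPolynomial (Fin 1) ℂ) = 0)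
    have heq : (MvPolynomial.aeval (fun _ : Fin 1 => fS S) (X (0 : Fin 1) : MvPolynomial (Fin 1) ℂ) : ℂ → ℂ) = fS S := by
      simp
    rwa [heq] at this
  · intro n hn P hP h0 ξ hξ
    have hmem := comp_mem n ξ hξ P hP h0
    refine ⟨?_, hmem⟩
    intro hzero
    have hses := hmem.1 Set.univ isOpen_univ ⟨0, trivial⟩ 1
    rw [hzero] at hses
    have hemp : {x : ℂ | x ∈ Set.univ ∧ (0 : ℂ → ℂ) x = 1} = ∅ := by
      ext x; simp
    rw [hemp] at hses
    simp at hses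
    exact Cardinal.continuum_ne_zero hses.symm

end
end

section
/- The set EDD(ℝ) of all everywhere discontinuous Darboux functions from ℝ to ℝ — that is, functions f : ℝ → ℝ that are continuous at no point of ℝ and map every connected subset of ℝ onto a connected set — is strongly 2^𝔠-algebrable in the algebra ℝ^ℝ, where 𝔠 is the cardinality of the continuum. -/
open Cardinal

noncomputable section

namespace EDDProof

open MvPolynomial Set

/-- Label type for Hausdorff's independent family: a finite set `F` of reals together with
an assignment of a real to each subset of `F`. -/
def D : Type := (F : Finset ℝ) × ({ S : Finset ℝ // S ⊆ F } → ℝ)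

instance : Nonempty D := ⟨⟨∅, fun _ => 0⟩⟩

/-- Trace of a set on a finset. -/
def tr (A : Set ℝ) (F : Finset ℝ) : Finset ℝ :=
  @Finset.filter _ (· ∈ A) (Classical.decPred _) F

lemma mem_tr {A : Set ℝ} {F : Finset ℝ} {r : ℝ} : r ∈ tr A F ↔ r ∈ F ∧ r ∈ A := by
  classical
  simp [tr]

lemma tr_subset (A : Set ℝ) (F : Finset ℝ) : tr A F ⊆ F := by
  classical
  exact Finset.filter_subset _ _

/-- The independent family indexed by subsets of ℝ. -/
def fA (A : Set ℝ) (d : D) : ℝ := d.2 ⟨tr A d.1, tr_subset _ _⟩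

lemma exists_sep {n : ℕ} (ξ : Fin n → Set ℝ) (hξ : Function.Injective ξ) :
    ∃ F : Finset ℝ, ∀ i j, i ≠ j → tr (ξ i) F ≠ tr (ξ j) F := by
  classical
  have hw : ∀ p : {p : Fin n × Fin n // p.1 ≠ p.2},
      ∃ r : ℝ, ¬(r ∈ ξ p.1.1 ↔ r ∈ ξ p.1.2) := by
    rintro ⟨⟨i, j⟩, hij⟩
    by_contra h
    push_neg at h
    exact hij (hξ (Set.ext fun r => h r))
  choose w hwspec using hw
  refine ⟨Finset.univ.image w, ?_⟩
  intro i j hij hEq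
  have hmem : w ⟨(i, j), hij⟩ ∈ Finset.univ.image w :=
    Finset.mem_image_of_mem _ (Finset.mem_univ _)
  have h1 := hwspec ⟨(i, j), hij⟩
  have h2 : (w ⟨(i, j), hij⟩ ∈ tr (ξ i) (Finset.univ.image w)) ↔
      (w ⟨(i, j), hij⟩ ∈ tr (ξ j) (Finset.univ.image w)) := by rw [hEq]
  rw [mem_tr, mem_tr] at h2
  exact h1 (by tauto)

lemma exists_label {n : ℕ} (ξ : Fin n → Set ℝ) (hξ : Function.Injective ξ) (y : Fin n → ℝ) :
    ∃ d : D, ∀ i, fA (ξ i) d = y i := by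
  classical
  obtain ⟨F, hF⟩ := exists_sep ξ hξ
  refine ⟨⟨F, fun S => if h : ∃ i, S.1 = tr (ξ i) F then y h.choose else 0⟩, fun i => ?_⟩
  have hi : ∃ j, tr (ξ i) F = tr (ξ j) F := ⟨i, rfl⟩
  show (if h : ∃ j, tr (ξ i) F = tr (ξ j) F then y h.choose else 0) = y i
  rw [dif_pos hi]
  have hspec := hi.choose_spec
  by_cases hc : hi.choose = i
  · rw [hc]
  · exact absurd hspec.symm (hF _ _ hc)

/-- The rationals as an additive subgroup of ℝ. -/
def Q : AddSubgroup ℝ where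
  carrier := Set.range (fun q : ℚ => (q : ℝ))
  zero_mem' := ⟨0, by norm_num⟩
  add_mem' := by
    rintro a b ⟨q, rfl⟩ ⟨r, rfl⟩
    exact ⟨q + r, by push_cast; ring⟩
  neg_mem' := by
    rintro a ⟨q, rfl⟩
    exact ⟨-q, by push_cast; ring⟩

abbrev G := ℝ ⧸ Q

lemma mk_dense (d : G) {a b : ℝ} (hab : a < b) :
    ∃ t ∈ Set.Ioo a b, (QuotientAddGroup.mk t : G) = d := by
  obtain ⟨y, rfl⟩ := QuotientAddGroup.mk_surjective d
  obtain ⟨q, hq1, hq2⟩ := exists_rat_btwn (show a - y < b - y by linarith)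
  refine ⟨y + q, ⟨by linarith, by linarith⟩, ?_⟩
  rw [QuotientAddGroup.eq_iff_sub_mem]
  exact ⟨q, by ring⟩

lemma continuum_le_G : 𝔠 ≤ #G := by
  have hsec : ∀ x : ℝ, ∃ q : ℚ,
      (q : ℝ) = x - Quotient.out (QuotientAddGroup.mk x (s := Q)) := by
    intro x
    have h1 : (QuotientAddGroup.mk (Quotient.out (QuotientAddGroup.mk x (s := Q))) : G)
        = QuotientAddGroup.mk x := Quotient.out_eq _
    have h2 := (QuotientAddGroup.eq_iff_sub_mem).mp h1.symm
    obtain ⟨q, hq⟩ := h2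
    exact ⟨q, hq⟩
  choose sec hsecspec using hsec
  have hinj : Function.Injective (fun x : ℝ => ((QuotientAddGroup.mk x : G), sec x)) := by
    intro x₁ x₂ h
    have h1 : (QuotientAddGroup.mk x₁ : G) = QuotientAddGroup.mk x₂ := congrArg Prod.fst h
    have h2 : sec x₁ = sec x₂ := congrArg Prod.snd h
    have e1 := hsecspec x₁
    have e2 := hsecspec x₂
    rw [h1, h2] at e1
    rw [e2] at e1
    linarith
  have hle : #ℝ ≤ #(G × ℚ) := Cardinal.mk_le_of_injective hinj
  rw [Cardinal.mk_prod, Cardinal.mk_denumerable ℚ, Cardinal.lift_id, Cardinal.lift_id,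
    Cardinal.mk_real] at hle
  have := hle.trans (Cardinal.mul_le_max _ _)
  rcases le_max_iff.mp this with h | h
  · rcases le_max_iff.mp h with h' | h'
    · exact h'
    · exact absurd h' (not_le.mpr Cardinal.aleph0_lt_continuum)
  · exact absurd h (not_le.mpr Cardinal.aleph0_lt_continuum)

lemma mk_D_le : #D ≤ 𝔠 := by
  have hsummand : ∀ F : Finset ℝ, #({ S : Finset ℝ // S ⊆ F } → ℝ) ≤ 𝔠 := by
    intro F
    classical
    have hfin : Finite { S : Finset ℝ // S ⊆ F } := by
      refine Finite.of_injective
        (fun S => (⟨S.1, Finset.mem_powerset.mpr S.2⟩ : {T // T ∈ F.powerset})) ?_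
      intro S T h
      exact Subtype.ext (congrArg Subtype.val h :)
    have h1 : #({ S : Finset ℝ // S ⊆ F } → ℝ) = (#ℝ) ^ #{ S : Finset ℝ // S ⊆ F } :=
      (Cardinal.power_def _ _).symm
    rw [h1, Cardinal.mk_real]
    calc 𝔠 ^ #{ S : Finset ℝ // S ⊆ F } ≤ 𝔠 ^ ℵ₀ :=
          Cardinal.power_le_power_left Cardinal.continuum_ne_zero
            ((Cardinal.lt_aleph0_of_finite _).le)
      _ = 𝔠 := Cardinal.continuum_power_aleph0
  calc #D = Cardinal.sum (fun F : Finset ℝ => #({ S : Finset ℝ // S ⊆ F } → ℝ)) :=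
        Cardinal.mk_sigma _
    _ ≤ Cardinal.sum (fun _ : Finset ℝ => 𝔠) := Cardinal.sum_le_sum _ _ hsummand
    _ = #(Finset ℝ) * 𝔠 := Cardinal.sum_const' _ _
    _ = 𝔠 * 𝔠 := by rw [Cardinal.mk_finset_of_infinite, Cardinal.mk_real]
    _ = 𝔠 := Cardinal.mul_eq_self Cardinal.aleph0_le_continuum

/-- An embedding of the label type into the quotient group. -/
def emb : D ↪ G :=
  ((Cardinal.le_def D G).mp (mk_D_le.trans continuum_le_G)).some

/-- The labeling function: on every open interval it attains every label. -/
def lab (t : ℝ) : D := Function.invFun emb (QuotientAddGroup.mk t : G)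

lemma lab_surj (d : D) {a b : ℝ} (hab : a < b) :
    ∃ t ∈ Set.Ioo a b, lab t = d := by
  obtain ⟨t, ht, hmk⟩ := mk_dense (emb d) hab
  refine ⟨t, ht, ?_⟩
  rw [lab, hmk]
  exact Function.leftInverse_invFun emb.injective d

/-- The generators. -/
def xA (A : Set ℝ) : ℝ → ℝ := fun t => fA A (lab t)

lemma key {n : ℕ} (ξ : Fin n → Set ℝ) (hξ : Function.Injective ξ) (y : Fin n → ℝ)
    {a b : ℝ} (hab : a < b) :
    ∃ t ∈ Set.Ioo a b, ∀ i, xA (ξ i) t = y i := by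
  obtain ⟨d, hd⟩ := exists_label ξ hξ y
  obtain ⟨t, ht, hlab⟩ := lab_surj d hab
  exact ⟨t, ht, fun i => by rw [xA, hlab]; exact hd i⟩

lemma aeval_apply {m : Type} (x : m → ℝ → ℝ) (P : MvPolynomial m ℝ) (t : ℝ) :
    (MvPolynomial.aeval x P) t = MvPolynomial.eval (fun i => x i t) P := by
  induction P using MvPolynomial.induction_on with
  | C a => simp [MvPolynomial.algebraMap_eq]
  | add p q hp hq => simp [hp, hq]
  | mul_X p i hp => simp [hp]

lemma main {n : ℕ} (P : MvPolynomial (Fin n) ℝ) (hP : P ≠ 0)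
    (hc : MvPolynomial.constantCoeff P = 0) (ξ : Fin n → Set ℝ)
    (hξ : Function.Injective ξ) :
    (MvPolynomial.aeval (fun i => xA (ξ i)) P ≠ 0) ∧
      (∀ x : ℝ, ¬ContinuousAt (MvPolynomial.aeval (fun i => xA (ξ i)) P) x) ∧
      ∀ C : Set ℝ, IsPreconnected C →
        IsPreconnected ((MvPolynomial.aeval (fun i => xA (ξ i)) P) '' C) := by
  set g : ℝ → ℝ := MvPolynomial.aeval (fun i => xA (ξ i)) P with hgdef
  have hg : ∀ t, g t = MvPolynomial.eval (fun i => xA (ξ i) t) P := fun t =>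
    aeval_apply _ P t
  -- every value of the polynomial function is attained by `g` on every interval
  have hrange : ∀ a b : ℝ, a < b → ∀ y : Fin n → ℝ,
      ∃ t ∈ Set.Ioo a b, g t = MvPolynomial.eval y P := by
    intro a b hab y
    obtain ⟨t, ht, hvals⟩ := key ξ hξ y hab
    refine ⟨t, ht, ?_⟩
    rw [hg t]
    have hfun : (fun i => xA (ξ i) t) = y := funext hvals
    rw [hfun]
  have hy0 : MvPolynomial.eval (0 : Fin n → ℝ) P = 0 := by
    rw [MvPolynomial.eval_zero, hc]
  have hy1 : ∃ y : Fin n → ℝ, MvPolynomial.eval y P ≠ 0 := by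
    by_contra h
    push_neg at h
    exact hP (MvPolynomial.funext (q := 0) (fun x => by simp [h x]))
  obtain ⟨y₁, hy1⟩ := hy1
  refine ⟨?_, ?_, ?_⟩
  · -- g ≠ 0
    intro h0
    obtain ⟨t, _, hgt⟩ := hrange 0 1 one_pos y₁
    apply hy1
    rw [← hgt, h0]
    rfl
  · -- everywhere discontinuous
    intro x₀ hcont
    rw [Metric.continuousAt_iff] at hcont
    have hεpos : 0 < |MvPolynomial.eval y₁ P| / 2 := by positivity
    obtain ⟨δ, hδ, hd⟩ := hcont _ hεpos
    obtain ⟨t₁, ht₁, hgt₁⟩ := hrange x₀ (x₀ + δ) (by linarith) y₁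
    obtain ⟨t₂, ht₂, hgt₂⟩ := hrange x₀ (x₀ + δ) (by linarith) 0
    have hd₁ : dist (g t₁) (g x₀) < |MvPolynomial.eval y₁ P| / 2 := by
      apply hd
      rw [Real.dist_eq, abs_of_pos (by linarith [ht₁.1] : (0:ℝ) < t₁ - x₀)]
      linarith [ht₁.2]
    have hd₂ : dist (g t₂) (g x₀) < |MvPolynomial.eval y₁ P| / 2 := by
      apply hd
      rw [Real.dist_eq, abs_of_pos (by linarith [ht₂.1] : (0:ℝ) < t₂ - x₀)]
      linarith [ht₂.2]
    have htri : dist (g t₁) (g t₂) ≤ dist (g t₁) (g x₀) + dist (g x₀) (g t₂) :=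
      dist_triangle _ _ _
    rw [dist_comm (g x₀)] at htri
    have : dist (g t₁) (g t₂) = |MvPolynomial.eval y₁ P| := by
      rw [hgt₁, hgt₂, hy0, Real.dist_eq, sub_zero]
    linarith
  · -- Darboux
    intro C hC
    by_cases hsub : C.Subsingleton
    · exact (hsub.image g).isPreconnected
    · rw [Set.not_subsingleton_iff] at hsub
      obtain ⟨u, hu, v, hv, huv⟩ := hsub
      have himg : ∀ u v : ℝ, u ∈ C → v ∈ C → u < v →
          g '' C = Set.range (fun y : Fin n → ℝ => MvPolynomial.eval y P) := by
        intro u v hu hv hlt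
        apply Set.Subset.antisymm
        · rintro _ ⟨t, ht, rfl⟩
          exact ⟨fun i => xA (ξ i) t, (hg t).symm⟩
        · rintro _ ⟨y, rfl⟩
          obtain ⟨t, htIoo, hgt⟩ := hrange u v hlt y
          exact ⟨t, hC.Icc_subset hu hv (Set.Ioo_subset_Icc_self htIoo), hgt⟩
      have hpre : IsPreconnected (Set.range (fun y : Fin n → ℝ => MvPolynomial.eval y P)) := by
        rw [← Set.image_univ]
        exact isPreconnected_univ.image _ (MvPolynomial.continuous_eval P).continuousOn
      rcases huv.lt_or_gt with hlt | hlt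
      · rw [himg u v hu hv hlt]; exact hpre
      · rw [himg v u hv hu hlt]; exact hpre

end EDDProof


/-- The set `EDD(ℝ)` of everywhere discontinuous Darboux functions — functions
`f : ℝ → ℝ` continuous at no point which map every connected subset of `ℝ` onto a connected
set — is strongly `2 ^ 𝔠`-algebrable in `ℝ^ℝ`. -/
theorem stmt7 :
    StronglyAlgebrable ℝ
      {f : ℝ → ℝ | (∀ x : ℝ, ¬ContinuousAt f x) ∧
        ∀ C : Set ℝ, IsPreconnected C → IsPreconnected (f '' C)}
      ((2 : Cardinal) ^ Cardinal.continuum) := by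
  classical
  refine ⟨Set ℝ, fun A => EDDProof.xA A, ?_, ?_, ?_, ?_⟩
  · rw [Cardinal.mk_set, Cardinal.mk_real]
  · intro A B h
    by_contra hne
    have hinj : Function.Injective ![A, B] := by
      intro i j hij
      fin_cases i <;> fin_cases j <;> simp_all
    obtain ⟨t, _, hvals⟩ := EDDProof.key ![A, B] hinj ![0, 1] one_pos
    have h0 := hvals 0
    have h1 := hvals 1
    simp only [Matrix.cons_val_zero, Matrix.cons_val_one, Matrix.head_cons] at h0 h1
    have h' : EDDProof.xA A = EDDProof.xA B := h
    rw [h'] at h0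
    rw [h0] at h1
    norm_num at h1
  · intro A
    have hinj : Function.Injective (fun _ : Fin 1 => A) := fun a b _ => Subsingleton.elim a b
    have hm := EDDProof.main (MvPolynomial.X (0 : Fin 1) : MvPolynomial (Fin 1) ℝ)
      (MvPolynomial.X_ne_zero (0 : Fin 1)) (MvPolynomial.constantCoeff_X (R := ℝ) (0 : Fin 1)) (fun _ => A) hinj
    have heq : (MvPolynomial.aeval (fun i : Fin 1 => EDDProof.xA ((fun _ => A) i))
        (MvPolynomial.X (0 : Fin 1) : MvPolynomial (Fin 1) ℝ)) = EDDProof.xA A := by simp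
    rw [heq] at hm
    exact ⟨hm.2.1, hm.2.2⟩
  · intro n hn P hP hc ξ hξ
    have hm := EDDProof.main P hP hc ξ hξ
    exact ⟨hm.1, hm.2.1, hm.2.2⟩
end
end

section
/- Let f : ℂ → ℂ be perfectly everywhere surjective. Then: (a) for every uncountable Borel set A ⊆ ℂ, the restriction of f to A is not Borel measurable (as a function on the subspace A with its Borel σ-algebra); and (b) for every z ∈ ℂ, the preimage f⁻¹({z}) is a Bernstein set, i.e. both f⁻¹({z}) and its complement meet every nonempty perfect subset of ℂ. -/
open Filter Topology Set

/-- The Cantor space `ℕ → Bool` has no isolated points. -/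
lemma cantor_nebot (a : ℕ → Bool) : Filter.NeBot (𝓝[≠] a) := by
  have htend : Tendsto (fun n : ℕ => Function.update a n (!(a n))) atTop (𝓝[≠] a) := by
    apply tendsto_nhdsWithin_of_tendsto_nhds_of_eventually_within
    · rw [tendsto_pi_nhds]
      intro k
      apply tendsto_nhds_of_eventually_eq
      filter_upwards [eventually_gt_atTop k] with n hn
      exact Function.update_of_ne (by omega) _ _
    · filter_upwards with n
      intro h
      have := congrFun h n
      simp [Function.update_self] at this
  exact htend.neBot
/-- The range of a continuous injection from the Cantor space into a `T2Space` is perfect. -/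
lemma perfect_range_of_cantor {X : Type*} [TopologicalSpace X] [T2Space X]
    {g : (ℕ → Bool) → X} (hg : Continuous g) (hinj : Function.Injective g) :
    Perfect (Set.range g) := by
  constructor
  · exact (isCompact_range hg).isClosed
  · rintro x ⟨a, rfl⟩
    rw [accPt_iff_nhds]
    intro U hU
    have h1 : g ⁻¹' U ∈ 𝓝 a := hg.continuousAt.preimage_mem_nhds hU
    have h2 : {a}ᶜ ∩ g ⁻¹' U ∈ 𝓝[≠] a := inter_mem_nhdsWithin _ h1
    obtain ⟨b, hba, hbU⟩ := (cantor_nebot a).nonempty_of_mem h2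
    exact ⟨g b, ⟨hbU, ⟨b, rfl⟩⟩, fun h => hba (hinj h)⟩

/-- Every uncountable Borel subset of `ℂ` contains a nonempty perfect subset. -/
lemma exists_perfect_subset {A : Set ℂ} (hA : MeasurableSet A) (hunc : ¬ A.Countable) :
    ∃ P : Set ℂ, P ⊆ A ∧ Perfect P ∧ P.Nonempty := by
  have hstep : ∃ g : (ℕ → Bool) → ℂ,
      Set.range g ⊆ A ∧ Continuous g ∧ Function.Injective g := by
    obtain ⟨t', hle, hpolish, hclosed, -⟩ := hA.isClopenable
    obtain ⟨g, hrange, hcont, hinj⟩ :=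
      @IsClosed.exists_nat_bool_injection_of_not_countable ℂ t' hpolish A hclosed hunc
    refine ⟨g, hrange, ?_, hinj⟩
    rw [continuous_def]
    intro s hs
    exact hcont.isOpen_preimage s (hle s hs)
  obtain ⟨g, hrange, hcont, hinj⟩ := hstep
  exact ⟨Set.range g, hrange, perfect_range_of_cantor hcont hinj, Set.range_nonempty g⟩

/-- If `f : ℂ → ℂ` is perfectly everywhere surjective then (a) for every
uncountable Borel set `A ⊆ ℂ` the restriction of `f` to `A` is not (Borel) measurable, and
(b) every fiber `f ⁻¹' {z}` is a Bernstein set: both it and its complement meet every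
nonempty perfect subset of `ℂ`. -/
theorem stmt10 (f : ℂ → ℂ) (hf : f ∈ PES) :
    (∀ A : Set ℂ, MeasurableSet A → ¬ A.Countable →
      ¬ Measurable fun x : A => f x) ∧
    (∀ z : ℂ, ∀ P : Set ℂ, Perfect P → P.Nonempty →
      (P ∩ f ⁻¹' {z}).Nonempty ∧ (P \ f ⁻¹' {z}).Nonempty) := by
  have key : ∀ (z : ℂ) (P : Set ℂ), Perfect P → P.Nonempty →
      (P ∩ f ⁻¹' {z}).Nonempty ∧ (P \ f ⁻¹' {z}).Nonempty := by
    intro z P hP hPne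
    have hsurj := hf P hP hPne
    constructor
    · have : z ∈ f '' P := hsurj ▸ Set.mem_univ z
      obtain ⟨x, hxP, hx⟩ := this
      exact ⟨x, hxP, hx⟩
    · have : z + 1 ∈ f '' P := hsurj ▸ Set.mem_univ (z + 1)
      obtain ⟨x, hxP, hx⟩ := this
      refine ⟨x, hxP, ?_⟩
      simp only [Set.mem_preimage, Set.mem_singleton_iff, hx]
      intro h
      have : (1 : ℂ) = 0 := by linear_combination h
      exact one_ne_zero this
  refine ⟨?_, key⟩
  intro A hA hunc hmeas
  -- The fiber over 0 within A
  have hfib : MeasurableSet ((fun x : A => f x) ⁻¹' {0}) :=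
    hmeas (measurableSet_singleton 0)
  have hfibA : MeasurableSet (Subtype.val '' ((fun x : A => f x) ⁻¹' {0})) :=
    hA.subtype_image hfib
  set S : Set ℂ := Subtype.val '' ((fun x : A => f x) ⁻¹' {0}) with hS
  have hSsub : S ⊆ A := by rintro x ⟨y, -, rfl⟩; exact y.2
  have hSfib : S = A ∩ f ⁻¹' {0} := by
    ext x
    constructor
    · rintro ⟨y, hy, rfl⟩; exact ⟨y.2, hy⟩
    · rintro ⟨hxA, hx⟩; exact ⟨⟨x, hxA⟩, hx, rfl⟩
  -- S is countable: otherwise it contains a perfect set on which f ≡ 0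
  have hScount : S.Countable := by
    by_contra hSc
    obtain ⟨P, hPS, hP, hPne⟩ := exists_perfect_subset hfibA hSc
    have h1 := (key 1 P hP hPne).1
    obtain ⟨x, hxP, hx⟩ := h1
    have hx0 : f x = 0 := by
      have := hPS hxP
      rw [hSfib] at this
      exact this.2
    rw [Set.mem_preimage, Set.mem_singleton_iff] at hx
    rw [hx] at hx0
    exact one_ne_zero hx0
  -- A \ S is uncountable Borel, contains a perfect set, which must meet f⁻¹{0}: contradiction
  have hdiff : MeasurableSet (A \ S) := hA.diff hfibA
  have hdunc : ¬ (A \ S).Countable := by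
    intro hc
    exact hunc (((hc.union hScount).mono) (by
      intro x hx
      by_cases h : x ∈ S
      · exact Or.inr h
      · exact Or.inl ⟨hx, h⟩))
  obtain ⟨P, hPd, hP, hPne⟩ := exists_perfect_subset hdiff hdunc
  obtain ⟨x, hxP, hx⟩ := (key 0 P hP hPne).1
  have hxd := hPd hxP
  rw [Set.mem_preimage, Set.mem_singleton_iff] at hx
  exact hxd.2 (by rw [hSfib]; exact ⟨hxd.1, hx⟩)
end

section
/- Let 𝓕_Leb denote the family of all Lebesgue-measurable subsets of ℂ of positive Lebesgue measure, and 𝓕_Baire the family of all subsets of ℂ that have the Baire property and are non-meager. The set SES(ℂ, 𝓕_Baire) \ SES(ℂ, 𝓕_Leb) is strongly 2^𝔠-algebrable in the algebra ℂ^ℂ, where 𝔠 is the cardinality of the continuum. -/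
open Cardinal

/-- `f ∈ SES(ℂ, 𝓕)`: for every `F ∈ 𝓕` there are `n ≥ 1` and a complex polynomial `P` in
`n` variables with `f(F) = P(ℂⁿ)`, and each fiber of `f` over a point of `f(F)`, intersected
with `F`, has cardinality `𝔠`. -/
def SESC (𝓕 : Set (Set ℂ)) : Set (ℂ → ℂ) :=
  {f | ∀ F ∈ 𝓕,
    (∃ n : ℕ, 0 < n ∧ ∃ P : MvPolynomial (Fin n) ℂ,
      f '' F = Set.range fun t : Fin n → ℂ => MvPolynomial.eval t P) ∧
    ∀ y ∈ f '' F, #{x : ℂ | x ∈ F ∧ f x = y} = Cardinal.continuum}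

/-- The family of Lebesgue-measurable subsets of `ℂ` of positive Lebesgue measure
(Lebesgue measurability = null-measurability with respect to the volume measure). -/
def LebFamily : Set (Set ℂ) :=
  {A | MeasureTheory.NullMeasurableSet A ∧ 0 < MeasureTheory.volume A}

/-- A set has the Baire property if it differs from some open set by a meager set. -/
def HasBaireProperty {α : Type} [TopologicalSpace α] (s : Set α) : Prop :=
  ∃ u : Set α, IsOpen u ∧ IsMeagre (symmDiff s u)

/-- The family of subsets of `ℂ` which have the Baire property and are non-meager. -/
def BaireFamily : Set (Set ℂ) :=
  {A | HasBaireProperty A ∧ ¬ IsMeagre A}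


open Cardinal Set Function Metric MeasureTheory
open scoped ENNReal NNReal symmDiff

noncomputable section SESProofSec
namespace SESProof

def Dom : Type := Σ F : Finset ℂ, {s : Finset ℂ // s ∈ F.powerset} → ℂ

def dzero : Dom := ⟨∅, fun _ => 0⟩

def cfilter (S : Set ℂ) (F : Finset ℂ) : Finset ℂ :=
  @Finset.filter _ (· ∈ S) (Classical.decPred _) F

lemma mem_cfilter {S : Set ℂ} {F : Finset ℂ} {z : ℂ} :
    z ∈ cfilter S F ↔ z ∈ F ∧ z ∈ S := @Finset.mem_filter _ _ (Classical.decPred _) _ _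

lemma cfilter_subset (S : Set ℂ) (F : Finset ℂ) : cfilter S F ⊆ F :=
  @Finset.filter_subset _ _ (Classical.decPred _) _

def phi (S : Set ℂ) (d : Dom) : ℂ :=
  d.2 ⟨cfilter S d.1, Finset.mem_powerset.2 (cfilter_subset _ _)⟩

lemma phi_dzero (S : Set ℂ) : phi S dzero = 0 := rfl

lemma mk_dom_le : #Dom ≤ 𝔠 := by
  have h1 : #Dom = Cardinal.sum (fun F : Finset ℂ => #({s : Finset ℂ // s ∈ F.powerset} → ℂ)) :=
    mk_sigma _
  have h2 : ∀ F : Finset ℂ, #({s : Finset ℂ // s ∈ F.powerset} → ℂ) ≤ 𝔠 := by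
    intro F
    have e : #({s : Finset ℂ // s ∈ F.powerset} → ℂ) = #ℂ ^ #{s : Finset ℂ // s ∈ F.powerset} :=
      (Cardinal.power_def _ _).symm
    rw [e, mk_complex, Cardinal.mk_fintype, Cardinal.power_natCast]
    exact Cardinal.power_nat_le aleph0_le_continuum
  calc #Dom ≤ Cardinal.sum (fun _ : Finset ℂ => 𝔠) := by rw [h1]; exact Cardinal.sum_le_sum _ _ h2
    _ = #(Finset ℂ) * 𝔠 := Cardinal.sum_const' _ _
    _ = 𝔠 * 𝔠 := by rw [mk_finset_of_infinite, mk_complex]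
    _ = 𝔠 := Cardinal.mul_eq_self aleph0_le_continuum

lemma mk_dom_ge : 𝔠 ≤ #Dom := by
  rw [← mk_complex]
  exact Cardinal.mk_le_of_injective (f := fun z => (⟨{z}, fun _ => 0⟩ : Dom))
    (by intro a b h; simpa using congrArg Sigma.fst h)

lemma phi_indep {n : ℕ} (S : Fin n → Set ℂ) (hS : Function.Injective S) (y : Fin n → ℂ) :
    ∃ d : Dom, ∀ i, phi (S i) d = y i := by
  have hsep : ∀ i j : Fin n, i ≠ j → ∃ z : ℂ, z ∈ symmDiff (S i) (S j) := by
    intro i j hij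
    exact Set.symmDiff_nonempty.2 (fun h => hij (hS h))
  choose zf hzf using fun (p : {p : Fin n × Fin n // p.1 ≠ p.2}) => hsep p.1.1 p.1.2 p.2
  set F : Finset ℂ := Finset.univ.image zf with hF
  have hfilter_ne : ∀ i j : Fin n, i ≠ j → cfilter (S i) F ≠ cfilter (S j) F := by
    intro i j hij
    have hz := hzf ⟨(i, j), hij⟩
    set z := zf ⟨(i, j), hij⟩ with hzdef
    have hzF : z ∈ F := Finset.mem_image_of_mem _ (Finset.mem_univ _)
    rw [Set.mem_symmDiff] at hz
    intro heq
    rcases hz with ⟨h1, h2⟩ | ⟨h1, h2⟩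
    · have : z ∈ cfilter (S i) F := mem_cfilter.2 ⟨hzF, h1⟩
      rw [heq] at this
      exact h2 (mem_cfilter.1 this).2
    · have : z ∈ cfilter (S j) F := mem_cfilter.2 ⟨hzF, h1⟩
      rw [← heq] at this
      exact h2 (mem_cfilter.1 this).2
  have hinj : Function.Injective (fun i => cfilter (S i) F) := by
    intro i j h
    by_contra hij
    exact hfilter_ne i j hij h
  classical
  refine ⟨⟨F, fun s => if h : ∃ i, (s : Finset ℂ) = cfilter (S i) F then y h.choose else 0⟩, ?_⟩
  intro i
  show (if h : ∃ i', cfilter (S i) F = cfilter (S i') F then y h.choose else 0) = y i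
  have hex : ∃ i', cfilter (S i) F = cfilter (S i') F := ⟨i, rfl⟩
  rw [dif_pos hex]
  congr 1
  exact hinj hex.choose_spec.symm


def qseq : ℕ → ℂ := TopologicalSpace.denseSeq ℂ

lemma dense_qseq : DenseRange qseq := TopologicalSpace.denseRange_denseSeq ℂ

def pr : ℕ ≃ ℕ × ℕ := (Denumerable.eqv (ℕ × ℕ)).symm

def Bll (i : ℕ) : Set ℂ := ball (qseq (pr i).1) (1 / ((pr i).2 + 1))

lemma Bll_isOpen (i : ℕ) : IsOpen (Bll i) := isOpen_ball

lemma Bll_ball (i : ℕ) : ∃ (x : ℂ) (r : ℝ), 0 < r ∧ Bll i = ball x r :=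
  ⟨_, _, by positivity, rfl⟩

lemma exists_Bll {s : Set ℂ} (hs : IsOpen s) {x : ℂ} (hx : x ∈ s) :
    ∃ i, x ∈ Bll i ∧ Bll i ⊆ s := by
  obtain ⟨r, hr, hball⟩ := Metric.isOpen_iff.1 hs x hx
  obtain ⟨n, hn⟩ := exists_nat_one_div_lt (by linarith : (0:ℝ) < r / 2)
  obtain ⟨m, hm⟩ := Metric.denseRange_iff.1 dense_qseq x (1 / (n + 1)) (by positivity)
  refine ⟨pr.symm (m, n), ?_, ?_⟩
  · simp only [Bll, Equiv.apply_symm_apply]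
    exact mem_ball.2 hm
  · simp only [Bll, Equiv.apply_symm_apply]
    intro z hz
    apply hball
    rw [mem_ball] at hz ⊢
    calc dist z x ≤ dist z (qseq m) + dist x (qseq m) := dist_triangle_right _ _ _
      _ < 1 / (n + 1) + 1 / (n + 1) := add_lt_add hz hm
      _ ≤ r / 2 + r / 2 := by have := hn.le; linarith
      _ = r := by ring

lemma isOpen_eq_biUnion {s : Set ℂ} (hs : IsOpen s) :
    s = ⋃ i ∈ {i : ℕ | Bll i ⊆ s}, Bll i := by
  apply Subset.antisymm
  · intro x hx
    obtain ⟨i, hxi, hi⟩ := exists_Bll hs hx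
    exact mem_biUnion hi hxi
  · exact iUnion₂_subset fun i hi => hi

def Oset (w : Set ℕ) : Set ℂ := ⋃ i ∈ w, Bll i

lemma Oset_isOpen (w : Set ℕ) : IsOpen (Oset w) :=
  isOpen_biUnion fun i _ => Bll_isOpen i

open scoped Classical in
def Gset (w : Set ℕ) : Set ℂ :=
  if Dense (Oset w) then Oset w else univ

lemma Gset_isOpen (w : Set ℕ) : IsOpen (Gset w) := by
  rw [Gset]; split
  · exact Oset_isOpen w
  · exact isOpen_univ

lemma Gset_dense (w : Set ℕ) : Dense (Gset w) := by
  rw [Gset]; split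
  · assumption
  · exact dense_univ

lemma Gset_eq {s : Set ℂ} (ho : IsOpen s) (hd : Dense s) : Gset {i : ℕ | Bll i ⊆ s} = s := by
  have h : Oset {i : ℕ | Bll i ⊆ s} = s := (isOpen_eq_biUnion ho).symm
  rw [Gset, h, if_pos hd]

/-- The dense open set of small measure. -/
def Uset : Set ℂ := ⋃ k, ball (qseq k) ((1/2 : ℝ)^k)

lemma Uset_isOpen : IsOpen Uset := isOpen_iUnion fun _ => isOpen_ball

lemma Uset_dense : Dense Uset := by
  have : range qseq ⊆ Uset := by
    rintro _ ⟨k, rfl⟩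
    exact mem_iUnion.2 ⟨k, mem_ball_self (by positivity)⟩
  exact dense_qseq.mono this

lemma volume_compl_Uset_pos : 0 < volume (ball (0:ℂ) 2 \ Uset) := by
  rw [pos_iff_ne_zero]
  intro h0
  have hU : volume Uset ≤ ∑' k : ℕ, volume (ball (qseq k) ((1/2 : ℝ)^k)) :=
    measure_iUnion_le _
  have hball : ∀ k : ℕ, volume (ball (qseq k) ((1/2 : ℝ)^k))
      = ((4 : ℝ≥0∞)⁻¹)^k * NNReal.pi := by
    intro k
    rw [Complex.volume_ball]
    congr 1
    rw [ENNReal.ofReal_pow (by norm_num), ← pow_mul]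
    rw [show ENNReal.ofReal (1/2 : ℝ) = (2 : ℝ≥0∞)⁻¹ by
      rw [ENNReal.ofReal_div_of_pos (by norm_num)]
      norm_num]
    rw [show ((4 : ℝ≥0∞))⁻¹ = ((2 : ℝ≥0∞)⁻¹)^2 by
      rw [← ENNReal.inv_pow]; norm_num]
    rw [← pow_mul, mul_comm 2 k]
  have hsum : (∑' k : ℕ, volume (ball (qseq k) ((1/2 : ℝ)^k)))
      = (1 - 4⁻¹)⁻¹ * NNReal.pi := by
    simp_rw [hball]
    rw [ENNReal.tsum_mul_right, ENNReal.tsum_geometric]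
  have hUle : volume Uset ≤ 2 * NNReal.pi := by
    refine hU.trans ?_
    rw [hsum]
    gcongr
    rw [ENNReal.inv_le_iff_inv_le]
    have h41 : (4:ℝ≥0∞) * 4⁻¹ = 1 := ENNReal.mul_inv_cancel (by norm_num) (by norm_num)
    have hsub : (1 : ℝ≥0∞) - 4⁻¹ = 3 * 4⁻¹ := by
      apply ENNReal.sub_eq_of_eq_add (by norm_num)
      rw [← add_one_mul]
      norm_num [h41]
    rw [hsub]
    calc (2 : ℝ≥0∞)⁻¹ = 2 * 4⁻¹ := by
          rw [show (4 : ℝ≥0∞) = 2 * 2 by norm_num, ENNReal.mul_inv (by norm_num) (by norm_num)]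
          rw [← mul_assoc, ENNReal.mul_inv_cancel (by norm_num) (by norm_num), one_mul]
      _ ≤ 3 * 4⁻¹ := by gcongr; norm_num
  have hcover : volume (ball (0:ℂ) 2) ≤ volume (ball (0:ℂ) 2 \ Uset) + volume Uset := by
    refine le_trans (measure_mono ?_) (measure_union_le _ _)
    intro z hz
    by_cases hzU : z ∈ Uset
    · exact Or.inr hzU
    · exact Or.inl ⟨hz, hzU⟩
  rw [h0, zero_add, Complex.volume_ball] at hcover
  have hpi0 : (NNReal.pi : ℝ≥0∞) ≠ 0 := by
    simp [NNReal.pi_ne_zero]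
  have hpit : (NNReal.pi : ℝ≥0∞) ≠ ⊤ := ENNReal.coe_ne_top
  have h4 : (ENNReal.ofReal (2:ℝ))^2 = (4 : ℝ≥0∞) := by
    rw [ENNReal.ofReal_ofNat]
    norm_num
  rw [h4] at hcover
  have hfin := hcover.trans hUle
  rw [ENNReal.mul_le_mul_iff_left hpi0 hpit] at hfin
  norm_num at hfin

lemma card_ball_iInter (x₀ : ℂ) {r : ℝ} (hr : 0 < r) (T : ℕ → Set ℂ)
    (hTo : ∀ n, IsOpen (T n)) (hTd : ∀ n, Dense (T n)) :
    𝔠 ≤ #(ball x₀ r ∩ ⋂ n, T n : Set ℂ) := by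
  set C : Set ℂ := ⋂ n, T n with hC
  set X : Set ℂ := ball x₀ r ∩ C with hX
  have key : ∀ t : ℝ, t ∈ Ioo (0:ℝ) (r/2) → ∃ p : ℂ, p ∈ X ∧ p - (t:ℂ) ∈ X := by
    intro t ht
    set f : ℕ ⊕ ℕ → Set ℂ := fun n => Sum.elim T (fun n => (fun z : ℂ => z - (t:ℂ)) ⁻¹' T n) n
      with hf
    have hsub : (fun z : ℂ => z - (t:ℂ)) = fun z : ℂ => z + (-(t:ℂ)) := by
      funext z; ring
    have hfo : ∀ n, IsOpen (f n) := by
      rintro (n | n)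
      · exact hTo n
      · exact (hTo n).preimage (by continuity)
    have hfd : ∀ n, Dense (f n) := by
      rintro (n | n)
      · exact hTd n
      · show Dense ((fun z : ℂ => z - (t:ℂ)) ⁻¹' T n)
        rw [hsub]
        exact (hTd n).preimage (isOpenMap_add_right _)
    have hdense : Dense (⋂ n, f n) := dense_iInter_of_isOpen hfo hfd
    obtain ⟨p, hp1, hp2⟩ := hdense.inter_open_nonempty (ball x₀ (r/2)) isOpen_ball
      (nonempty_ball.2 (by linarith [ht.1, ht.2]))
    have hpC : p ∈ C := by
      rw [hC]
      exact mem_iInter.2 fun n => (mem_iInter.1 hp2 (Sum.inl n))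
    have hptC : p - (t:ℂ) ∈ C := by
      rw [hC]
      exact mem_iInter.2 fun n => (mem_iInter.1 hp2 (Sum.inr n))
    have hpball : p ∈ ball x₀ r := ball_subset_ball (by linarith) hp1
    have hptball : p - (t:ℂ) ∈ ball x₀ r := by
      rw [mem_ball] at hp1 ⊢
      calc dist (p - (t:ℂ)) x₀ ≤ dist (p - (t:ℂ)) p + dist p x₀ := dist_triangle _ _ _
        _ < dist (p - (t:ℂ)) p + r/2 := by linarith
        _ = ‖(t:ℂ)‖ + r/2 := by rw [dist_eq_norm, sub_sub_cancel_left, norm_neg]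
        _ = |t| + r/2 := by rw [Complex.norm_real]; rfl
        _ = t + r/2 := by rw [abs_of_pos ht.1]
        _ < r/2 + r/2 := by linarith [ht.2]
        _ = r := by ring
    exact ⟨p, ⟨hpball, hpC⟩, ⟨hptball, hptC⟩⟩
  choose! pf hpf1 hpf2 using key
  have hrr : (0:ℝ) < r/2 := by linarith
  set emb : Ioo (0:ℝ) (r/2) → X × X := fun t =>
    (⟨pf t, hpf1 t t.2⟩, ⟨pf t - (t:ℂ), hpf2 t t.2⟩) with hemb
  have hinj : Function.Injective emb := by
    intro a b hab
    have h1 : pf a = pf b := congrArg (fun q => (q.1 : ℂ)) hab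
    have h2 : pf a - (a:ℂ) = pf b - (b:ℂ) := congrArg (fun q => (q.2 : ℂ)) hab
    have : ((a:ℝ):ℂ) = ((b:ℝ):ℂ) := by
      rw [h1] at h2
      exact sub_right_inj.mp h2
    exact Subtype.ext (by exact_mod_cast this)
  have hcard : 𝔠 ≤ #(X × X : Type) := by
    calc 𝔠 = #(Ioo (0:ℝ) (r/2)) := (Cardinal.mk_Ioo_real hrr).symm
      _ ≤ #(X × X : Type) := Cardinal.mk_le_of_injective hinj
  have hXX : #(X × X : Type) = #X * #X := by
    simp [Cardinal.mk_prod]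
  rw [hXX] at hcard
  rcases lt_or_ge #X ℵ₀ with hfin | hinf
  · exfalso
    have : #X * #X < ℵ₀ := Cardinal.mul_lt_aleph0 hfin hfin
    exact absurd (hcard.trans_lt this) (by simp [not_lt, aleph0_le_continuum])
  · rwa [Cardinal.mul_eq_self hinf] at hcard


def Req : Type := ℕ × (ℕ → Set ℕ) × Dom

def Tfam (w : ℕ → Set ℕ) : ℕ → Set ℂ
  | 0 => Uset
  | (n+1) => Gset (w n)

lemma Tfam_isOpen (w : ℕ → Set ℕ) (n : ℕ) : IsOpen (Tfam w n) := by
  cases n with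
  | zero => exact Uset_isOpen
  | succ n => exact Gset_isOpen (w n)

lemma Tfam_dense (w : ℕ → Set ℕ) (n : ℕ) : Dense (Tfam w n) := by
  cases n with
  | zero => exact Uset_dense
  | succ n => exact Gset_dense (w n)

def Sreq (q : Req) : Set ℂ := Bll q.1 ∩ ⋂ n, Tfam q.2.1 n

lemma card_Sreq (q : Req) : 𝔠 ≤ #(Sreq q) := by
  obtain ⟨x, r, hr, hB⟩ := Bll_ball q.1
  rw [Sreq, hB]
  exact card_ball_iInter x hr _ (Tfam_isOpen _) (Tfam_dense _)

lemma Sreq_subset_U (q : Req) : Sreq q ⊆ Uset := fun z hz => by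
  have := hz.2
  rw [mem_iInter] at this
  exact this 0

lemma mk_req_prod : #(Req × ℂ) = 𝔠 := by
  apply le_antisymm
  · have h1 : #Req = #ℕ * (#(ℕ → Set ℕ) * #Dom) := by
      rw [Req, mk_prod, mk_prod]
      simp
    have h2 : #(ℕ → Set ℕ) = 𝔠 := by
      rw [← Cardinal.power_def, mk_set, mk_nat, ← Cardinal.power_mul, aleph0_mul_aleph0,
        two_power_aleph0]
    have h3 : #Req ≤ 𝔠 := by
      rw [h1, h2]
      calc (#ℕ) * (𝔠 * #Dom) ≤ 𝔠 * (𝔠 * 𝔠) := by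
            apply mul_le_mul' (by rw [mk_nat]; exact aleph0_le_continuum)
            exact mul_le_mul' le_rfl mk_dom_le
        _ = 𝔠 := by rw [Cardinal.mul_eq_self aleph0_le_continuum,
            Cardinal.mul_eq_self aleph0_le_continuum]
    calc #(Req × ℂ) = #Req * #ℂ := by rw [mk_prod]; simp
      _ ≤ 𝔠 * 𝔠 := mul_le_mul' h3 (le_of_eq mk_complex)
      _ = 𝔠 := Cardinal.mul_eq_self aleph0_le_continuum
  · rw [← mk_complex]
    exact Cardinal.mk_le_of_injective
      (f := fun z : ℂ => (((0, fun _ => ∅, dzero) : Req), z))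
      (fun a b h => congrArg Prod.snd h)

def iota : Type := (Cardinal.continuum.ord).ToType

instance : LinearOrder iota := by unfold iota; infer_instance
instance : WellFoundedLT iota := by unfold iota; infer_instance

lemma mk_iota : #iota = 𝔠 := by
  rw [iota, Cardinal.mk_toType, Cardinal.card_ord]

lemma mk_Iio_iota (x : iota) : #{y : iota // y < x} < 𝔠 :=
  Cardinal.mk_Iio_ord_toType x

def eqv : iota ≃ Req × ℂ :=
  Classical.choice (Cardinal.eq.1 (by rw [mk_iota, mk_req_prod]))

lemma exists_point (x : iota) (prev : ∀ y : iota, y < x → ℂ) :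
    ∃ z, z ∈ Sreq (eqv x).1 ∧ ∀ (y) (h : y < x), prev y h ≠ z := by
  by_contra hcon
  push_neg at hcon
  have hsub : Sreq (eqv x).1 ⊆ range (fun p : {y : iota // y < x} => prev p.1 p.2) := by
    intro z hz
    obtain ⟨y, hy, hyz⟩ := hcon z hz
    exact ⟨⟨y, hy⟩, hyz⟩
  have h1 : #(Sreq (eqv x).1) ≤ #{y : iota // y < x} :=
    (Cardinal.mk_le_mk_of_subset hsub).trans (Cardinal.mk_range_le)
  exact absurd ((card_Sreq _).trans h1) (not_le.2 (mk_Iio_iota x))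

def pick : iota → ℂ :=
  WellFoundedLT.fix (fun x prev => (exists_point x prev).choose)

lemma pick_spec (x : iota) :
    pick x ∈ Sreq (eqv x).1 ∧ ∀ (y) (_ : y < x), pick y ≠ pick x := by
  have h := WellFoundedLT.fix_eq (fun x prev => (exists_point x prev).choose) x
  rw [show pick x = (exists_point x (fun y _ => pick y)).choose from h]
  exact (exists_point x (fun y _ => pick y)).choose_spec

lemma pick_mem (x : iota) : pick x ∈ Sreq (eqv x).1 := (pick_spec x).1

lemma pick_injective : Function.Injective pick := by
  intro a b hab
  rcases lt_trichotomy a b with h | h | h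
  · exact absurd hab ((pick_spec b).2 a h)
  · exact h
  · exact absurd hab.symm ((pick_spec a).2 b h)

open scoped Classical in
def hmap (z : ℂ) : Dom :=
  if hz : ∃ x : iota, pick x = z then (eqv hz.choose).1.2.2 else dzero

lemma hmap_pick (x : iota) : hmap (pick x) = (eqv x).1.2.2 := by
  have hz : ∃ y : iota, pick y = pick x := ⟨x, rfl⟩
  rw [hmap, dif_pos hz, pick_injective hz.choose_spec]

lemma hmap_of_not_mem_U {z : ℂ} (hz : z ∉ Uset) : hmap z = dzero := by
  rw [hmap]
  split
  · next hex =>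
      exfalso
      exact hz (hex.choose_spec ▸ Sreq_subset_U _ (pick_mem hex.choose))
  · rfl

lemma fiber_card (A : Set ℂ) (hBP : HasBaireProperty A) (hnm : ¬ IsMeagre A) (d : Dom) :
    𝔠 ≤ #{z : ℂ | z ∈ A ∧ hmap z = d} := by
  obtain ⟨u, huo, husd⟩ := hBP
  -- u is nonempty
  have hune : u.Nonempty := by
    rcases eq_empty_or_nonempty u with rfl | h
    · rw [show (∅ : Set ℂ) = (⊥ : Set ℂ) from rfl, symmDiff_bot] at husd
      exact (hnm husd).elim
    · exact h
  -- the meager set K := u \ A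
  have hK : IsMeagre (u \ A) :=
    husd.mono (fun z hz => Set.mem_symmDiff.2 (Or.inr ⟨hz.1, hz.2⟩))
  have hKc : (u \ A)ᶜ ∈ residual ℂ := hK
  rw [mem_residual_iff] at hKc
  obtain ⟨S, hSo, hSd, hScnt, hSsub⟩ := hKc
  -- enumerate `insert Set.univ S`
  obtain ⟨fseq, hfseq⟩ := (hScnt.insert Set.univ).exists_eq_range (insert_nonempty _ _)
  have hfmem : ∀ n, fseq n ∈ insert Set.univ S := fun n => hfseq ▸ mem_range_self n
  have hfo : ∀ n, IsOpen (fseq n) := by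
    intro n
    rcases hfmem n with h | h
    · rw [h]; exact isOpen_univ
    · exact hSo _ h
  have hfd : ∀ n, Dense (fseq n) := by
    intro n
    rcases hfmem n with h | h
    · rw [h]; exact dense_univ
    · exact hSd _ h
  -- codes
  set w : ℕ → Set ℕ := fun n => {i | Bll i ⊆ fseq n} with hw
  have hGw : ∀ n, Gset (w n) = fseq n := fun n => Gset_eq (hfo n) (hfd n)
  -- a basic ball inside u
  obtain ⟨x₀, hx₀⟩ := hune
  obtain ⟨j, _, hjsub⟩ := exists_Bll huo hx₀
  set req : Req := (j, w, d) with hreq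
  -- points
  have hmem : ∀ c : ℂ, pick (eqv.symm (req, c)) ∈ {z : ℂ | z ∈ A ∧ hmap z = d} := by
    intro c
    set x := eqv.symm (req, c) with hx
    have h1 : pick x ∈ Sreq req := by
      have := pick_mem x
      rwa [hx, Equiv.apply_symm_apply] at this
    have h2 : hmap (pick x) = d := by
      rw [hmap_pick, hx, Equiv.apply_symm_apply]
    have hBj : pick x ∈ Bll j := h1.1
    have hIn : pick x ∈ ⋂ n, Tfam w n := h1.2
    have hinS : pick x ∈ ⋂₀ S := by
      intro s hs
      have : s ∈ range fseq := hfseq ▸ mem_insert_of_mem _ hs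
      obtain ⟨n, rfl⟩ := this
      have := mem_iInter.1 hIn (n + 1)
      rwa [Tfam, hGw n] at this
    have : pick x ∉ u \ A := fun hmem => (hSsub hinS) hmem
    have hA : pick x ∈ A := by
      by_contra hnA
      exact this ⟨hjsub hBj, hnA⟩
    exact ⟨hA, h2⟩
  have hinj : Function.Injective (fun c : ℂ => pick (eqv.symm (req, c))) := by
    intro a b hab
    have := pick_injective hab
    have := eqv.symm.injective this
    exact (Prod.ext_iff.1 this).2
  rw [← mk_complex]
  exact Cardinal.mk_le_of_injective
    (f := fun c : ℂ => (⟨pick (eqv.symm (req, c)), hmem c⟩ : {z : ℂ | z ∈ A ∧ hmap z = d}))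
    (fun a b hab => hinj (congrArg Subtype.val hab))

lemma univ_baire : HasBaireProperty (Set.univ : Set ℂ) ∧ ¬ IsMeagre (Set.univ : Set ℂ) := by
  constructor
  · exact ⟨Set.univ, isOpen_univ, by rw [symmDiff_self]; exact IsMeagre.empty⟩
  · intro h
    have : Dense ((Set.univ : Set ℂ)ᶜ) := dense_of_mem_residual h
    rw [compl_univ] at this
    exact (this.nonempty).ne_empty rfl

lemma exists_hmap_eq (d : Dom) : ∃ z : ℂ, hmap z = d := by
  have hcard := fiber_card Set.univ univ_baire.1 univ_baire.2 d
  have hne : {z : ℂ | z ∈ Set.univ ∧ hmap z = d}.Nonempty := by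
    rw [← nonempty_coe_sort]
    refine Cardinal.mk_ne_zero_iff.1 ?_
    intro h0
    rw [h0] at hcard
    exact absurd hcard (by simp [continuum_ne_zero])
  obtain ⟨z, _, hz⟩ := hne
  exact ⟨z, hz⟩


def gen (S : Set ℂ) : ℂ → ℂ := fun z => phi S (hmap z)

lemma set_nonempty_of_continuum_le {s : Set ℂ} (h : 𝔠 ≤ #s) : s.Nonempty := by
  rw [← nonempty_coe_sort]
  refine Cardinal.mk_ne_zero_iff.1 fun h0 => ?_
  rw [h0] at h
  exact absurd h (by simp [continuum_ne_zero])

lemma aeval_pi_apply {n : ℕ} (P : MvPolynomial (Fin n) ℂ) (f : Fin n → (ℂ → ℂ)) (z : ℂ) :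
    (MvPolynomial.aeval f P : ℂ → ℂ) z = MvPolynomial.eval (fun i => f i z) P := by
  have h := MvPolynomial.comp_aeval_apply (R := ℂ) (f := f)
    (φ := Pi.evalAlgHom ℂ (fun _ : ℂ => ℂ) z) P
  have h2 : (Pi.evalAlgHom ℂ (fun _ : ℂ => ℂ) z) (MvPolynomial.aeval f P)
      = (MvPolynomial.aeval f P : ℂ → ℂ) z := rfl
  rw [h2] at h
  rw [h]
  rw [MvPolynomial.aeval_def, Algebra.algebraMap_self]
  rfl

lemma gen_main {n : ℕ} (hn : 0 < n) (P : MvPolynomial (Fin n) ℂ) (hP : P ≠ 0)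
    (hc : MvPolynomial.constantCoeff P = 0) (ξ : Fin n → Set ℂ) (hξ : Function.Injective ξ) :
    (MvPolynomial.aeval (fun i => gen (ξ i)) P ≠ 0) ∧
    MvPolynomial.aeval (fun i => gen (ξ i)) P ∈ SESC BaireFamily \ SESC LebFamily := by
  set g : ℂ → ℂ := MvPolynomial.aeval (fun i => gen (ξ i)) P with hgdef
  have hg : ∀ z : ℂ, g z = MvPolynomial.eval (fun i => phi (ξ i) (hmap z)) P := by
    intro z
    rw [hgdef, aeval_pi_apply]
    rfl
  -- a nonzero value
  have hnz : ∃ t : Fin n → ℂ, MvPolynomial.eval t P ≠ 0 := by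
    by_contra hcon
    push_neg at hcon
    apply hP
    apply MvPolynomial.funext (q := 0)
    intro t
    rw [map_zero]
    exact hcon t
  obtain ⟨t₀, ht₀⟩ := hnz
  obtain ⟨d₀, hd₀⟩ := phi_indep ξ hξ t₀
  obtain ⟨z₀, hz₀⟩ := exists_hmap_eq d₀
  have hgz₀ : g z₀ = MvPolynomial.eval t₀ P := by
    rw [hg, hz₀, show (fun i => phi (ξ i) d₀) = t₀ from funext hd₀]
  have hg0 : ∀ z : ℂ, z ∉ Uset → g z = 0 := by
    intro z hz
    rw [hg, hmap_of_not_mem_U hz]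
    have : (fun i => phi (ξ i) dzero) = (0 : Fin n → ℂ) := by
      funext i; exact phi_dzero _
    rw [this, MvPolynomial.eval_zero, hc]
  refine ⟨?_, ?_, ?_⟩
  · -- nonzero
    intro h0
    apply ht₀
    rw [← hgz₀, h0]
    rfl
  · -- in SESC Baire
    intro F hF
    obtain ⟨hBP, hnm⟩ := hF
    constructor
    · refine ⟨n, hn, P, ?_⟩
      apply Subset.antisymm
      · rintro _ ⟨z, _, rfl⟩
        exact ⟨fun i => phi (ξ i) (hmap z), (hg z).symm⟩
      · rintro _ ⟨t, rfl⟩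
        obtain ⟨d, hd⟩ := phi_indep ξ hξ t
        obtain ⟨z, hzF, hzd⟩ := set_nonempty_of_continuum_le (fiber_card F hBP hnm d)
        refine ⟨z, hzF, ?_⟩
        rw [hg, hzd, show (fun i => phi (ξ i) d) = t from funext hd]
    · rintro y ⟨z₁, hz₁F, rfl⟩
      apply le_antisymm
      · exact (Cardinal.mk_set_le _).trans (le_of_eq mk_complex)
      · obtain ⟨d, hd⟩ := phi_indep ξ hξ (fun i => phi (ξ i) (hmap z₁))
        refine (fiber_card F hBP hnm d).trans (Cardinal.mk_le_mk_of_subset ?_)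
        rintro z ⟨hzF, hzd⟩
        refine ⟨hzF, ?_⟩
        rw [hg, hzd, hg, show (fun i => phi (ξ i) d) = (fun i => phi (ξ i) (hmap z₁)) from funext hd]
  · -- not in SESC Leb
    intro hmem
    set F : Set ℂ := Usetᶜ ∪ {z₀} with hFdef
    have hFleb : F ∈ LebFamily := by
      constructor
      · exact ((Uset_isOpen.isClosed_compl.measurableSet).union
          (measurableSet_singleton z₀)).nullMeasurableSet
      · refine lt_of_lt_of_le volume_compl_Uset_pos (measure_mono ?_)
        intro z hz
        exact Or.inl hz.2
    obtain ⟨-, hfib⟩ := hmem F hFleb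
    have hz₀F : z₀ ∈ F := Or.inr rfl
    have hyim : g z₀ ∈ g '' F := ⟨z₀, hz₀F, rfl⟩
    have h1 := hfib (g z₀) hyim
    have heq : {x : ℂ | x ∈ F ∧ g x = g z₀} = {z₀} := by
      apply Subset.antisymm
      · rintro x ⟨hxF, hxg⟩
        rcases hxF with hxU | hxz
        · exfalso
          rw [hg0 x hxU] at hxg
          rw [hgz₀] at hxg
          exact ht₀ hxg.symm
        · exact hxz
      · rintro x rfl
        exact ⟨hz₀F, rfl⟩
    rw [heq, Cardinal.mk_singleton] at h1
    exact absurd h1.symm (nat_lt_continuum 1).ne'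


lemma gen_injective : Function.Injective gen := by
  intro S S' h
  by_contra hne
  set Sf : Fin 2 → Set ℂ := fun i => if i = 0 then S else S' with hSf
  have hinj : Function.Injective Sf := by
    intro a b hab
    fin_cases a <;> fin_cases b
    · rfl
    · exact absurd (by simpa [hSf] using hab) hne
    · exact absurd (((by simpa [hSf] using hab) : S' = S).symm) hne
    · rfl
  obtain ⟨d, hd⟩ := phi_indep Sf hinj (fun i => if i = 0 then 0 else 1)
  obtain ⟨z, hz⟩ := exists_hmap_eq d
  have h0 := hd 0
  have h1 := hd 1
  simp only [hSf, if_pos rfl] at h0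
  have h1' : phi S' d = 1 := by simpa [hSf] using h1
  have hcf : gen S z = gen S' z := congrFun h z
  rw [gen, gen, hz, h0, h1'] at hcf
  exact zero_ne_one hcf


end SESProof
end SESProofSec

/-- `SES(ℂ, 𝓕_Baire) \ SES(ℂ, 𝓕_Leb)` is strongly `2 ^ 𝔠`-algebrable
in `ℂ^ℂ`. -/
theorem stmt12 :
    StronglyAlgebrable ℂ (SESC BaireFamily \ SESC LebFamily)
      ((2 : Cardinal) ^ Cardinal.continuum) := by
  classical
  refine ⟨Set ℂ, SESProof.gen, ?_, SESProof.gen_injective, ?_, ?_⟩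
  · rw [Cardinal.mk_set, mk_complex]
  · intro S
    have h := SESProof.gen_main (n := 1) one_pos (MvPolynomial.X (0 : Fin 1))
      (MvPolynomial.X_ne_zero (R := ℂ) (0 : Fin 1)) (MvPolynomial.constantCoeff_X (R := ℂ) (0 : Fin 1))
      (fun _ => S) (Function.injective_of_subsingleton _)
    have he : (MvPolynomial.aeval (fun i : Fin 1 => SESProof.gen ((fun _ : Fin 1 => S) i))
        (MvPolynomial.X (0 : Fin 1))) = SESProof.gen S :=
      MvPolynomial.aeval_X (R := ℂ) (fun i : Fin 1 => SESProof.gen ((fun _ : Fin 1 => S) i)) 0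
    rw [he] at h
    exact h.2
  · intro n hn P hP hc ξ hξ
    exact SESProof.gen_main hn P hP hc ξ hξ
end

section
/- Let F ⊆ ℝ be a Borel set that is 𝔠-dense in itself, let x ∈ F, and let I be an open neighbourhood of x. Then there exists a nonempty perfect set H ⊆ F ∩ I with x ∈ H. -/
open Cardinal

/-- `A ⊆ ℝ` is `𝔠`-dense in itself: `A` is nonempty and for every open interval `I`, either
`A ∩ I = ∅` or `A ∩ I` has cardinality `𝔠`. -/
def CDenseInItself (A : Set ℝ) : Prop :=
  A.Nonempty ∧ ∀ a b : ℝ, a < b →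
    A ∩ Set.Ioo a b = ∅ ∨ #(A ∩ Set.Ioo a b : Set ℝ) = Cardinal.continuum

open Filter Topology in
/-- Any uncountable Borel subset of `ℝ` contains a nonempty perfect set. -/
lemma exists_perfect_of_measurableSet {s : Set ℝ} (hs : MeasurableSet s)
    (hunc : ¬ s.Countable) : ∃ D : Set ℝ, Perfect D ∧ D.Nonempty ∧ D ⊆ s := by
  have key : ∃ f : (ℕ → Bool) → ℝ, Set.range f ⊆ s ∧ Continuous f ∧ Function.Injective f := by
    obtain ⟨t', ht'le, ht'polish, ht'closed, -⟩ :=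
      MeasureTheory.isClopenable_iff_measurableSet.2 hs
    obtain ⟨f, hrange, hcont, hinj⟩ :=
      @IsClosed.exists_nat_bool_injection_of_not_countable ℝ t' ht'polish s ht'closed hunc
    exact ⟨f, hrange, continuous_le_rng ht'le hcont, hinj⟩
  obtain ⟨f, hrange, hcont2, hinj⟩ := key
  have hCE := hcont2.isClosedEmbedding hinj
  refine ⟨Set.range f, ⟨hCE.isClosed_range, ?_⟩, Set.range_nonempty f, hrange⟩
  rw [preperfect_iff_nhds]
  rintro y ⟨z, rfl⟩ U hU
  have hU' : f ⁻¹' U ∈ 𝓝 z := hcont2.continuousAt.preimage_mem_nhds hU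
  have gtend : Tendsto (fun n : ℕ => Function.update z n (!z n)) atTop (𝓝 z) := by
    rw [tendsto_pi_nhds]
    intro k
    apply tendsto_const_nhds.congr'
    filter_upwards [eventually_gt_atTop k] with n hn
    simp [Function.update_of_ne (by omega : k ≠ n)]
  obtain ⟨n, hn⟩ := (gtend.eventually_mem hU').exists
  refine ⟨f (Function.update z n (!z n)), ⟨hn, Set.mem_range_self _⟩, fun h => ?_⟩
  have := congrFun (hinj h) n
  simp at this

/-- If `F ⊆ ℝ` is a Borel set which is `𝔠`-dense in itself, `x ∈ F`, and `I`
is an open neighbourhood of `x`, then there is a nonempty perfect set `H ⊆ F ∩ I`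
containing `x`. -/
theorem stmt15 (F : Set ℝ) (hB : MeasurableSet F) (hF : CDenseInItself F)
    (x : ℝ) (hx : x ∈ F) (I : Set ℝ) (hI : IsOpen I) (hxI : x ∈ I) :
    ∃ H : Set ℝ, H ⊆ F ∩ I ∧ Perfect H ∧ H.Nonempty ∧ x ∈ H := by
  obtain ⟨a, b, hxab, habI⟩ := mem_nhds_iff_exists_Ioo_subset.mp (hI.mem_nhds hxI)
  set δ : ℕ → ℝ := fun n => min (1 / (n + 1)) (min (x - a) (b - x)) with hδ
  have hδpos : ∀ n, 0 < δ n := by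
    intro n
    refine lt_min (by positivity) (lt_min ?_ ?_)
    · linarith [hxab.1]
    · linarith [hxab.2]
  have hδsmall : ∀ n, δ n ≤ 1 / (n + 1) := fun n => min_le_left _ _
  have hδsub : ∀ n, Set.Ioo (x - δ n) (x + δ n) ⊆ Set.Ioo a b := by
    intro n y hy
    have h1 : δ n ≤ x - a := (min_le_right _ _).trans (min_le_left _ _)
    have h2 : δ n ≤ b - x := (min_le_right _ _).trans (min_le_right _ _)
    exact ⟨by linarith [hy.1], by linarith [hy.2]⟩
  have hP : ∀ n : ℕ, ∃ P : Set ℝ,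
      Perfect P ∧ P.Nonempty ∧ P ⊆ F ∩ Set.Ioo (x - δ n) (x + δ n) := by
    intro n
    have hxmem : x ∈ F ∩ Set.Ioo (x - δ n) (x + δ n) :=
      ⟨hx, by constructor <;> linarith [hδpos n]⟩
    have hcard : #(F ∩ Set.Ioo (x - δ n) (x + δ n) : Set ℝ) = Cardinal.continuum := by
      rcases hF.2 (x - δ n) (x + δ n) (by linarith [hδpos n]) with h | h
      · exact absurd (h ▸ hxmem) (Set.notMem_empty x)
      · exact h
    have hunc : ¬ (F ∩ Set.Ioo (x - δ n) (x + δ n)).Countable := by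
      intro h
      have := h.le_aleph0
      rw [hcard] at this
      exact absurd (this.trans_lt Cardinal.aleph0_lt_continuum) (lt_irrefl _)
    exact exists_perfect_of_measurableSet (hB.inter measurableSet_Ioo) hunc
  choose P hPperf hPne hPsub using hP
  -- every P n has a point different from x
  have hPx : ∀ n, ∃ y ∈ P n, y ≠ x := by
    intro n
    obtain ⟨p, hp⟩ := hPne n
    by_cases hpx : p = x
    · subst hpx
      have := (hPperf n).acc p hp
      rw [accPt_iff_nhds] at this
      obtain ⟨y, ⟨_, hy⟩, hyne⟩ := this Set.univ Filter.univ_mem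
      exact ⟨y, hy, hyne⟩
    · exact ⟨p, hp, hpx⟩
  refine ⟨{x} ∪ ⋃ n, P n, ?_, ⟨?_, ?_⟩, ⟨x, Or.inl rfl⟩, Or.inl rfl⟩
  · -- subset of F ∩ I
    rintro y (rfl | hy)
    · exact ⟨hx, hxI⟩
    · obtain ⟨n, hn⟩ := Set.mem_iUnion.mp hy
      obtain ⟨hyF, hyIoo⟩ := hPsub n hn
      exact ⟨hyF, habI (hδsub n hyIoo)⟩
  · -- closed
    apply isClosed_of_closure_subset
    intro z hz
    by_cases hzx : z = x
    · exact Or.inl hzx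
    · have hr : 0 < dist z x := dist_pos.mpr hzx
      obtain ⟨N, hN⟩ := exists_nat_one_div_lt (by positivity : (0:ℝ) < dist z x / 2)
      have hsplit : {x} ∪ ⋃ n, P n ⊆
          (⋃ n ∈ Set.Iic N, P n) ∪ Metric.closedBall x (dist z x / 2) := by
        rintro y (rfl | hy)
        · exact Or.inr (Metric.mem_closedBall_self (by positivity))
        · obtain ⟨n, hn⟩ := Set.mem_iUnion.mp hy
          rcases le_or_gt n N with hnN | hnN
          · exact Or.inl (Set.mem_biUnion hnN hn)
          · right
            have hyIoo := (hPsub n hn).2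
            have h1 : (1 : ℝ) / (n + 1) ≤ 1 / (N + 1) := by
              apply one_div_le_one_div_of_le (by positivity)
              have : (N : ℝ) + 1 ≤ n := by exact_mod_cast hnN
              linarith
            have hd : |y - x| < δ n := abs_sub_lt_iff.mpr
              ⟨by linarith [hyIoo.2], by linarith [hyIoo.1]⟩
            have : |y - x| ≤ dist z x / 2 :=
              le_of_lt (hd.trans_le ((hδsmall n).trans (h1.trans hN.le)))
            simpa [Metric.mem_closedBall, Real.dist_eq] using this
      have hclosed : IsClosed ((⋃ n ∈ Set.Iic N, P n) ∪ Metric.closedBall x (dist z x / 2)) :=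
        ((Set.finite_Iic N).isClosed_biUnion (fun n _ => (hPperf n).closed)).union
          Metric.isClosed_closedBall
      have hz2 : z ∈ (⋃ n ∈ Set.Iic N, P n) ∪ Metric.closedBall x (dist z x / 2) :=
        hclosed.closure_subset ((closure_mono hsplit) hz)
      rcases hz2 with hz2 | hz2
      · obtain ⟨n, _, hn⟩ := Set.mem_iUnion₂.mp hz2
        exact Or.inr (Set.mem_iUnion.mpr ⟨n, hn⟩)
      · exfalso
        rw [Metric.mem_closedBall] at hz2
        linarith
  · -- preperfect
    rw [preperfect_iff_nhds]
    rintro z (rfl | hz) U hU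
    · -- z = x: find nearby points in some P n
      obtain ⟨ε, hεpos, hεsub⟩ := Metric.mem_nhds_iff.mp hU
      obtain ⟨n, hn⟩ := exists_nat_one_div_lt hεpos
      obtain ⟨y, hyP, hyx⟩ := hPx n
      have hyIoo := (hPsub n hyP).2
      have hd : |y - z| < δ n := abs_sub_lt_iff.mpr
        ⟨by linarith [hyIoo.2], by linarith [hyIoo.1]⟩
      refine ⟨y, ⟨hεsub ?_, Or.inr (Set.mem_iUnion.mpr ⟨n, hyP⟩)⟩, hyx⟩
      rw [Metric.mem_ball, Real.dist_eq]
      exact hd.trans_le ((hδsmall n).trans hn.le)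
    · obtain ⟨n, hn⟩ := Set.mem_iUnion.mp hz
      have := (hPperf n).acc z hn
      rw [accPt_iff_nhds] at this
      obtain ⟨y, ⟨hyU, hyP⟩, hyne⟩ := this U hU
      exact ⟨y, ⟨hyU, Or.inr (Set.mem_iUnion.mpr ⟨n, hyP⟩)⟩, hyne⟩
end

section
/- Let F ⊆ ℝ be an Fσ set (a countable union of closed sets) that is not closed and is 𝔠-dense in itself. Then there exists a sequence C₁ ⊊ C₂ ⊊ C₃ ⊊ ⋯ of perfect subsets of ℝ, strictly increasing under inclusion, such that F = ⋃ₙ Cₙ. -/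
open Cardinal

open Set Filter Topology

lemma perfect_empty' : Perfect (∅ : Set ℝ) :=
  ⟨isClosed_empty, fun x hx => absurd hx (notMem_empty x)⟩

lemma perfect_union' {C D : Set ℝ} (hC : Perfect C) (hD : Perfect D) : Perfect (C ∪ D) := by
  refine ⟨hC.closed.union hD.closed, fun x hx => ?_⟩
  rcases hx with hx | hx
  · exact (hC.acc x hx).mono (principal_mono.mpr subset_union_left)
  · exact (hD.acc x hx).mono (principal_mono.mpr subset_union_right)

lemma perfect_biUnion_range {Q : ℕ → Set ℝ} (h : ∀ k, Perfect (Q k)) (n : ℕ) :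
    Perfect (⋃ k ∈ Finset.range n, Q k) := by
  induction n with
  | zero => simpa using perfect_empty'
  | succ n ih =>
    rw [Finset.range_add_one, Finset.set_biUnion_insert]
    exact perfect_union' (h n) ih

lemma exists_perfect_subset_s16 {F : Set ℝ}
    (hFσ : ∃ D : ℕ → Set ℝ, (∀ n, IsClosed (D n)) ∧ F = ⋃ n, D n)
    {a b : ℝ} (hcard : #(F ∩ Set.Ioo a b : Set ℝ) = Cardinal.continuum) :
    ∃ Q : Set ℝ, Perfect Q ∧ Q.Nonempty ∧ Q ⊆ F ∩ Set.Icc a b := by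
  obtain ⟨D, hDcl, hFD⟩ := hFσ
  have hnotct : ¬ (F ∩ Set.Ioo a b).Countable := by
    intro hct
    have := hct.mono (subset_refl _)
    have hle : #(F ∩ Set.Ioo a b : Set ℝ) ≤ Cardinal.aleph0 := hct.le_aleph0
    rw [hcard] at hle
    exact absurd hle (not_le.mpr Cardinal.aleph0_lt_continuum)
  have hcover : F ∩ Set.Ioo a b = ⋃ n, (D n ∩ Set.Ioo a b) := by
    rw [hFD, Set.iUnion_inter]
  have : ∃ n, ¬ (D n ∩ Set.Ioo a b).Countable := by
    by_contra h
    push_neg at h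
    exact hnotct (hcover ▸ Set.countable_iUnion h)
  obtain ⟨n, hn⟩ := this
  obtain ⟨V, P, hVct, hPperf, hDeq⟩ := exists_countable_union_perfect_of_isClosed (hDcl n)
  have hPI : (Set.Ioo a b ∩ P).Nonempty := by
    rw [Set.nonempty_iff_ne_empty]
    intro he
    apply hn
    have : D n ∩ Set.Ioo a b ⊆ V := by
      intro x ⟨hxD, hxI⟩
      rw [hDeq] at hxD
      rcases hxD with h | h
      · exact h
      · exact absurd ⟨hxI, h⟩ (Set.eq_empty_iff_forall_notMem.mp he x)
    exact hVct.mono this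
  refine ⟨closure (Set.Ioo a b ∩ P), (hPperf.acc.open_inter isOpen_Ioo).perfect_closure,
    hPI.closure, ?_⟩
  have h1 : closure (Set.Ioo a b ∩ P) ⊆ Set.Icc a b ∩ P :=
    closure_minimal (Set.inter_subset_inter Set.Ioo_subset_Icc_self subset_rfl)
      (isClosed_Icc.inter hPperf.closed)
  intro x hx
  obtain ⟨hxI, hxP⟩ := h1 hx
  refine ⟨?_, hxI⟩
  rw [hFD]
  exact Set.mem_iUnion.mpr ⟨n, by rw [hDeq]; exact Or.inr hxP⟩

lemma card_of_mem {F : Set ℝ} (hF : CDenseInItself F) {x a b : ℝ}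
    (hab : a < b) (hx : x ∈ F) (hxI : x ∈ Set.Ioo a b) :
    #(F ∩ Set.Ioo a b : Set ℝ) = Cardinal.continuum := by
  rcases hF.2 a b hab with h | h
  · exact absurd ⟨hx, hxI⟩ (Set.eq_empty_iff_forall_notMem.mp h x)
  · exact h

lemma exists_near {F : Set ℝ} (hF : CDenseInItself F) {x : ℝ} (hx : x ∈ F)
    {ε : ℝ} (hε : 0 < ε) : ∃ y, y ∈ F ∧ y ≠ x ∧ |y - x| < ε := by
  have hab : x - ε < x + ε := by linarith
  have hxI : x ∈ Set.Ioo (x - ε) (x + ε) := ⟨by linarith, by linarith⟩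
  have hcard := card_of_mem hF hab hx hxI
  have hnt : (F ∩ Set.Ioo (x - ε) (x + ε)).Nontrivial := by
    rw [← Set.nontrivial_coe_sort, ← Cardinal.one_lt_iff_nontrivial, hcard]
    exact lt_of_lt_of_le Cardinal.one_lt_aleph0 Cardinal.aleph0_lt_continuum.le
  obtain ⟨y, hy, z, hz, hyz⟩ := hnt
  by_cases hyx : y = x
  · refine ⟨z, hz.1, fun h => hyz (hyx.trans h.symm), ?_⟩
    obtain ⟨h1, h2⟩ := Set.mem_Ioo.mp hz.2
    rw [abs_lt]; constructor <;> linarith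
  · refine ⟨y, hy.1, hyx, ?_⟩
    obtain ⟨h1, h2⟩ := Set.mem_Ioo.mp hy.2
    rw [abs_lt]; constructor <;> linarith

lemma exists_perfect_mem {F : Set ℝ}
    (hFσ : ∃ D : ℕ → Set ℝ, (∀ n, IsClosed (D n)) ∧ F = ⋃ n, D n)
    (hF : CDenseInItself F) {x : ℝ} (hx : x ∈ F) :
    ∃ P : Set ℝ, Perfect P ∧ x ∈ P ∧ P ⊆ F := by
  classical
  have step : ∀ z : {z : ℝ // z ∈ F ∧ z ≠ x},
      ∃ w : {z : ℝ // z ∈ F ∧ z ≠ x}, |w.1 - x| < |z.1 - x| / 10 := by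
    intro z
    have hd : 0 < |z.1 - x| / 10 := by
      have := abs_sub_pos.mpr z.2.2
      positivity
    obtain ⟨w, hw1, hw2, hw3⟩ := exists_near hF hx hd
    exact ⟨⟨w, hw1, hw2⟩, hw3⟩
  choose nxt hnxt using step
  obtain ⟨y0v, hy01, hy02, _⟩ := exists_near hF hx one_pos
  set y : ℕ → {z : ℝ // z ∈ F ∧ z ≠ x} :=
    fun n => Nat.rec ⟨y0v, hy01, hy02⟩ (fun _ p => nxt p) n with hy
  set d : ℕ → ℝ := fun k => |(y k).1 - x| with hddef
  have hdpos : ∀ k, 0 < d k := fun k => abs_sub_pos.mpr (y k).2.2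
  have hdstep : ∀ k, d (k + 1) < d k / 10 := fun k => hnxt (y k)
  have hdanti : Antitone d := by
    apply antitone_nat_of_succ_le
    intro k
    have := hdstep k
    have := hdpos k
    linarith
  have hgeo : ∀ k, d k ≤ d 0 * (1 / 2) ^ k := by
    intro k
    induction k with
    | zero => simp
    | succ k ih =>
      have h1 := hdstep k
      have h2 := hdpos k
      have h3 := hdpos 0
      calc d (k + 1) ≤ d k / 2 := by linarith
        _ ≤ d 0 * (1 / 2) ^ k / 2 := by linarith
        _ = d 0 * (1 / 2) ^ (k + 1) := by ring
  have hsmall : ∀ ε : ℝ, 0 < ε → ∃ m, d m + d m / 10 < ε := by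
    intro ε hε
    have h0 := hdpos 0
    obtain ⟨n, hn⟩ := exists_pow_lt_of_lt_one
      (show (0:ℝ) < ε / (2 * d 0) by positivity) (show (1:ℝ)/2 < 1 by norm_num)
    refine ⟨n, ?_⟩
    have h1 := hgeo n
    have h2 : 2 * d 0 * ((1:ℝ)/2) ^ n < 2 * d 0 * (ε / (2 * d 0)) :=
      mul_lt_mul_of_pos_left hn (by positivity)
    have h3 : 2 * d 0 * (ε / (2 * d 0)) = ε := by field_simp
    have h4 := hdpos n
    nlinarith
  -- perfect pieces
  have hcard : ∀ k, #(F ∩ Set.Ioo ((y k).1 - d k / 10) ((y k).1 + d k / 10) : Set ℝ)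
      = Cardinal.continuum := by
    intro k
    have h1 := hdpos k
    exact card_of_mem hF (by linarith) (y k).2.1 ⟨by linarith, by linarith⟩
  have hQex : ∀ k, ∃ Q : Set ℝ, Perfect Q ∧ Q.Nonempty ∧
      Q ⊆ F ∩ Set.Icc ((y k).1 - d k / 10) ((y k).1 + d k / 10) :=
    fun k => exists_perfect_subset_s16 hFσ (hcard k)
  choose Q hQperf hQne hQsub using hQex
  have hQF : ∀ k, Q k ⊆ F := fun k => (hQsub k).trans Set.inter_subset_left
  have hQnear : ∀ k, ∀ z ∈ Q k, |z - (y k).1| ≤ d k / 10 := by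
    intro k z hz
    obtain ⟨h1, h2⟩ := ((hQsub k) hz).2
    rw [abs_le]
    constructor <;> linarith
  have hQup : ∀ k, ∀ z ∈ Q k, |z - x| ≤ d k + d k / 10 := by
    intro k z hz
    calc |z - x| ≤ |z - (y k).1| + |(y k).1 - x| := abs_sub_le _ _ _
      _ ≤ d k / 10 + d k := by
        have := hQnear k z hz
        linarith
      _ = d k + d k / 10 := by ring
  have hQne_x : ∀ k, ∀ z ∈ Q k, z ≠ x := by
    intro k z hz he
    have h2 := hQnear k z hz
    have h3 := hdpos k
    have h4 : d k = |z - (y k).1| := by rw [he, abs_sub_comm]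
    linarith
  set P : Set ℝ := {x} ∪ ⋃ k, Q k with hP
  have hPeq : P = ⋂ m, ((⋃ k ∈ Finset.range m, Q k) ∪
      Metric.closedBall x (d m + d m / 10)) := by
    apply Set.Subset.antisymm
    · intro z hz
      rw [Set.mem_iInter]
      intro m
      rcases hz with hz | hz
      · right
        rw [Set.mem_singleton_iff] at hz
        subst hz
        rw [Metric.mem_closedBall, dist_self]
        have := hdpos m
        linarith
      · obtain ⟨k, hk⟩ := Set.mem_iUnion.mp hz
        by_cases hkm : k < m
        · exact Or.inl (Set.mem_biUnion (Finset.mem_range.mpr hkm) hk)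
        · right
          push_neg at hkm
          rw [Metric.mem_closedBall, Real.dist_eq]
          have h1 := hQup k z hk
          have h2 := hdanti hkm
          linarith
    · intro z hz
      rw [Set.mem_iInter] at hz
      by_cases hQz : ∃ k, z ∈ Q k
      · exact Or.inr (Set.mem_iUnion.mpr hQz)
      · left
        rw [Set.mem_singleton_iff]
        by_contra hne
        have hdzx : 0 < |z - x| := abs_sub_pos.mpr hne
        obtain ⟨m, hm⟩ := hsmall _ hdzx
        rcases hz m with h | h
        · obtain ⟨k, _, hk⟩ := Set.mem_iUnion₂.mp h
          exact hQz ⟨k, hk⟩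
        · rw [Metric.mem_closedBall, Real.dist_eq] at h
          linarith
  have hPclosed : IsClosed P := by
    rw [hPeq]
    apply isClosed_iInter
    intro m
    apply IsClosed.union
    · exact (Finset.range m).finite_toSet.isClosed_biUnion (fun i _ => (hQperf i).closed)
    · exact Metric.isClosed_closedBall
  refine ⟨P, ⟨hPclosed, ?_⟩, Or.inl rfl, ?_⟩
  · intro z hz
    rcases hz with hz | hz
    · rw [Set.mem_singleton_iff] at hz
      subst hz
      rw [accPt_iff_nhds]
      intro U hU
      obtain ⟨ε, hε, hball⟩ := Metric.mem_nhds_iff.mp hU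
      obtain ⟨m, hm⟩ := hsmall ε hε
      obtain ⟨q, hq⟩ := hQne m
      refine ⟨q, ⟨hball ?_, Or.inr (Set.mem_iUnion.mpr ⟨m, hq⟩)⟩, hQne_x m q hq⟩
      rw [Metric.mem_ball, Real.dist_eq]
      have := hQup m q hq
      linarith
    · obtain ⟨k, hk⟩ := Set.mem_iUnion.mp hz
      exact ((hQperf k).acc z hk).mono
        (principal_mono.mpr ((Set.subset_iUnion Q k).trans Set.subset_union_right))
  · intro z hz
    rcases hz with hz | hz
    · rw [Set.mem_singleton_iff] at hz
      exact hz ▸ hx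
    · obtain ⟨k, hk⟩ := Set.mem_iUnion.mp hz
      exact hQF k hk

lemma assemble {F : Set ℝ} (hnc : ¬ IsClosed F) (B : ℕ → Set ℝ)
    (hperf : ∀ n, Perfect (B n)) (hmono : Monotone B)
    (hunion : F = ⋃ n, B n) :
    ∃ C : ℕ → Set ℝ, (∀ n, Perfect (C n)) ∧ (∀ n, C n ⊂ C (n + 1)) ∧ F = ⋃ n, C n := by
  have hsub : ∀ n, B n ⊆ F := fun n => hunion ▸ Set.subset_iUnion B n
  have key : ∀ j, ∃ j', j < j' ∧ B j ⊂ B j' := by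
    intro j
    have hne : B j ≠ F := fun h => hnc (h ▸ (hperf j).closed)
    obtain ⟨z, hzF, hzB⟩ : ∃ z, z ∈ F ∧ z ∉ B j := by
      by_contra h
      push_neg at h
      exact hne (Set.Subset.antisymm (hsub j) h)
    obtain ⟨i, hi⟩ := Set.mem_iUnion.mp (hunion ▸ hzF)
    refine ⟨max i (j + 1), lt_of_lt_of_le (Nat.lt_succ_self j) (le_max_right _ _), ?_, ?_⟩
    · exact hmono (le_max_right _ _ |>.trans' (Nat.le_succ j))
    · intro hle
      exact hzB (hle (hmono (le_max_left i (j+1)) hi))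
  choose nxt hnxt1 hnxt2 using key
  set m : ℕ → ℕ := fun k => Nat.rec 0 (fun _ p => nxt p) k with hm
  have hmk : ∀ k, k ≤ m k := by
    intro k
    induction k with
    | zero => exact Nat.zero_le _
    | succ k ih => exact Nat.succ_le_of_lt (lt_of_le_of_lt ih (hnxt1 (m k)))
  refine ⟨fun k => B (m k), fun k => hperf _, fun k => hnxt2 (m k), ?_⟩
  apply Set.Subset.antisymm
  · intro z hz
    obtain ⟨i, hi⟩ := Set.mem_iUnion.mp (hunion ▸ hz)
    exact Set.mem_iUnion.mpr ⟨i, hmono (hmk i) hi⟩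
  · exact Set.iUnion_subset fun k => hsub (m k)

/-- If `F ⊆ ℝ` is a non-closed `Fσ` set which is `𝔠`-dense in itself, then
there is a strictly increasing (under inclusion) sequence `C₁ ⊊ C₂ ⊊ ⋯` of perfect sets
with `F = ⋃ₙ Cₙ`. -/
theorem stmt16 (F : Set ℝ)
    (hFσ : ∃ D : ℕ → Set ℝ, (∀ n, IsClosed (D n)) ∧ F = ⋃ n, D n)
    (hnc : ¬ IsClosed F) (hF : CDenseInItself F) :
    ∃ C : ℕ → Set ℝ, (∀ n, Perfect (C n)) ∧ (∀ n, C n ⊂ C (n + 1)) ∧ F = ⋃ n, C n := by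
  classical
  obtain ⟨D, hDcl, hFD⟩ := hFσ
  choose V P hVct hPperf hDeq using fun n => exists_countable_union_perfect_of_isClosed (hDcl n)
  have hPF : ∀ n, P n ⊆ F := by
    intro n z hz
    rw [hFD]
    exact Set.mem_iUnion.mpr ⟨n, by rw [hDeq n]; exact Or.inr hz⟩
  set W := F \ ⋃ n, P n with hW
  have hWct : W.Countable := by
    apply Set.Countable.mono ?_ (Set.countable_iUnion hVct)
    intro z hzW
    obtain ⟨hzF, hzP⟩ := hzW
    rw [hFD] at hzF
    obtain ⟨n, hn⟩ := Set.mem_iUnion.mp hzF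
    rw [hDeq n] at hn
    rcases hn with h | h
    · exact Set.mem_iUnion.mpr ⟨n, h⟩
    · exact absurd (Set.mem_iUnion.mpr ⟨n, h⟩) hzP
  have hpt : ∀ z, z ∈ F → ∃ R : Set ℝ, Perfect R ∧ z ∈ R ∧ R ⊆ F :=
    fun z hz => exists_perfect_mem ⟨D, hDcl, hFD⟩ hF hz
  choose R hRperf hRmem hRsub using hpt
  by_cases hWne : W.Nonempty
  · obtain ⟨f, hf⟩ := hWct.exists_eq_range hWne
    have hfW : ∀ k, f k ∈ W := by
      intro k; rw [hf]; exact Set.mem_range_self k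
    have hfF : ∀ k, f k ∈ F := fun k => (hfW k).1
    refine assemble hnc (fun n => ⋃ k ∈ Finset.range (n+1), (P k ∪ R (f k) (hfF k)))
      (fun n => perfect_biUnion_range (fun k => perfect_union' (hPperf k) (hRperf _ _)) _)
      ?_ ?_
    · intro a b hab z hz
      obtain ⟨k, hk, hzk⟩ := Set.mem_iUnion₂.mp hz
      exact Set.mem_iUnion₂.mpr ⟨k, Finset.mem_range.mpr
        (by have := Finset.mem_range.mp hk; omega), hzk⟩
    · apply Set.Subset.antisymm
      · intro z hz
        by_cases hzP : ∃ n, z ∈ P n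
        · obtain ⟨n, hn⟩ := hzP
          exact Set.mem_iUnion.mpr ⟨n, Set.mem_biUnion (Finset.self_mem_range_succ n)
            (Or.inl hn)⟩
        · have hzW : z ∈ W := ⟨hz, fun h => hzP (Set.mem_iUnion.mp h)⟩
          rw [hf] at hzW
          obtain ⟨k, hk⟩ := hzW
          refine Set.mem_iUnion.mpr ⟨k, Set.mem_biUnion (Finset.self_mem_range_succ k)
            (Or.inr ?_)⟩
          rw [← hk]
          exact hRmem _ _
      · apply Set.iUnion_subset
        intro n
        apply Set.iUnion₂_subset
        intro k _
        exact Set.union_subset (hPF k) (hRsub _ _)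
  · refine assemble hnc (fun n => ⋃ k ∈ Finset.range (n+1), P k)
      (fun n => perfect_biUnion_range hPperf _) ?_ ?_
    · intro a b hab z hz
      obtain ⟨k, hk, hzk⟩ := Set.mem_iUnion₂.mp hz
      exact Set.mem_iUnion₂.mpr ⟨k, Finset.mem_range.mpr
        (by have := Finset.mem_range.mp hk; omega), hzk⟩
    · apply Set.Subset.antisymm
      · intro z hz
        by_cases hzP : ∃ n, z ∈ P n
        · obtain ⟨n, hn⟩ := hzP
          exact Set.mem_iUnion.mpr ⟨n, Set.mem_biUnion (Finset.self_mem_range_succ n) hn⟩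
        · exact absurd ⟨z, hz, fun h => hzP (Set.mem_iUnion.mp h)⟩ hWne
      · apply Set.iUnion_subset
        intro n
        apply Set.iUnion₂_subset
        intro k _
        exact hPF k
end

section
/- Let G ⊆ ℝ be a Gδ set and let C_G be the set of all functions f : ℝ → ℝ whose set of continuity points {x ∈ ℝ : f is continuous at x} equals G. Then the following are equivalent: (i) C_G is strongly 2^𝔠-algebrable in the algebra ℝ^ℝ; (ii) C_G is 𝔠⁺-lineable, where 𝔠⁺ is the successor cardinal of 𝔠; (iii) ℝ \ G is 𝔠-dense in itself. -/
open Cardinal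

/-- A subset `E` of a real vector space is `κ`-lineable if `E ∪ {0}` contains a linear
subspace of dimension `κ`. -/
def Lineable {M : Type} [AddCommGroup M] [Module ℝ M] (E : Set M) (κ : Cardinal) : Prop :=
  ∃ V : Submodule ℝ M, Module.rank ℝ V = κ ∧ (V : Set M) ⊆ E ∪ {0}

/-- The set of all `f : ℝ → ℝ` whose set of continuity points equals `G`. -/
def ContinuityClass (G : Set ℝ) : Set (ℝ → ℝ) :=
  {f | {x : ℝ | ContinuousAt f x} = G}

open Cardinal Set

namespace Stmt17Aux


/-- A multivariate real polynomial vanishing on an open box is zero. -/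
lemma eq_zero_of_vanish_box : ∀ (m : ℕ) (P : MvPolynomial (Fin m) ℝ) (a b : Fin m → ℝ),
    (∀ i, a i < b i) →
    (∀ v : Fin m → ℝ, (∀ i, v i ∈ Set.Ioo (a i) (b i)) → MvPolynomial.eval v P = 0) →
    P = 0 := by
  intro m
  induction m with
  | zero =>
    intro P a b _ hvan
    have hc := MvPolynomial.eq_C_of_isEmpty P
    have := hvan (fun i => i.elim0) (fun i => i.elim0)
    rw [hc, MvPolynomial.eval_C] at this
    rw [hc, this, map_zero]
  | succ n ih =>
    intro P a b hab hvan
    have hQ : ∀ k, (MvPolynomial.finSuccEquiv ℝ n P).coeff k = 0 := by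
      intro k
      refine ih _ (fun i => a i.succ) (fun i => b i.succ) (fun i => hab i.succ) ?_
      intro v hv
      have key : ∀ y ∈ Set.Ioo (a 0) (b 0),
          Polynomial.eval y (Polynomial.map (MvPolynomial.eval v)
            (MvPolynomial.finSuccEquiv ℝ n P)) = 0 := by
        intro y hy
        rw [← MvPolynomial.eval_eq_eval_mv_eval']
        refine hvan _ ?_
        intro i
        refine Fin.cases ?_ ?_ i
        · simpa using hy
        · intro j; simpa using hv j
      have hzero : Polynomial.map (MvPolynomial.eval v)
          (MvPolynomial.finSuccEquiv ℝ n P) = 0 := by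
        apply Polynomial.eq_zero_of_infinite_isRoot
        have hIoo : (Set.Ioo (a 0) (b 0)).Infinite := Set.Ioo_infinite (hab 0)
        exact hIoo.mono (fun y hy => key y hy)

      have := congrArg (fun q => Polynomial.coeff q k) hzero
      simpa [Polynomial.coeff_map] using this
    have : MvPolynomial.finSuccEquiv ℝ n P = 0 := Polynomial.ext fun k => by
      rw [hQ k, Polynomial.coeff_zero]
    have h2 := congrArg (MvPolynomial.finSuccEquiv ℝ n).symm this
    simpa using h2

/-- Evaluation of `aeval` into the pointwise function algebra. -/
lemma aeval_pi_apply {m : ℕ} (P : MvPolynomial (Fin m) ℝ) (F : Fin m → ℝ → ℝ) (y : ℝ) :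
    (MvPolynomial.aeval F P : ℝ → ℝ) y = MvPolynomial.eval (fun i => F i y) P := by
  induction P using MvPolynomial.induction_on with
  | C c => simp [MvPolynomial.algebraMap_eq]
  | add p q hp hq => simp [map_add, hp, hq]
  | mul_X p i hp => simp [map_mul, hp]

/-- Bound for a polynomial without constant term, on small arguments. -/
lemma eval_abs_le {m : ℕ} (P : MvPolynomial (Fin m) ℝ) (hP : MvPolynomial.constantCoeff P = 0)
    (v : Fin m → ℝ) (u : ℝ) (hu0 : 0 ≤ u) (hu1 : u ≤ 1) (hv : ∀ i, |v i| ≤ u) :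
    |MvPolynomial.eval v P| ≤ (∑ d ∈ P.support, |P.coeff d|) * u := by
  rw [MvPolynomial.eval_eq]
  refine le_trans (Finset.abs_sum_le_sum_abs _ _) ?_
  rw [Finset.sum_mul]
  refine Finset.sum_le_sum ?_
  intro d hd
  rw [abs_mul]
  refine mul_le_mul_of_nonneg_left ?_ (abs_nonneg _)
  have hd0 : d ≠ 0 := by
    intro h
    rw [MvPolynomial.mem_support_iff] at hd
    rw [h] at hd
    exact hd hP
  have hne : d.support.Nonempty := Finsupp.support_nonempty_iff.mpr hd0
  have h1 : |∏ i ∈ d.support, v i ^ d i| = ∏ i ∈ d.support, |v i ^ d i| :=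
    Finset.abs_prod _ _
  rw [h1]
  have h2 : ∀ i ∈ d.support, |v i ^ d i| ≤ u ^ d i := by
    intro i _
    rw [abs_pow]
    exact pow_le_pow_left₀ (abs_nonneg _) (hv i) _
  refine le_trans (Finset.prod_le_prod (fun i _ => abs_nonneg _) h2) ?_
  rw [Finset.prod_pow_eq_pow_sum]
  have hsum : 1 ≤ ∑ i ∈ d.support, d i := by
    obtain ⟨i0, hi0⟩ := hne
    have : d i0 ≠ 0 := Finsupp.mem_support_iff.mp hi0
    calc 1 ≤ d i0 := Nat.one_le_iff_ne_zero.mpr this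
    _ ≤ ∑ i ∈ d.support, d i := Finset.single_le_sum (fun _ _ => Nat.zero_le _) hi0
  exact pow_le_of_le_one hu0 hu1 (by omega)



universe u

/-- If `#B < #A` then `A \ B` is nonempty. -/
lemma diff_nonempty_of_mk_lt {α : Type u} {A B : Set α} (h : #B < #A) : (A \ B).Nonempty := by
  rw [Set.nonempty_iff_ne_empty]
  intro hemp
  have hsub : A ⊆ B := by
    intro x hx
    by_contra hxB
    exact (Set.eq_empty_iff_forall_notMem.mp hemp x) ⟨hx, hxB⟩
  exact absurd (Cardinal.mk_le_mk_of_subset hsub) (not_le.mpr h)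

/-- Injective transversal: given at most continuum-many subsets of `ℝ`, each of size
at least continuum, we can pick pairwise distinct representatives. -/
lemma exists_injective_transversal {ι : Type} (S : ι → Set ℝ) (hι : #ι ≤ 𝔠)
    (hS : ∀ i, 𝔠 ≤ #(S i)) : ∃ H : ι → ℝ, Function.Injective H ∧ ∀ i, H i ∈ S i := by
  classical
  obtain ⟨r, wo, hord⟩ := Cardinal.ord_eq ι
  have wf : WellFounded r := wo.wf
  set F : ∀ i : ι, (∀ j : ι, r j i → ℝ) → ℝ := fun i ih =>
    if h : (S i \ Set.range (fun j : {j // r j i} => ih j.1 j.2)).Nonempty then h.choose else 0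
    with hF
  set H : ι → ℝ := wf.fix F with hH
  have hfix : ∀ i, H i = F i (fun j _ => H j) := fun i => wf.fix_eq F i
  have hsmall : ∀ i : ι, #(Set.range (fun j : {j // r j i} => H j.1)) < 𝔠 := by
    intro i
    refine lt_of_le_of_lt (Cardinal.mk_range_le) ?_
    have h1 : #{j // r j i} < #ι ∨ #{j // r j i} < 𝔠 := by
      right
      have := Ordinal.typein_lt_type r i
      rw [← hord, Cardinal.lt_ord] at this
      have hcard : (Ordinal.typein r i).card = #{j // r j i} := Ordinal.card_typein i
      rw [hcard] at this
      exact lt_of_lt_of_le this hι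
    rcases h1 with h | h
    · exact lt_of_lt_of_le h hι
    · exact h
  have hne : ∀ i, (S i \ Set.range (fun j : {j // r j i} => H j.1)).Nonempty := by
    intro i
    exact diff_nonempty_of_mk_lt (lt_of_lt_of_le (hsmall i) (hS i))
  have hval : ∀ i, H i ∈ S i \ Set.range (fun j : {j // r j i} => H j.1) := by
    intro i
    have := hfix i
    rw [hF] at this
    simp only at this
    rw [dif_pos (hne i)] at this
    rw [this]
    exact (hne i).choose_spec
  refine ⟨H, ?_, fun i => (hval i).1⟩
  intro i j hij
  by_cases h : r i j
  · exact absurd ⟨⟨i, h⟩, hij⟩ ((hval j).2)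
  by_cases h' : r j i
  · exact absurd ⟨⟨j, h'⟩, hij.symm⟩ ((hval i).2)
  exact wo.trichotomous i j h h'

/-- From a countable union of continuum size, one piece has continuum size. -/
lemma exists_mk_ge_continuum_of_iUnion {A : ℕ → Set ℝ} (h : 𝔠 ≤ #(⋃ n, A n)) :
    ∃ n, 𝔠 ≤ #(A n) := by
  by_contra hc
  push_neg at hc
  have h1 : #(⋃ n, A n) ≤ Cardinal.sum (fun n : ℕ => #(A n)) := Cardinal.mk_iUnion_le_sum_mk
  have h2 : Cardinal.sum (fun n : ℕ => #(A n)) < Cardinal.prod (fun _ : ℕ => 𝔠) :=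
    Cardinal.sum_lt_prod _ _ fun n => hc n
  rw [Cardinal.prod_const'] at h2
  have h3 : (𝔠 : Cardinal) ^ (#ℕ) = 𝔠 := by
    rw [Cardinal.mk_nat, Cardinal.continuum_power_aleph0]
  rw [h3] at h2
  exact absurd (le_trans h h1) (not_le.mpr h2)

/-- A closed subset of `ℝ` of size less than continuum is countable. -/
lemma countable_of_isClosed_of_mk_lt {C : Set ℝ} (hC : IsClosed C) (h : #C < 𝔠) :
    C.Countable := by
  by_contra hc
  obtain ⟨f, hrange, _, hinj⟩ := hC.exists_nat_bool_injection_of_not_countable hc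
  have : #(ℕ → Bool) ≤ #C := by
    refine Cardinal.mk_le_of_injective (f := fun x => (⟨f x, hrange ⟨x, rfl⟩⟩ : C)) ?_
    intro x y hxy
    exact hinj (congrArg Subtype.val hxy)
  have hcb : #(ℕ → Bool) = 𝔠 := by
    rw [← Cardinal.power_def, Cardinal.mk_bool, Cardinal.mk_nat, Cardinal.two_power_aleph0]
  rw [hcb] at this
  exact absurd this (not_le.mpr h)

/-- A nonempty perfect subset of `ℝ` meets every open interval around any of its points
in a set of size continuum. -/
lemma perfect_local_mk {P : Set ℝ} (hP : Perfect P) {x a b : ℝ} (hx : x ∈ P)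
    (ha : a < x) (hb : x < b) : 𝔠 ≤ #(P ∩ Set.Ioo a b : Set ℝ) := by
  set a' := (a + x) / 2
  set b' := (x + b) / 2
  have ha1 : a < a' := by simp only [a']; linarith
  have ha2 : a' < x := by simp only [a']; linarith
  have hb1 : x < b' := by simp only [b']; linarith
  have hb2 : b' < b := by simp only [b']; linarith
  obtain ⟨hperf, hne⟩ := hP.closure_nhds_inter x hx (⟨ha2, hb1⟩ : x ∈ Set.Ioo a' b') isOpen_Ioo
  obtain ⟨f, hrange, _, hinj⟩ := hperf.exists_nat_bool_injection hne
  have hsub : closure (Set.Ioo a' b' ∩ P) ⊆ P ∩ Set.Ioo a b := by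
    have h1 : closure (Set.Ioo a' b' ∩ P) ⊆ closure (Set.Ioo a' b') ∩ closure P :=
      closure_inter_subset_inter_closure _ _
    intro y hy
    have h2 := h1 hy
    rw [hP.closed.closure_eq, closure_Ioo (ne_of_lt (lt_trans ha2 hb1))] at h2
    exact ⟨h2.2, lt_of_lt_of_le ha1 h2.1.1, lt_of_le_of_lt h2.1.2 hb2⟩
  have hle : #(ℕ → Bool) ≤ #(P ∩ Set.Ioo a b : Set ℝ) := by
    refine Cardinal.mk_le_of_injective
      (f := fun z => (⟨f z, hsub (hrange ⟨z, rfl⟩)⟩ : (P ∩ Set.Ioo a b : Set ℝ))) ?_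
    intro z w hzw
    exact hinj (congrArg Subtype.val hzw)
  have hcb : #(ℕ → Bool) = 𝔠 := by
    rw [← Cardinal.power_def, Cardinal.mk_bool, Cardinal.mk_nat, Cardinal.two_power_aleph0]
  rwa [hcb] at hle


/-- Domain for the independent family of functions. -/
abbrev Sig : Type := Σ A : Finset ℝ, ({B : Finset ℝ // B ⊆ A} → ℝ)

noncomputable def proj12 (t : ℝ) : ℝ := if t ∈ Set.Ioo (1:ℝ) 2 then t else 3/2

lemma proj12_mem (t : ℝ) : proj12 t ∈ Set.Ioo (1:ℝ) 2 := by
  unfold proj12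
  split
  · assumption
  · constructor <;> norm_num

lemma proj12_eq {t : ℝ} (h : t ∈ Set.Ioo (1:ℝ) 2) : proj12 t = t := if_pos h

/-- `A.filter (· ∈ X)` with a fixed classical instance. -/
noncomputable def selset (X : Set ℝ) (A : Finset ℝ) : Finset ℝ :=
  @Finset.filter ℝ (fun a => a ∈ X) (fun a => Classical.propDecidable _) A

lemma selset_subset (X : Set ℝ) (A : Finset ℝ) : selset X A ⊆ A := by
  exact @Finset.filter_subset ℝ (fun a => a ∈ X) (fun a => Classical.propDecidable _) A

lemma mem_selset {X : Set ℝ} {A : Finset ℝ} {a : ℝ} :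
    a ∈ selset X A ↔ a ∈ A ∧ a ∈ X := by
  exact @Finset.mem_filter ℝ (fun a => a ∈ X) (fun a => Classical.propDecidable _) A a

/-- The "independent family" of functions indexed by subsets of `ℝ`. -/
noncomputable def fInd (X : Set ℝ) (σ : Sig) : ℝ :=
  proj12 (σ.2 ⟨selset X σ.1, selset_subset _ _⟩)

lemma fInd_mem (X : Set ℝ) (σ : Sig) : fInd X σ ∈ Set.Ioo (1:ℝ) 2 := proj12_mem _

/-- Joint surjectivity of the independent family. -/
lemma fInd_surj {m : ℕ} (X : Fin m → Set ℝ) (hX : Function.Injective X)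
    (v : Fin m → ℝ) (hv : ∀ i, v i ∈ Set.Ioo (1:ℝ) 2) :
    ∃ σ : Sig, ∀ i, fInd (X i) σ = v i := by
  classical
  -- pick separating points
  have hsep : ∀ p : Fin m × Fin m, p.1 ≠ p.2 → (symmDiff (X p.1) (X p.2)).Nonempty := by
    intro p hp
    rw [Set.symmDiff_nonempty]
    exact fun h => hp (hX h)
  set w : Fin m × Fin m → ℝ := fun p =>
    if h : p.1 ≠ p.2 then (hsep p h).choose else 0 with hw
  set A : Finset ℝ := Finset.image w Finset.univ with hA
  set flt : Fin m → Finset ℝ := fun i => selset (X i) A with hflt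
  have hfltinj : Function.Injective flt := by
    intro i j hij
    by_contra hne
    have hwm : w (i, j) ∈ A := Finset.mem_image_of_mem _ (Finset.mem_univ _)
    have hchoose : w (i, j) ∈ symmDiff (X i) (X j) := by
      rw [hw]
      simp only [ne_eq, hne, not_false_eq_true, dif_pos]
      exact (hsep (i, j) hne).choose_spec
    rcases hchoose with ⟨hin, hout⟩ | ⟨hin, hout⟩
    · have h1 : w (i, j) ∈ flt i := by
        rw [hflt]; exact mem_selset.mpr ⟨hwm, hin⟩
      rw [hij] at h1
      exact hout (mem_selset.mp h1).2
    · have h1 : w (i, j) ∈ flt j := by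
        rw [hflt]; exact mem_selset.mpr ⟨hwm, hin⟩
      rw [← hij] at h1
      exact hout (mem_selset.mp h1).2
  set ψ : {B : Finset ℝ // B ⊆ A} → ℝ := fun B =>
    if h : ∃ i, (B : Finset ℝ) = flt i then v h.choose else 0 with hψ
  refine ⟨⟨A, ψ⟩, ?_⟩
  intro i
  unfold fInd
  have h1 : ψ ⟨selset (X i) A, selset_subset _ _⟩ = v i := by
    rw [hψ]
    have hex : ∃ j, (selset (X i) A) = flt j := ⟨i, rfl⟩
    simp only [dif_pos hex]
    have : flt hex.choose = flt i := (hex.choose_spec).symm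
    rw [hfltinj this]
  show proj12 (ψ ⟨selset (X i) A, selset_subset _ _⟩) = v i
  rw [h1]
  exact proj12_eq (hv i)

lemma mk_sig : #Sig = 𝔠 := by
  have h1 : #Sig = Cardinal.sum (fun A : Finset ℝ => #({B : Finset ℝ // B ⊆ A} → ℝ)) :=
    Cardinal.mk_sigma _
  have h2 : ∀ A : Finset ℝ, #({B : Finset ℝ // B ⊆ A} → ℝ) = 𝔠 := by
    intro A
    have hfin : Finite {B : Finset ℝ // B ⊆ A} := by
      have : {B : Finset ℝ | B ⊆ A}.Finite := by
        have := A.powerset.finite_toSet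
        refine this.subset ?_
        intro B hB
        simpa [Finset.mem_powerset] using hB
      exact this.to_subtype
    have hne : Nonempty {B : Finset ℝ // B ⊆ A} := ⟨⟨∅, Finset.empty_subset _⟩⟩
    rw [← Cardinal.power_def, Cardinal.mk_real]
    have hub : #{B : Finset ℝ // B ⊆ A} ≤ ℵ₀ := Cardinal.mk_le_aleph0
    have hlb : 1 ≤ #{B : Finset ℝ // B ⊆ A} := Cardinal.one_le_iff_ne_zero.mpr
      (Cardinal.mk_ne_zero _)
    refine le_antisymm ?_ ?_
    · calc 𝔠 ^ #{B : Finset ℝ // B ⊆ A} ≤ 𝔠 ^ ℵ₀ :=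
        Cardinal.power_le_power_left Cardinal.continuum_ne_zero hub
      _ = 𝔠 := Cardinal.continuum_power_aleph0
    · calc 𝔠 = 𝔠 ^ (1 : Cardinal) := (Cardinal.power_one _).symm
      _ ≤ 𝔠 ^ #{B : Finset ℝ // B ⊆ A} :=
        Cardinal.power_le_power_left Cardinal.continuum_ne_zero hlb
  rw [h1]
  have h3 : Cardinal.sum (fun A : Finset ℝ => #({B : Finset ℝ // B ⊆ A} → ℝ)) =
      Cardinal.sum (fun _ : Finset ℝ => 𝔠) := by
    congr 1
    funext A
    exact h2 A
  rw [h3, Cardinal.sum_const']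
  have h4 : #(Finset ℝ) = 𝔠 := by rw [Cardinal.mk_finset_of_infinite, Cardinal.mk_real]
  rw [h4]
  exact Cardinal.mul_eq_self Cardinal.aleph0_le_continuum

/-- An injection of `Sig` into the interval `(1,2)`. -/
noncomputable def eV : Sig → ℝ :=
  fun σ => ((Classical.choice (Cardinal.le_def Sig (Set.Ioo (1:ℝ) 2) |>.mp
    (by rw [mk_sig, Cardinal.mk_Ioo_real one_lt_two]))) σ : ℝ)

lemma eV_inj : Function.Injective eV := by
  intro a b hab
  have := (Classical.choice (Cardinal.le_def Sig (Set.Ioo (1:ℝ) 2) |>.mp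
    (by rw [mk_sig, Cardinal.mk_Ioo_real one_lt_two]))).injective
  exact this (Subtype.ext hab)

lemma eV_mem (σ : Sig) : eV σ ∈ Set.Ioo (1:ℝ) 2 :=
  ((Classical.choice (Cardinal.le_def Sig (Set.Ioo (1:ℝ) 2) |>.mp
    (by rw [mk_sig, Cardinal.mk_Ioo_real one_lt_two]))) σ).2

/-- scale factor -/
noncomputable def sc (n : ℕ) : ℝ := (1/2 : ℝ) ^ (n + 2)

lemma sc_pos (n : ℕ) : 0 < sc n := by unfold sc; positivity

lemma sc_lt_one (n : ℕ) : sc n < 1 := by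
  unfold sc
  calc (1/2:ℝ)^(n+2) ≤ (1/2:ℝ)^1 := by
        apply pow_le_pow_of_le_one (by norm_num) (by norm_num) (by omega)
  _ < 1 := by norm_num

/-- the coded values -/
noncomputable def val (n : ℕ) (σ : Sig) : ℝ := eV σ * sc n

lemma val_mem (n : ℕ) (σ : Sig) : val n σ ∈ Set.Ioo (sc n) (2 * sc n) := by
  have h := eV_mem σ
  constructor
  · have := mul_lt_mul_of_pos_right h.1 (sc_pos n)
    simpa [val] using this
  · have := mul_lt_mul_of_pos_right h.2 (sc_pos n)
    simpa [val, mul_comm] using this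

lemma val_pos (n : ℕ) (σ : Sig) : 0 < val n σ := lt_trans (sc_pos n) (val_mem n σ).1

lemma two_sc_succ_le (n : ℕ) : 2 * sc (n + 1) ≤ sc n := by
  unfold sc
  rw [pow_succ]
  ring_nf
  norm_num

lemma sc_antitone {n n' : ℕ} (h : n ≤ n') : sc n' ≤ sc n := by
  unfold sc
  exact pow_le_pow_of_le_one (by norm_num) (by norm_num) (by omega)

lemma val_band_lt {n n' : ℕ} (h : n < n') (σ σ' : Sig) : val n' σ' < val n σ := by
  have h1 := (val_mem n' σ').2
  have h2 := (val_mem n σ).1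
  have h3 : 2 * sc n' ≤ sc n := by
    calc 2 * sc n' ≤ 2 * sc (n+1) := by
          have := sc_antitone (Nat.succ_le_of_lt h)
          linarith
    _ ≤ sc n := two_sc_succ_le n
  linarith

lemma val_inj {n n' : ℕ} {σ σ' : Sig} (h : val n σ = val n' σ') : n = n' ∧ σ = σ' := by
  have hnn : n = n' := by
    rcases lt_trichotomy n n' with hl | he | hl
    · exact absurd h (ne_of_gt (val_band_lt hl σ σ'))
    · exact he
    · exact absurd h (ne_of_lt (val_band_lt hl σ' σ))
  subst hnn
  refine ⟨rfl, eV_inj ?_⟩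
  have := mul_right_cancel₀ (ne_of_gt (sc_pos n)) h
  exact this

open Classical in
/-- the composed generator functions on values -/
noncomputable def gfun (X : Set ℝ) (t : ℝ) : ℝ :=
  if h : ∃ p : ℕ × Sig, val p.1 p.2 = t then fInd X h.choose.2 * sc h.choose.1 else 0

lemma gfun_val (X : Set ℝ) (n : ℕ) (σ : Sig) :
    gfun X (val n σ) = fInd X σ * sc n := by
  unfold gfun
  have hex : ∃ p : ℕ × Sig, val p.1 p.2 = val n σ := ⟨(n, σ), rfl⟩
  rw [dif_pos hex]
  obtain ⟨h1, h2⟩ := val_inj hex.choose_spec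
  rw [h1, h2]

lemma gfun_zero (X : Set ℝ) : gfun X 0 = 0 := by
  unfold gfun
  rw [dif_neg]
  rintro ⟨p, hp⟩
  exact absurd hp (ne_of_gt (val_pos p.1 p.2))

lemma gfun_abs_le (X : Set ℝ) (t : ℝ) : |gfun X t| ≤ 2 * |t| := by
  unfold gfun
  split
  · rename_i h
    set p := h.choose with hpd
    have hps : val p.1 p.2 = t := h.choose_spec
    have h1 := fInd_mem X p.2
    have h2 : 0 < fInd X p.2 * sc p.1 := by
      have := sc_pos p.1
      nlinarith [h1.1]
    have h3 : fInd X p.2 * sc p.1 < 2 * sc p.1 := by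
      have := sc_pos p.1
      nlinarith [h1.2]
    have h4 : sc p.1 < val p.1 p.2 := (val_mem p.1 p.2).1
    rw [hps] at h4
    have h5 : 0 < t := lt_trans (sc_pos p.1) h4
    rw [abs_of_pos h2, abs_of_pos h5]
    nlinarith
  · simp [abs_nonneg]

lemma cdense_interval {F : Set ℝ}
    (hc : ∀ a b : ℝ, a < b → F ∩ Set.Ioo a b = ∅ ∨ #(F ∩ Set.Ioo a b : Set ℝ) = 𝔠)
    {x a b : ℝ} (hx : x ∈ F) (ha : a < x) (hb : x < b) :
    𝔠 ≤ #(F ∩ Set.Ioo a b : Set ℝ) := by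
  rcases hc a b (lt_trans ha hb) with h | h
  · exfalso
    exact Set.eq_empty_iff_forall_notMem.mp h x ⟨hx, ha, hb⟩
  · exact le_of_eq h.symm

lemma closed_point_union {x : ℝ} {C : ℕ → Set ℝ}
    (hcl : ∀ k, IsClosed (C k))
    (hsub : ∀ k, C k ⊆ Set.Icc (x - 1/(k+1)) (x + 1/(k+1))) :
    IsClosed ({x} ∪ ⋃ k, C k) := by
  rw [← closure_subset_iff_isClosed]
  intro p hp
  by_cases hpx : p = x
  · exact Or.inl (by simp [hpx])
  · set δ := |p - x| with hδ
    have hδ0 : 0 < δ := abs_pos.mpr (sub_ne_zero.mpr hpx)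
    obtain ⟨K, hK⟩ := exists_nat_one_div_lt hδ0
    set A : Set ℝ := {x} ∪ ⋃ k ∈ Finset.range (K+1), C k with hA
    set B : Set ℝ := ⋃ k, C (k + K) with hB
    have hQ : ({x} ∪ ⋃ k, C k) ⊆ A ∪ B := by
      rintro y (hy | hy)
      · exact Or.inl (Or.inl hy)
      · obtain ⟨k, hk⟩ := Set.mem_iUnion.mp hy
        by_cases hkK : k < K + 1
        · exact Or.inl (Or.inr (Set.mem_biUnion (Finset.mem_range.mpr hkK) hk))
        · refine Or.inr (Set.mem_iUnion.mpr ⟨k - K, ?_⟩)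
          rw [Nat.sub_add_cancel (by omega)]
          exact hk
    have hpAB : p ∈ closure A ∪ closure B := by
      rcases closure_union (s := A) (t := B) ▸ (closure_mono hQ hp) with h
      exact h
    have hAclosed : IsClosed A := by
      refine IsClosed.union isClosed_singleton ?_
      exact (Finset.range (K+1)).finite_toSet.isClosed_biUnion (fun k _ => hcl k)
    have hBsub : closure B ⊆ Set.Icc (x - 1/(K+1)) (x + 1/(K+1)) := by
      refine closure_minimal ?_ isClosed_Icc
      intro y hy
      obtain ⟨k, hk⟩ := Set.mem_iUnion.mp hy
      have h1 := hsub (k + K) hk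
      have h2 : (1 : ℝ)/(k + K + 1) ≤ 1/(K+1) := by
        apply div_le_div_of_nonneg_left (by norm_num) (by positivity) (by push_cast; linarith)
      constructor
      · have := h1.1; push_cast at this ⊢; linarith
      · have := h1.2; push_cast at this ⊢; linarith
    rcases hpAB with h | h
    · have hpA : p ∈ A := hAclosed.closure_subset h
      rcases hpA with h' | h'
      · exact Or.inl h'
      · obtain ⟨k, _, hk⟩ := Set.mem_iUnion₂.mp h'
        exact Or.inr (Set.mem_iUnion.mpr ⟨k, hk⟩)
    · exfalso
      have := hBsub h
      have h1 : |p - x| ≤ 1/(K+1) := by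
        rw [abs_sub_le_iff]
        constructor <;> [skip; skip] <;> (obtain ⟨ha, hb⟩ := this; push_cast at ha hb ⊢; linarith)
      rw [← hδ] at h1
      linarith

lemma pool_exists {G : Set ℝ} (K : ℕ → Set ℝ) (hKcl : ∀ n, IsClosed (K n))
    (hKun : Gᶜ = ⋃ n, K n)
    (hc : ∀ a b : ℝ, a < b → Gᶜ ∩ Set.Ioo a b = ∅ ∨ #(Gᶜ ∩ Set.Ioo a b : Set ℝ) = 𝔠)
    {x : ℝ} (hx : x ∈ Gᶜ) :
    ∃ Q : Set ℝ, x ∈ Q ∧ Q ⊆ Gᶜ ∧ Perfect Q := by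
  have hCk : ∀ k : ℕ, ∃ C : Set ℝ, Perfect C ∧ C.Nonempty ∧ C ⊆ Gᶜ ∧
      C ⊆ Set.Icc (x - 1/(k+1)) (x + 1/(k+1)) := by
    intro k
    have hpos : (0:ℝ) < 1/(k+1) := by positivity
    have hI : 𝔠 ≤ #(Gᶜ ∩ Set.Ioo (x - 1/(k+1)) (x + 1/(k+1)) : Set ℝ) :=
      cdense_interval hc hx (by linarith) (by linarith)
    have hsplit : Gᶜ ∩ Set.Ioo (x - 1/(k+1)) (x + 1/(k+1)) =
        ⋃ n, (K n ∩ Set.Ioo (x - 1/(k+1)) (x + 1/(k+1))) := by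
      rw [hKun, Set.iUnion_inter]
    rw [hsplit] at hI
    obtain ⟨n, hn⟩ := exists_mk_ge_continuum_of_iUnion hI
    set T : Set ℝ := K n ∩ Set.Icc (x - 1/(k+1)) (x + 1/(k+1)) with hT
    have hTcl : IsClosed T := (hKcl n).inter isClosed_Icc
    have hTbig : 𝔠 ≤ #(T : Set ℝ) := by
      refine le_trans hn (Cardinal.mk_le_mk_of_subset ?_)
      exact Set.inter_subset_inter_right _ Set.Ioo_subset_Icc_self
    have hTnc : ¬T.Countable := by
      intro hcnt
      have := Cardinal.mk_le_aleph0_iff.mpr (Set.countable_coe_iff.mpr hcnt)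
      exact absurd (le_trans hTbig this) (not_le.mpr Cardinal.aleph0_lt_continuum)
    obtain ⟨D, hDperf, hDne, hDsub⟩ :=
      exists_perfect_nonempty_of_isClosed_of_not_countable hTcl hTnc
    refine ⟨D, hDperf, hDne, ?_, fun y hy => (hDsub hy).2⟩
    intro y hy
    have := (hDsub hy).1
    rw [hKun]
    exact Set.mem_iUnion.mpr ⟨n, this⟩
  choose C hCperf hCne hCsubF hCsubI using hCk
  refine ⟨{x} ∪ ⋃ k, C k, Or.inl rfl, ?_, ?_, ?_⟩
  · rintro y (hy | hy)
    · rwa [Set.mem_singleton_iff.mp hy]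
    · obtain ⟨k, hk⟩ := Set.mem_iUnion.mp hy
      exact hCsubF k hk
  · exact closed_point_union (fun k => (hCperf k).closed) hCsubI
  · intro p hp
    rcases hp with hpx | hpC
    · rw [Set.mem_singleton_iff.mp hpx]
      rw [accPt_iff_nhds]
      intro U hU
      obtain ⟨ε, hε0, hball⟩ := Metric.mem_nhds_iff.mp hU
      obtain ⟨k, hk⟩ := exists_nat_one_div_lt hε0
      obtain ⟨y, hy⟩ := hCne k
      have hyball : ∀ z ∈ C k, z ∈ Metric.ball x ε := by
        intro z hz
        have h1 := hCsubI k hz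
        rw [Metric.mem_ball, Real.dist_eq]
        have ha := h1.1; have hb := h1.2
        have h2 : |z - x| ≤ 1/(k+1) := abs_sub_le_iff.mpr
          ⟨by push_cast at hb ⊢; linarith, by push_cast at ha ⊢; linarith⟩
        push_cast at h2 hk ⊢
        linarith
      by_cases hyx : y = x
      · have hxC : x ∈ C k := hyx ▸ hy
        have hacc := (hCperf k).acc x hxC
        rw [accPt_iff_nhds] at hacc
        obtain ⟨z, ⟨hz1, hz2⟩, hz3⟩ := hacc (Metric.ball x ε) (Metric.ball_mem_nhds x hε0)
        exact ⟨z, ⟨hball hz1, Or.inr (Set.mem_iUnion.mpr ⟨k, hz2⟩)⟩, hz3⟩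
      · exact ⟨y, ⟨hball (hyball y hy), Or.inr (Set.mem_iUnion.mpr ⟨k, hy⟩)⟩, hyx⟩
    · obtain ⟨k, hk⟩ := Set.mem_iUnion.mp hpC
      refine AccPt.mono ((hCperf k).acc p hk) ?_
      refine Filter.principal_mono.mpr ?_
      exact fun z hz => Or.inr (Set.mem_iUnion.mpr ⟨k, hz⟩)

/-- Existence of the pool family. -/
lemma exists_pools {G : Set ℝ} (hG : IsGδ G) (hne : Gᶜ.Nonempty)
    (hc : ∀ a b : ℝ, a < b → Gᶜ ∩ Set.Ioo a b = ∅ ∨ #(Gᶜ ∩ Set.Ioo a b : Set ℝ) = 𝔠) :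
    ∃ P : ℕ → Set ℝ, (∀ n, IsClosed (P n)) ∧ (∀ n, P n ⊆ Gᶜ) ∧
      (∀ x ∈ Gᶜ, ∃ n, x ∈ P n ∧ Perfect (P n)) := by
  classical
  obtain ⟨T, hTo, hTc, hTeq⟩ := hG
  rcases T.eq_empty_or_nonempty with hTe | hTne
  · exfalso
    rw [hTe, Set.sInter_empty] at hTeq
    rw [hTeq] at hne
    simp at hne
  obtain ⟨f, hf⟩ := hTc.exists_eq_range hTne
  set K : ℕ → Set ℝ := fun n => (f n)ᶜ with hK
  have hKcl : ∀ n, IsClosed (K n) := by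
    intro n
    exact isClosed_compl_iff.mpr (hTo (f n) (by rw [hf]; exact Set.mem_range_self n))
  have hKun : Gᶜ = ⋃ n, K n := by
    rw [hTeq, hf, Set.sInter_range, Set.compl_iInter]
  -- Cantor–Bendixson for each K n
  have hCB : ∀ n, ∃ V D : Set ℝ, V.Countable ∧ Perfect D ∧ K n = V ∪ D :=
    fun n => exists_countable_union_perfect_of_isClosed (hKcl n)
  choose V D hVc hDperf hVD using hCB
  set E : Set ℝ := Gᶜ \ ⋃ n, D n with hE
  have hEc : E.Countable := by
    refine Set.Countable.mono ?_ (Set.countable_iUnion hVc)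
    intro y hy
    obtain ⟨hy1, hy2⟩ := hy
    rw [hKun] at hy1
    obtain ⟨n, hn⟩ := Set.mem_iUnion.mp hy1
    rw [hVD n] at hn
    rcases hn with h | h
    · exact Set.mem_iUnion.mpr ⟨n, h⟩
    · exact absurd (Set.mem_iUnion.mpr ⟨n, h⟩) hy2
  have hDsub : ∀ n, D n ⊆ Gᶜ := by
    intro n y hy
    rw [hKun]
    exact Set.mem_iUnion.mpr ⟨n, (hVD n) ▸ Or.inr hy⟩
  -- pools for points of E
  set Qp : ℝ → Set ℝ := fun y =>
    if h : y ∈ Gᶜ then (pool_exists K hKcl hKun hc h).choose else ∅ with hQp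
  have hQp1 : ∀ y ∈ Gᶜ, y ∈ Qp y ∧ Qp y ⊆ Gᶜ ∧ Perfect (Qp y) := by
    intro y hy
    have hspec := (pool_exists K hKcl hKun hc hy).choose_spec
    rw [hQp]
    simp only [dif_pos hy]
    exact hspec
  rcases E.eq_empty_or_nonempty with hEe | hEne
  · refine ⟨D, fun n => (hDperf n).closed, hDsub, ?_⟩
    intro x hx
    have hxD : x ∈ ⋃ n, D n := by
      by_contra hxD
      exact (Set.eq_empty_iff_forall_notMem.mp hEe x) ⟨hx, hxD⟩
    obtain ⟨n, hn⟩ := Set.mem_iUnion.mp hxD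
    exact ⟨n, hn, hDperf n⟩
  · obtain ⟨g, hg⟩ := hEc.exists_eq_range hEne
    set P2 : ℕ ⊕ ℕ → Set ℝ := Sum.elim D (fun j => Qp (g j)) with hP2
    have hgF : ∀ j, g j ∈ Gᶜ := by
      intro j
      have : g j ∈ E := by rw [hg]; exact Set.mem_range_self j
      exact this.1
    set P : ℕ → Set ℝ := fun n => P2 ((Equiv.natSumNatEquivNat).symm n) with hP
    have hprops : ∀ s : ℕ ⊕ ℕ, IsClosed (P2 s) ∧ P2 s ⊆ Gᶜ := by
      rintro (n | j)
      · exact ⟨(hDperf n).closed, hDsub n⟩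
      · obtain ⟨h1, h2, h3⟩ := hQp1 (g j) (hgF j)
        exact ⟨h3.closed, h2⟩
    refine ⟨P, fun n => (hprops _).1, fun n => (hprops _).2, ?_⟩
    intro x hx
    by_cases hxD : x ∈ ⋃ n, D n
    · obtain ⟨n, hn⟩ := Set.mem_iUnion.mp hxD
      refine ⟨Equiv.natSumNatEquivNat (Sum.inl n), ?_, ?_⟩
      · rw [hP]
        simp only [Equiv.symm_apply_apply]
        exact hn
      · rw [hP]
        simp only [Equiv.symm_apply_apply]
        exact hDperf n
    · have hxE : x ∈ E := ⟨hx, hxD⟩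
      rw [hg] at hxE
      obtain ⟨j, hj⟩ := hxE
      obtain ⟨h1, h2, h3⟩ := hQp1 (g j) (hgF j)
      refine ⟨Equiv.natSumNatEquivNat (Sum.inr j), ?_, ?_⟩
      · rw [hP]
        simp only [Equiv.symm_apply_apply]
        exact hj ▸ h1
      · rw [hP]
        simp only [Equiv.symm_apply_apply]
        exact h3

/-- Demand index type. -/
def Dem (P : ℕ → Set ℝ) : Type :=
  {q : ℕ × ℚ × ℚ // 𝔠 ≤ #(P q.1 ∩ Set.Ioo (q.2.1 : ℝ) (q.2.2 : ℝ) : Set ℝ)} × Sig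

/-- The target set of a demand. -/
def DemSet {P : ℕ → Set ℝ} (p : Dem P) : Set ℝ :=
  P p.1.val.1 ∩ Set.Ioo (p.1.val.2.1 : ℝ) (p.1.val.2.2 : ℝ)

lemma mk_dem_le (P : ℕ → Set ℝ) : #(Dem P) ≤ 𝔠 := by
  have h1 : #{q : ℕ × ℚ × ℚ // 𝔠 ≤ #(P q.1 ∩ Set.Ioo (q.2.1 : ℝ) (q.2.2 : ℝ) : Set ℝ)} ≤ ℵ₀ :=
    Cardinal.mk_le_aleph0
  have h2 : #(Dem P) = #{q : ℕ × ℚ × ℚ // 𝔠 ≤ #(P q.1 ∩ Set.Ioo (q.2.1 : ℝ) (q.2.2 : ℝ) : Set ℝ)}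
      * #Sig := by
    unfold Dem
    rw [Cardinal.mk_prod, Cardinal.lift_id, Cardinal.lift_id]
  rw [h2, mk_sig]
  calc #{q : ℕ × ℚ × ℚ // 𝔠 ≤ #(P q.1 ∩ Set.Ioo (q.2.1:ℝ) (q.2.2:ℝ) : Set ℝ)} * 𝔠
      ≤ 𝔠 * 𝔠 := by
        refine mul_le_mul' (le_trans h1 Cardinal.aleph0_le_continuum) le_rfl
  _ = 𝔠 := Cardinal.mul_eq_self Cardinal.aleph0_le_continuum

open Classical in
/-- The base function. -/
noncomputable def f0 (P : ℕ → Set ℝ) (H : Dem P → ℝ) : ℝ → ℝ :=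
  fun y => if h : ∃ p : Dem P, H p = y then val h.choose.1.val.1 h.choose.2 else 0

lemma f0_eq {P : ℕ → Set ℝ} {H : Dem P → ℝ} (hHinj : Function.Injective H)
    {p : Dem P} {y : ℝ} (hy : H p = y) : f0 P H y = val p.1.val.1 p.2 := by
  unfold f0
  have hex : ∃ q : Dem P, H q = y := ⟨p, hy⟩
  rw [dif_pos hex]
  have : hex.choose = p := hHinj (hex.choose_spec.trans hy.symm)
  rw [this]

lemma f0_cases (P : ℕ → Set ℝ) (H : Dem P → ℝ) (y : ℝ) :
    f0 P H y = 0 ∨ ∃ p : Dem P, H p = y ∧ f0 P H y = val p.1.val.1 p.2 := by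
  unfold f0
  by_cases h : ∃ p : Dem P, H p = y
  · refine Or.inr ⟨h.choose, h.choose_spec, ?_⟩
    rw [dif_pos h]
  · rw [dif_neg h]
    exact Or.inl rfl

/-- Two distinct values of a nonzero polynomial without constant term on a scaled cube. -/
lemma exists_two_values {m : ℕ} (Q : MvPolynomial (Fin m) ℝ) (hQ : Q ≠ 0)
    (hQ0 : MvPolynomial.constantCoeff Q = 0) (n : ℕ) :
    ∃ t t' : Fin m → ℝ, (∀ i, t i ∈ Set.Ioo (1:ℝ) 2) ∧ (∀ i, t' i ∈ Set.Ioo (1:ℝ) 2) ∧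
      MvPolynomial.eval (fun i => t i * sc n) Q ≠ MvPolynomial.eval (fun i => t' i * sc n) Q := by
  by_contra hcon
  push_neg at hcon
  set c : ℝ := MvPolynomial.eval (fun _ : Fin m => (3/2 : ℝ) * sc n) Q with hcd
  have hconst : ∀ v : Fin m → ℝ, (∀ i, v i ∈ Set.Ioo (sc n) (2 * sc n)) →
      MvPolynomial.eval v Q = c := by
    intro v hv
    have hsc := sc_pos n
    have hveq : (fun i => (v i / sc n) * sc n) = v := by
      funext i
      field_simp
    have ht : ∀ i, v i / sc n ∈ Set.Ioo (1:ℝ) 2 := by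
      intro i
      obtain ⟨h1, h2⟩ := hv i
      constructor
      · rw [lt_div_iff₀ hsc]; linarith
      · rw [div_lt_iff₀ hsc]; linarith
    have h32 : ∀ i : Fin m, ((3:ℝ)/2) ∈ Set.Ioo (1:ℝ) 2 := fun _ => by norm_num
    have := hcon (fun i => v i / sc n) (fun _ => (3/2 : ℝ)) ht (fun i => h32 i)
    rw [hveq] at this
    exact this
  have hzero : Q - MvPolynomial.C c = 0 := by
    refine eq_zero_of_vanish_box m _ (fun _ => sc n) (fun _ => 2 * sc n)
      (fun i => by show sc n < 2 * sc n; have := sc_pos n; linarith) ?_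
    intro v hv
    rw [map_sub, MvPolynomial.eval_C, hconst v hv, sub_self]
  have hQC : Q = MvPolynomial.C c := by
    have := sub_eq_zero.mp hzero
    exact this
  have hc0 : c = 0 := by
    have := congrArg MvPolynomial.constantCoeff hQC
    rw [hQ0, MvPolynomial.constantCoeff_C] at this
    exact this.symm
  rw [hc0, map_zero] at hQC
  exact hQ hQC

lemma cdense_to_algebrable {G : Set ℝ} (hG : IsGδ G)
    (hFne : Gᶜ.Nonempty)
    (hFc : ∀ a b : ℝ, a < b → Gᶜ ∩ Set.Ioo a b = ∅ ∨ #(Gᶜ ∩ Set.Ioo a b : Set ℝ) = 𝔠) :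
    ∃ (x : Set ℝ → (ℝ → ℝ)), Function.Injective x ∧
    (∀ X, {y : ℝ | ContinuousAt (x X) y} = G) ∧
    ∀ n : ℕ, 0 < n → ∀ Q : MvPolynomial (Fin n) ℝ, Q ≠ 0 →
      MvPolynomial.constantCoeff Q = 0 →
      ∀ ξ : Fin n → Set ℝ, Function.Injective ξ →
        MvPolynomial.aeval (fun i => x (ξ i)) Q ≠ 0 ∧
        {y : ℝ | ContinuousAt (MvPolynomial.aeval (fun i => x (ξ i)) Q : ℝ → ℝ) y} = G := by
  classical
  obtain ⟨P, hPcl, hPsub, hPcov⟩ := exists_pools hG hFne hFc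
  obtain ⟨H, hHinj, hHmem⟩ := exists_injective_transversal (fun p : Dem P => DemSet p)
    (mk_dem_le P) (fun p => p.1.property)
  set φ : ℝ → ℝ := f0 P H with hφ
  have hφG : ∀ z ∈ G, φ z = 0 := by
    intro z hz
    rcases f0_cases P H z with h | ⟨p, hp, hval⟩
    · exact h
    · exfalso
      have hmem : z ∈ DemSet p := hp ▸ hHmem p
      exact (hPsub p.1.val.1 hmem.1) hz
  have hsmall : ∀ z ∈ G, ∀ ε : ℝ, 0 < ε → ∃ δ > 0, ∀ y : ℝ, |y - z| < δ → |φ y| < ε := by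
    intro z hz ε hε
    obtain ⟨s, hs⟩ := exists_pow_lt_of_lt_one hε (by norm_num : (1/2 : ℝ) < 1)
    set A : Set ℝ := ⋃ n ∈ Finset.range (s+1), P n with hA
    have hAcl : IsClosed A :=
      (Finset.range (s+1)).finite_toSet.isClosed_biUnion (fun n _ => hPcl n)
    have hzA : z ∈ Aᶜ := by
      intro hzA
      obtain ⟨n, _, hn⟩ := Set.mem_iUnion₂.mp hzA
      exact (hPsub n hn) hz
    obtain ⟨δ, hδ0, hδ⟩ := Metric.isOpen_iff.mp hAcl.isOpen_compl z hzA
    refine ⟨δ, hδ0, ?_⟩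
    intro y hy
    have hyA : y ∉ A := hδ (by rwa [Metric.mem_ball, Real.dist_eq])
    rcases f0_cases P H y with h | ⟨p, hp, hval⟩
    · rw [show φ y = f0 P H y from rfl, h]; simpa using hε
    · have hyP : y ∈ P p.1.val.1 := (hp ▸ hHmem p).1
      set n := p.1.val.1 with hn
      have hns : s + 1 ≤ n := by
        by_contra hcon
        exact hyA (Set.mem_iUnion₂.mpr ⟨n, Finset.mem_range.mpr (not_le.mp hcon), hyP⟩)
      have h1 : |φ y| < 2 * sc n := by
        rw [show φ y = f0 P H y from rfl, hval, abs_of_pos (val_pos _ _)]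
        exact (val_mem n p.2).2
      have h2 : 2 * sc n = (1/2:ℝ)^(n+1) := by
        unfold sc; ring
      have h3 : (1/2:ℝ)^(n+1) ≤ (1/2:ℝ)^s :=
        pow_le_pow_of_le_one (by norm_num) (by norm_num) (by omega)
      calc |φ y| < 2 * sc n := h1
      _ = (1/2:ℝ)^(n+1) := h2
      _ ≤ (1/2:ℝ)^s := h3
      _ < ε := hs
  have hreal : ∀ x ∈ Gᶜ, ∀ n : ℕ, x ∈ P n → Perfect (P n) → ∀ δ : ℝ, 0 < δ → ∀ σ : Sig,
      ∃ y : ℝ, |y - x| < δ ∧ φ y = val n σ := by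
    intro x hx n hxn hperf δ hδ σ
    obtain ⟨q1, hq1a, hq1b⟩ := exists_rat_btwn (show x - δ < x by linarith)
    obtain ⟨q2, hq2a, hq2b⟩ := exists_rat_btwn (show x < x + δ by linarith)
    have hbig : 𝔠 ≤ #(P n ∩ Set.Ioo (q1:ℝ) (q2:ℝ) : Set ℝ) :=
      perfect_local_mk hperf hxn hq1b hq2a
    set d : Dem P := (⟨(n, q1, q2), hbig⟩, σ) with hd
    refine ⟨H d, ?_, f0_eq hHinj rfl⟩
    have hmem := hHmem d
    obtain ⟨hP1, hP2⟩ := hmem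
    rw [abs_sub_lt_iff]
    have hl : (q1 : ℝ) < H d := hP2.1
    have hr : H d < (q2 : ℝ) := hP2.2
    constructor <;> linarith
  have hcont : ∀ (m : ℕ) (X : Fin m → Set ℝ) (Q : MvPolynomial (Fin m) ℝ),
      MvPolynomial.constantCoeff Q = 0 → ∀ z ∈ G,
      ContinuousAt (fun y => MvPolynomial.eval (fun i => gfun (X i) (φ y)) Q) z := by
    intro m X Q hQ0 z hz
    rw [Metric.continuousAt_iff]
    intro ε hε
    set CP : ℝ := ∑ d ∈ Q.support, |Q.coeff d| with hCP
    have hCP0 : 0 ≤ CP := Finset.sum_nonneg fun _ _ => abs_nonneg _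
    set η : ℝ := min (ε / (CP + 1)) 1 with hη
    have hη0 : 0 < η := lt_min (by positivity) one_pos
    obtain ⟨δ, hδ0, hδ⟩ := hsmall z hz (η/2) (by positivity)
    refine ⟨δ, hδ0, ?_⟩
    intro y hy
    rw [Real.dist_eq] at hy
    have h1 : ∀ i, |gfun (X i) (φ y)| ≤ η := by
      intro i
      have hb := gfun_abs_le (X i) (φ y)
      have hc := hδ y hy
      calc |gfun (X i) (φ y)| ≤ 2 * |φ y| := hb
      _ ≤ 2 * (η/2) := by linarith
      _ = η := by ring
    have hFz : MvPolynomial.eval (fun i => gfun (X i) (φ z)) Q = 0 := by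
      rw [hφG z hz]
      have heq : (fun i : Fin m => gfun (X i) (0:ℝ)) = (fun _ => (0:ℝ)) :=
        funext fun i => gfun_zero (X i)
      rw [heq, MvPolynomial.eval_zero']
      exact hQ0
    rw [Real.dist_eq, hFz, sub_zero]
    have h2 : |MvPolynomial.eval (fun i => gfun (X i) (φ y)) Q| ≤ CP * η :=
      eval_abs_le Q hQ0 _ η (le_of_lt hη0) (min_le_right _ _) h1
    have h3 : CP * η ≤ CP * (ε / (CP+1)) := mul_le_mul_of_nonneg_left (min_le_left _ _) hCP0
    have h4 : CP * (ε/(CP+1)) < ε := by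
      have hlt : CP / (CP + 1) < 1 := (div_lt_one (by positivity)).mpr (by linarith)
      calc CP * (ε/(CP+1)) = ε * (CP/(CP+1)) := by ring
      _ < ε * 1 := mul_lt_mul_of_pos_left hlt hε
      _ = ε := mul_one ε
    linarith
  have hdisc : ∀ (m : ℕ) (X : Fin m → Set ℝ), Function.Injective X →
      ∀ (Q : MvPolynomial (Fin m) ℝ), Q ≠ 0 → MvPolynomial.constantCoeff Q = 0 →
      ∀ x ∈ Gᶜ, ¬ ContinuousAt (fun y => MvPolynomial.eval (fun i => gfun (X i) (φ y)) Q) x := by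
    intro m X hXinj Q hQ hQ0 x hx hcontF
    obtain ⟨n, hxn, hperf⟩ := hPcov x hx
    obtain ⟨t, t', ht, ht', hne⟩ := exists_two_values Q hQ hQ0 n
    obtain ⟨σ, hσ⟩ := fInd_surj X hXinj t ht
    obtain ⟨σ', hσ'⟩ := fInd_surj X hXinj t' ht'
    set a := MvPolynomial.eval (fun i => t i * sc n) Q with ha
    set b := MvPolynomial.eval (fun i => t' i * sc n) Q with hb
    set γ := |a - b| with hγ
    have hγ0 : 0 < γ := abs_pos.mpr (sub_ne_zero.mpr hne)
    rw [Metric.continuousAt_iff] at hcontF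
    obtain ⟨δ, hδ0, hδ⟩ := hcontF (γ/2) (by positivity)
    obtain ⟨y, hyδ, hyval⟩ := hreal x hx n hxn hperf δ hδ0 σ
    obtain ⟨y', hyδ', hyval'⟩ := hreal x hx n hxn hperf δ hδ0 σ'
    have hFy : MvPolynomial.eval (fun i => gfun (X i) (φ y)) Q = a := by
      rw [hyval]
      have heq : (fun i => gfun (X i) (val n σ)) = fun i => t i * sc n := by
        funext i
        rw [gfun_val, hσ i]
      rw [heq]
    have hFy' : MvPolynomial.eval (fun i => gfun (X i) (φ y')) Q = b := by
      rw [hyval']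
      have heq : (fun i => gfun (X i) (val n σ')) = fun i => t' i * sc n := by
        funext i
        rw [gfun_val, hσ' i]
      rw [heq]
    have h1 := hδ (show dist y x < δ by rwa [Real.dist_eq])
    have h2 := hδ (show dist y' x < δ by rwa [Real.dist_eq])
    rw [Real.dist_eq] at h1 h2
    rw [hFy] at h1
    rw [hFy'] at h2
    set Fx := MvPolynomial.eval (fun i => gfun (X i) (φ x)) Q with hFx
    have hfin : γ < γ := by
      calc γ = |a - b| := hγ
      _ ≤ |a - Fx| + |Fx - b| := abs_sub_le a Fx b
      _ < γ/2 + γ/2 := by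
          rw [abs_sub_comm Fx b]
          exact add_lt_add h1 h2
      _ = γ := by ring
    exact lt_irrefl _ hfin
  have hnz : ∀ (m : ℕ) (X : Fin m → Set ℝ), Function.Injective X →
      ∀ (Q : MvPolynomial (Fin m) ℝ), Q ≠ 0 → MvPolynomial.constantCoeff Q = 0 →
      (fun y => MvPolynomial.eval (fun i => gfun (X i) (φ y)) Q) ≠ 0 := by
    intro m X hXinj Q hQ hQ0 hzero
    obtain ⟨x, hx⟩ := hFne
    obtain ⟨n, hxn, hperf⟩ := hPcov x hx
    obtain ⟨t, t', ht, ht', hne⟩ := exists_two_values Q hQ hQ0 n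
    obtain ⟨σ, hσ⟩ := fInd_surj X hXinj t ht
    obtain ⟨σ', hσ'⟩ := fInd_surj X hXinj t' ht'
    obtain ⟨y, _, hyval⟩ := hreal x hx n hxn hperf 1 one_pos σ
    obtain ⟨y', _, hyval'⟩ := hreal x hx n hxn hperf 1 one_pos σ'
    have hFy : MvPolynomial.eval (fun i => gfun (X i) (φ y)) Q =
        MvPolynomial.eval (fun i => t i * sc n) Q := by
      rw [hyval]
      have heq : (fun i => gfun (X i) (val n σ)) = fun i => t i * sc n := by
        funext i
        rw [gfun_val, hσ i]
      rw [heq]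
    have hFy' : MvPolynomial.eval (fun i => gfun (X i) (φ y')) Q =
        MvPolynomial.eval (fun i => t' i * sc n) Q := by
      rw [hyval']
      have heq : (fun i => gfun (X i) (val n σ')) = fun i => t' i * sc n := by
        funext i
        rw [gfun_val, hσ' i]
      rw [heq]
    have hz1 := congrFun hzero y
    have hz2 := congrFun hzero y'
    simp only [Pi.zero_apply] at hz1 hz2
    rw [hFy] at hz1
    rw [hFy'] at hz2
    exact hne (hz1.trans hz2.symm)
  have hmemC : ∀ (m : ℕ) (X : Fin m → Set ℝ), Function.Injective X →
      ∀ (Q : MvPolynomial (Fin m) ℝ), Q ≠ 0 → MvPolynomial.constantCoeff Q = 0 →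
      {y : ℝ | ContinuousAt (fun y => MvPolynomial.eval (fun i => gfun (X i) (φ y)) Q) y} = G := by
    intro m X hXinj Q hQ hQ0
    ext y
    simp only [Set.mem_setOf_eq]
    constructor
    · intro hc
      by_contra hyG
      exact hdisc m X hXinj Q hQ hQ0 y (Set.mem_compl hyG) hc
    · intro hyG
      exact hcont m X Q hQ0 y hyG
  refine ⟨fun X => fun y => gfun X (φ y), ?_, ?_, ?_⟩
  · -- injectivity
    intro X Y hXY
    by_contra hneq
    set Xf : Fin 2 → Set ℝ := ![X, Y] with hXf
    have hXfinj : Function.Injective Xf := by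
      intro i j hij
      fin_cases i <;> fin_cases j <;> first
        | rfl
        | (exfalso; apply hneq; simpa [hXf] using hij)
        | (exfalso; apply hneq; exact (by simpa [hXf] using hij : Y = X).symm)
    have hv : ∀ i : Fin 2, (![ (3:ℝ)/2, 7/4 ] : Fin 2 → ℝ) i ∈ Set.Ioo (1:ℝ) 2 := by
      intro i
      fin_cases i <;> constructor <;> norm_num
    obtain ⟨σ, hσ⟩ := fInd_surj Xf hXfinj ![ (3:ℝ)/2, 7/4 ] hv
    obtain ⟨x, hx⟩ := hFne
    obtain ⟨n, hxn, hperf⟩ := hPcov x hx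
    obtain ⟨y, _, hyval⟩ := hreal x hx n hxn hperf 1 one_pos σ
    have hc := congrFun hXY y
    simp only at hc
    rw [hyval, gfun_val, gfun_val] at hc
    have h0 := hσ 0
    have h1 := hσ 1
    have e0 : Xf 0 = X := rfl
    have e1 : Xf 1 = Y := rfl
    rw [e0] at h0
    rw [e1] at h1
    have ev0 : (![ (3:ℝ)/2, 7/4 ] : Fin 2 → ℝ) 0 = 3/2 := rfl
    have ev1 : (![ (3:ℝ)/2, 7/4 ] : Fin 2 → ℝ) 1 = 7/4 := rfl
    rw [ev0] at h0
    rw [ev1] at h1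
    rw [h0, h1] at hc
    have := sc_pos n
    nlinarith
  · -- membership
    intro X
    have hinj1 : Function.Injective (fun _ : Fin 1 => X) := fun i j _ => Subsingleton.elim i j
    have hm := hmemC 1 (fun _ => X) hinj1 (MvPolynomial.X 0) (MvPolynomial.X_ne_zero _)
      (MvPolynomial.constantCoeff_X (R := ℝ) (0 : Fin 1))
    have heq : (fun y => MvPolynomial.eval (fun _ : Fin 1 => gfun X (φ y)) (MvPolynomial.X 0))
        = fun y => gfun X (φ y) := funext fun y => by rw [MvPolynomial.eval_X]
    rw [heq] at hm
    exact hm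
  · -- polynomial clause
    intro n hn Q hQ hQ0 ξ hξ
    have haev : (MvPolynomial.aeval (fun i => (fun y => gfun (ξ i) (φ y))) Q : ℝ → ℝ)
        = fun y => MvPolynomial.eval (fun i => gfun (ξ i) (φ y)) Q := by
      funext y
      exact aeval_pi_apply Q _ y
    refine ⟨?_, ?_⟩
    · rw [haev]
      exact hnz n ξ hξ Q hQ hQ0
    · rw [haev]
      exact hmemC n ξ hξ Q hQ hQ0

lemma sum_mem_ne {E : Set (ℝ → ℝ)} {ι : Type} {x : ι → ℝ → ℝ}
    (hfree : ∀ n : ℕ, 0 < n → ∀ P : MvPolynomial (Fin n) ℝ, P ≠ 0 →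
      MvPolynomial.constantCoeff P = 0 →
      ∀ ξ : Fin n → ι, Function.Injective ξ →
        MvPolynomial.aeval (fun i => x (ξ i)) P ≠ 0 ∧
        MvPolynomial.aeval (fun i => x (ξ i)) P ∈ E)
    (c : ι →₀ ℝ) (hc : c ≠ 0) :
    (c.sum fun i a => a • x i) ≠ 0 ∧ (c.sum fun i a => a • x i) ∈ E := by
  classical
  set s := c.support with hs
  have hsne : s.Nonempty := Finsupp.support_nonempty_iff.mpr hc
  set n := s.card with hn
  have hnpos : 0 < n := Finset.card_pos.mpr hsne
  set e : {a // a ∈ s} ≃ Fin n := s.equivFin with he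
  set ξ : Fin n → ι := fun k => (e.symm k : ι) with hξ
  have hξinj : Function.Injective ξ := by
    intro i j hij
    exact e.symm.injective (Subtype.ext hij)
  set P : MvPolynomial (Fin n) ℝ :=
    ∑ k : Fin n, MvPolynomial.C (c (ξ k)) * MvPolynomial.X k with hP
  have hPc : MvPolynomial.constantCoeff P = 0 := by
    rw [hP, map_sum]
    refine Finset.sum_eq_zero fun k _ => ?_
    rw [map_mul, MvPolynomial.constantCoeff_C, MvPolynomial.constantCoeff_X, mul_zero]
  have hcoeff : ∀ k0 : Fin n, MvPolynomial.coeff (Finsupp.single k0 1) P = c (ξ k0) := by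
    intro k0
    rw [hP, MvPolynomial.coeff_sum]
    rw [Finset.sum_eq_single k0]
    · rw [MvPolynomial.coeff_C_mul, MvPolynomial.coeff_X', if_pos rfl, mul_one]
    · intro k _ hk
      rw [MvPolynomial.coeff_C_mul, MvPolynomial.coeff_X', if_neg, mul_zero]
      intro hsingle
      exact hk (Finsupp.single_left_injective one_ne_zero hsingle)
    · intro hmem
      exact absurd (Finset.mem_univ _) hmem
  have hP0 : P ≠ 0 := by
    intro h
    have hk0 : ξ ⟨0, hnpos⟩ ∈ s := (e.symm ⟨0, hnpos⟩).2
    have := hcoeff ⟨0, hnpos⟩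
    rw [h, MvPolynomial.coeff_zero] at this
    exact (Finsupp.mem_support_iff.mp hk0) this.symm
  have haeval : (MvPolynomial.aeval (fun k => x (ξ k)) P : ℝ → ℝ)
      = ∑ k : Fin n, c (ξ k) • x (ξ k) := by
    rw [hP, map_sum]
    refine Finset.sum_congr rfl fun k _ => ?_
    rw [map_mul, MvPolynomial.aeval_C, MvPolynomial.aeval_X, Algebra.smul_def]
  have hsum : (c.sum fun i a => a • x i) = ∑ k : Fin n, c (ξ k) • x (ξ k) := by
    rw [Finsupp.sum]
    rw [← Finset.sum_coe_sort s (fun i => c i • x i)]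
    exact (Equiv.sum_comp e.symm (fun j : {a // a ∈ s} => c j.1 • x j.1)).symm
  obtain ⟨hne0, hmem⟩ := hfree n hnpos P hP0 hPc ξ hξinj
  rw [haeval] at hne0 hmem
  rw [hsum]
  exact ⟨hne0, hmem⟩

lemma eq_zero_at_of_continuousAt {f : ℝ → ℝ} {y a b : ℝ} (hy : ContinuousAt f y)
    (hab : y ∈ Set.Ioo a b) (hvan : ∀ q : ℚ, (q:ℝ) ∈ Set.Ioo a b → f q = 0) : f y = 0 := by
  by_contra hfy
  have hfy0 : 0 < |f y| := abs_pos.mpr hfy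
  rw [Metric.continuousAt_iff] at hy
  obtain ⟨δ, hδ0, hδ⟩ := hy (|f y| / 2) (by positivity)
  set u := min b (y + δ) with hu
  have hyu : y < u := lt_min hab.2 (by linarith)
  obtain ⟨q, hq1, hq2⟩ := exists_rat_btwn hyu
  have hqI : (q:ℝ) ∈ Set.Ioo a b :=
    ⟨lt_trans hab.1 hq1, lt_of_lt_of_le hq2 (min_le_left _ _)⟩
  have hqd : dist (q:ℝ) y < δ := by
    rw [Real.dist_eq, abs_of_pos (by linarith)]
    have := lt_of_lt_of_le hq2 (min_le_right _ _)
    linarith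
  have hcl := hδ hqd
  rw [Real.dist_eq, hvan q hqI, zero_sub, abs_neg] at hcl
  linarith

lemma rank_le_continuum_of_restrict {V : Submodule ℝ (ℝ → ℝ)} (T : Set ℝ) (hT : T.Countable)
    (hinj : ∀ f : ℝ → ℝ, f ∈ V → (∀ t ∈ T, f t = 0) → f = 0) :
    Module.rank ℝ V ≤ 𝔠 := by
  have hVcard : #V ≤ 𝔠 := by
    have hΦinj : Function.Injective (fun f : V => (fun t : T => (f : ℝ → ℝ) t)) := by
      intro f g hfg
      have hdiff : ((f - g : V) : ℝ → ℝ) = 0 := by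
        apply hinj _ (f - g).2
        intro t ht
        have := congrFun hfg ⟨t, ht⟩
        simp only at this
        show ((f : ℝ → ℝ) - (g : ℝ → ℝ)) t = 0
        simp [this]
      have : (f - g : V) = 0 := by
        exact Subtype.ext hdiff
      have := sub_eq_zero.mp this
      exact this
    have h1 : #V ≤ #(T → ℝ) := Cardinal.mk_le_of_injective hΦinj
    have h2 : #(T → ℝ) ≤ 𝔠 := by
      rw [← Cardinal.power_def, Cardinal.mk_real]
      have hTle : #T ≤ ℵ₀ := Cardinal.mk_le_aleph0_iff.mpr (Set.countable_coe_iff.mpr hT)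
      calc 𝔠 ^ #T ≤ 𝔠 ^ ℵ₀ := Cardinal.power_le_power_left Cardinal.continuum_ne_zero hTle
      _ = 𝔠 := Cardinal.continuum_power_aleph0
    exact le_trans h1 h2
  exact le_trans (rank_le_card ℝ V) hVcard

end Stmt17Aux

namespace Stmt17Aux

lemma cdense_to_SA {G : Set ℝ} (hG : IsGδ G) (h : CDenseInItself Gᶜ) :
    StronglyAlgebrable ℝ (ContinuityClass G) ((2 : Cardinal) ^ Cardinal.continuum) := by
  obtain ⟨hne, hc⟩ := h
  obtain ⟨x, hinj, hmem, hfree⟩ := cdense_to_algebrable hG hne hc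
  refine ⟨Set ℝ, x, ?_, hinj, fun X => hmem X, ?_⟩
  · rw [Cardinal.mk_set, Cardinal.mk_real]
  · intro n hn Q hQ hQ0 ξ hξ
    obtain ⟨h1, h2⟩ := hfree n hn Q hQ hQ0 ξ hξ
    exact ⟨h1, h2⟩

lemma algebrable_to_lineable {G : Set ℝ}
    (h : StronglyAlgebrable ℝ (ContinuityClass G) ((2 : Cardinal) ^ Cardinal.continuum)) :
    Lineable (ContinuityClass G) (Order.succ Cardinal.continuum) := by
  classical
  obtain ⟨ι, x, hcard, hxinj, hxmem, hfree⟩ := h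
  have hsucc : Order.succ Cardinal.continuum ≤ #ι := by
    rw [hcard]
    exact Order.succ_le_of_lt (Cardinal.cantor _)
  obtain ⟨S, hS⟩ := Cardinal.le_mk_iff_exists_set.mp hsucc
  set v : S → (ℝ → ℝ) := fun i => x i.1 with hv
  have hvinj : Function.Injective v := fun i j hij => Subtype.ext (hxinj hij)
  have hfree' : ∀ n : ℕ, 0 < n → ∀ P : MvPolynomial (Fin n) ℝ, P ≠ 0 →
      MvPolynomial.constantCoeff P = 0 →
      ∀ ξ : Fin n → S, Function.Injective ξ →
        MvPolynomial.aeval (fun i => v (ξ i)) P ≠ 0 ∧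
        MvPolynomial.aeval (fun i => v (ξ i)) P ∈ ContinuityClass G := by
    intro n hn P hP hPc ξ hξ
    exact hfree n hn P hP hPc (fun i => (ξ i).1) (fun i j hij => hξ (Subtype.ext hij))
  have hkey : ∀ c : S →₀ ℝ, c ≠ 0 →
      (c.sum fun i a => a • v i) ≠ 0 ∧ (c.sum fun i a => a • v i) ∈ ContinuityClass G :=
    fun c hc => sum_mem_ne hfree' c hc
  have hli : LinearIndependent ℝ v := by
    rw [linearIndependent_iff]
    intro l hl
    by_contra hl0
    rw [Finsupp.linearCombination_apply] at hl
    exact (hkey l hl0).1 hl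
  refine ⟨Submodule.span ℝ (Set.range v), ?_, ?_⟩
  · rw [rank_span hli, Cardinal.mk_range_eq v hvinj, hS]
  · intro f hf
    rw [SetLike.mem_coe] at hf
    obtain ⟨c, hc⟩ := Finsupp.mem_span_range_iff_exists_finsupp.mp hf
    by_cases hc0 : c = 0
    · right
      rw [Set.mem_singleton_iff]
      rw [hc0] at hc
      simpa using hc.symm
    · left
      rw [← hc]
      exact (hkey c hc0).2

lemma lineable_to_cdense {G : Set ℝ} (hG : IsGδ G)
    (h : Lineable (ContinuityClass G) (Order.succ Cardinal.continuum)) :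
    CDenseInItself Gᶜ := by
  obtain ⟨V, hrank, hsub⟩ := h
  have hlt : ¬ Module.rank ℝ V ≤ 𝔠 := by
    rw [hrank]
    exact not_le.mpr (Order.lt_succ 𝔠)
  constructor
  · by_contra hne
    rw [Set.not_nonempty_iff_eq_empty] at hne
    have hGuniv : G = Set.univ := by
      rw [← compl_compl G, hne, Set.compl_empty]
    apply hlt
    refine rank_le_continuum_of_restrict (Set.range ((↑) : ℚ → ℝ))
      (Set.countable_range _) ?_
    intro f hfV hvan
    rcases hsub hfV with hfE | hf0
    · funext y
      have hfE' : {z : ℝ | ContinuousAt f z} = G := hfE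
      have hcont : ContinuousAt f y := by
        have hy : y ∈ {z : ℝ | ContinuousAt f z} := by
          rw [hfE', hGuniv]
          trivial
        exact hy
      refine eq_zero_at_of_continuousAt hcont
        (show y ∈ Set.Ioo (y-1) (y+1) by constructor <;> linarith) ?_
      intro q _
      exact hvan q ⟨q, rfl⟩
    · exact hf0
  · intro a b hab
    by_contra hbad
    push_neg at hbad
    obtain ⟨hne, hcard⟩ := hbad
    have hlt_c : #(Gᶜ ∩ Set.Ioo a b : Set ℝ) < 𝔠 := by
      refine lt_of_le_of_ne ?_ hcard
      calc #(Gᶜ ∩ Set.Ioo a b : Set ℝ) ≤ #ℝ := Cardinal.mk_set_le _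
      _ = 𝔠 := Cardinal.mk_real
    set D := Gᶜ ∩ Set.Ioo a b with hD
    have hDne : D.Nonempty := hne
    obtain ⟨T, hTo, hTc, hTeq⟩ := hG
    have hTne : T.Nonempty := by
      rcases T.eq_empty_or_nonempty with hTe | hTne'
      · exfalso
        rw [hTe, Set.sInter_empty] at hTeq
        obtain ⟨z, hz⟩ := hDne
        exact hz.1 (by rw [hTeq]; trivial)
      · exact hTne'
    obtain ⟨u, hu⟩ := hTc.exists_eq_range hTne
    have hKun : Gᶜ = ⋃ n, (u n)ᶜ := by
      rw [hTeq, hu, Set.sInter_range, Set.compl_iInter]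
    have hDcnt : D.Countable := by
      have hpc : ∀ n k : ℕ, ((u n)ᶜ ∩ Set.Icc (a + 1/(k+1)) (b - 1/(k+1))).Countable := by
        intro n k
        have hcl : IsClosed ((u n)ᶜ ∩ Set.Icc (a + 1/(k+1)) (b - 1/(k+1))) := by
          refine IsClosed.inter ?_ isClosed_Icc
          exact isClosed_compl_iff.mpr (hTo (u n) (by rw [hu]; exact Set.mem_range_self n))
        refine countable_of_isClosed_of_mk_lt hcl ?_
        refine lt_of_le_of_lt (Cardinal.mk_le_mk_of_subset ?_) hlt_c
        intro y hy
        have hpos : (0:ℝ) < 1/(k+1) := by positivity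
        refine ⟨?_, ?_, ?_⟩
        · rw [hKun]
          exact Set.mem_iUnion.mpr ⟨n, hy.1⟩
        · have := hy.2.1; linarith
        · have := hy.2.2; linarith
      have hcover : D ⊆ ⋃ (n : ℕ) (k : ℕ),
          ((u n)ᶜ ∩ Set.Icc (a + 1/(k+1)) (b - 1/(k+1))) := by
        intro y hy
        have hy1 := hy.1
        have hy2 := hy.2.1
        have hy3 := hy.2.2
        rw [hKun] at hy1
        obtain ⟨n, hn⟩ := Set.mem_iUnion.mp hy1
        have hmin : (0:ℝ) < min (y - a) (b - y) := lt_min (by linarith) (by linarith)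
        obtain ⟨k, hk⟩ := exists_nat_one_div_lt hmin
        refine Set.mem_iUnion.mpr ⟨n, Set.mem_iUnion.mpr ⟨k, hn, ?_, ?_⟩⟩
        · have := lt_of_lt_of_le hk (min_le_left _ _); linarith
        · have := lt_of_lt_of_le hk (min_le_right _ _); linarith
      refine Set.Countable.mono hcover ?_
      exact Set.countable_iUnion fun n => Set.countable_iUnion fun k => hpc n k
    apply hlt
    set Tset : Set ℝ := (Set.range ((↑) : ℚ → ℝ) ∩ Set.Ioo a b) ∪ D with hTset
    have hTsetc : Tset.Countable :=
      ((Set.countable_range _).mono Set.inter_subset_left).union hDcnt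
    refine rank_le_continuum_of_restrict Tset hTsetc ?_
    intro f hfV hvan
    rcases hsub hfV with hfE | hf0
    · exfalso
      have hfE' : {z : ℝ | ContinuousAt f z} = G := hfE
      have hIoo : ∀ y ∈ Set.Ioo a b, f y = 0 := by
        intro y hy
        by_cases hyG : y ∈ G
        · have hcont : ContinuousAt f y := by
            have : y ∈ {z : ℝ | ContinuousAt f z} := by rw [hfE']; exact hyG
            exact this
          refine eq_zero_at_of_continuousAt hcont hy ?_
          intro q hq
          exact hvan q (Or.inl ⟨⟨q, rfl⟩, hq⟩)
        · exact hvan y (Or.inr ⟨hyG, hy⟩)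
      have hGIoo : Set.Ioo a b ⊆ G := by
        intro y hy
        have hcont : ContinuousAt f y := by
          have hev : f =ᶠ[nhds y] (fun _ => (0:ℝ)) := by
            refine Filter.eventuallyEq_of_mem (Ioo_mem_nhds hy.1 hy.2) ?_
            intro z hz
            exact hIoo z hz
          exact (continuousAt_congr hev).mpr continuousAt_const
        have : y ∈ {z : ℝ | ContinuousAt f z} := hcont
        rw [hfE'] at this
        exact this
      obtain ⟨z, hz⟩ := hDne
      exact hz.1 (hGIoo hz.2)
    · exact hf0

end Stmt17Aux

/-- For a `Gδ` set `G ⊆ ℝ`, the following are equivalent: (i) `C_G` is strongly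
`2 ^ 𝔠`-algebrable in `ℝ^ℝ`; (ii) `C_G` is `𝔠⁺`-lineable; (iii) `ℝ \ G` is `𝔠`-dense in
itself. -/
theorem stmt17 (G : Set ℝ) (hG : IsGδ G) :
    (StronglyAlgebrable ℝ (ContinuityClass G) ((2 : Cardinal) ^ Cardinal.continuum) ↔
      CDenseInItself Gᶜ) ∧
    (Lineable (ContinuityClass G) (Order.succ Cardinal.continuum) ↔
      CDenseInItself Gᶜ) := by

  constructor
  · constructor
    · intro hA
      exact Stmt17Aux.lineable_to_cdense hG (Stmt17Aux.algebrable_to_lineable hA)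
    · intro hC
      exact Stmt17Aux.cdense_to_SA hG hC
  · constructor
    · exact Stmt17Aux.lineable_to_cdense hG
    · intro hC
      exact Stmt17Aux.algebrable_to_lineable (Stmt17Aux.cdense_to_SA hG hC)
end
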